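/- arXiv:0804.3690 — 7 statements merged into one kernel-verified Lean document; each statement's English description precedes it below -/
import Mathlib

section
/- Let G be a graph obtained by pasting graphs G1 and G2 on a vertex v, i.e., G = G1 ∪ G2 and V(G1) ∩ V(G2) = {v}. Then: (a) if ddn(G1) = ddn(G2) = 1 then ddn(G) = 1; and (b) if dn(G1) = dn(G2) = 1 then dn(G) = 1. -/
noncomputable section

/-- The Euclidean plane. -/
abbrev Plane : Type := EuclideanSpace ℝ (Fin 2)

/-- The set of edge-lengths determined by a map `f` of the vertices of `G` to the plane. -/
def SimpleGraph.edgeLengths {V : Type*} (G : SimpleGraph V) (f : V → Plane) : Set ℝ :=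
  {d : ℝ | ∃ u v : V, G.Adj u v ∧ Dist.dist (f u) (f v) = d}

/-- A degenerate drawing of `G`: an injective map from the vertices to the plane. -/
def SimpleGraph.IsDegenDrawing {V : Type*} (_G : SimpleGraph V) (f : V → Plane) : Prop :=
  Function.Injective f

/-- A drawing of `G`: a degenerate drawing such that no vertex lies on the open segment
representing an edge. -/
def SimpleGraph.IsDrawing {V : Type*} (G : SimpleGraph V) (f : V → Plane) : Prop :=
  Function.Injective f ∧ ∀ u v w : V, G.Adj u v → f w ∉ openSegment ℝ (f u) (f v)

/-- The degenerate distance-number of `G`: the minimum number of distinct edge-lengths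
in a degenerate drawing of `G`. -/
def SimpleGraph.ddn {V : Type*} (G : SimpleGraph V) : ℕ :=
  sInf {k : ℕ | ∃ f : V → Plane, G.IsDegenDrawing f ∧ (G.edgeLengths f).ncard = k}

/-- The distance-number of `G`: the minimum number of distinct edge-lengths
in a drawing of `G`. -/
def SimpleGraph.dn {V : Type*} (G : SimpleGraph V) : ℕ :=
  sInf {k : ℕ | ∃ f : V → Plane, G.IsDrawing f ∧ (G.edgeLengths f).ncard = k}

/-! ### Auxiliary lemmas -/

open Complex Set

/-- Solutions `t` of `‖a + t • b‖ = r` with `b ≠ 0` form a finite set (quadratic equation). -/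
lemma quadFinite (a b : ℂ) (hb : b ≠ 0) (r : ℝ) : {t : ℝ | ‖a + t • b‖ = r}.Finite := by
  have key : {t : ℝ | ‖a + t • b‖ = r} ⊆
      {t : ℝ | (Polynomial.C (‖b‖^2) * Polynomial.X ^ 2
        + Polynomial.C (2 * (inner ℝ a b : ℝ)) * Polynomial.X
        + Polynomial.C (‖a‖^2 - r^2)).IsRoot t} := by
    intro t ht
    simp only [mem_setOf_eq] at ht ⊢
    have h2 : ‖a + t • b‖ ^ 2 = r ^ 2 := by rw [ht]
    rw [norm_add_sq_real] at h2
    simp [Polynomial.IsRoot, real_inner_smul_right, norm_smul] at h2 ⊢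
    ring_nf
    ring_nf at h2
    nlinarith [h2, _root_.sq_abs t]
  refine Set.Finite.subset (Polynomial.finite_setOf_isRoot fun hcon => ?_) key
  have hb2 : ‖b‖ ^ 2 ≠ 0 := pow_ne_zero _ (norm_ne_zero_iff.mpr hb)
  have h2 := congrArg (fun pp => Polynomial.coeff pp 2) hcon
  simp only [Polynomial.coeff_add, Polynomial.coeff_C_mul, Polynomial.coeff_X_pow,
    Polynomial.coeff_C, Polynomial.coeff_zero, Polynomial.coeff_X] at h2
  norm_num at h2
  exact hb h2

lemma pointBadFinite (c x y : ℂ) (hx : x ≠ 0) : {z : ℂ | c + z * x = y}.Finite := by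
  apply Set.Finite.subset (Set.finite_singleton ((y - c) / x))
  intro z hz
  simp only [mem_setOf_eq] at hz
  simp only [mem_singleton_iff]
  field_simp
  linear_combination hz

lemma segBadFinite (c x p q : ℂ) (hx : x ≠ 0) :
    {z : ℂ | ‖z‖ = 1 ∧ c + z * x ∈ openSegment ℝ p q}.Finite := by
  rcases eq_or_ne p q with rfl | hpq
  · rw [openSegment_same]
    exact (pointBadFinite c x p hx).subset (fun z hz => hz.2)
  · have key : {z : ℂ | ‖z‖ = 1 ∧ c + z * x ∈ openSegment ℝ p q} ⊆
        (fun t : ℝ => ((p - c) + t • (q - p)) / x) ''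
          {t : ℝ | ‖(p - c) + t • (q - p)‖ = ‖x‖} := by
      intro z ⟨hz1, hz2⟩
      rw [openSegment_eq_image] at hz2
      obtain ⟨t, _, ht⟩ := hz2
      have ht' : (1 - (t:ℝ)) • p + (t:ℝ) • q = c + z * x := ht
      have hzx : z * x = (p - c) + (t:ℝ) • (q - p) := by
        simp only [Complex.real_smul] at ht' ⊢
        push_cast at ht' ⊢
        linear_combination -ht'
      refine ⟨t, ?_, ?_⟩
      · simp only [mem_setOf_eq, ← hzx, norm_mul, hz1, one_mul]
      · simp only [← hzx]
        field_simp
    exact Set.Finite.subset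
      ((quadFinite (p - c) (q - p) (sub_ne_zero.mpr hpq.symm) ‖x‖).image _) key

lemma circleInfinite : {z : ℂ | ‖z‖ = 1}.Infinite := by
  have hmaps : Set.MapsTo (fun t : ℝ => Complex.exp (t * Complex.I)) (Set.Ioo 0 1)
      {z : ℂ | ‖z‖ = 1} := by
    intro t _
    simp [Complex.norm_exp]
  have hinj : Set.InjOn (fun t : ℝ => Complex.exp (t * Complex.I)) (Set.Ioo 0 1) := by
    intro t ht s hs h
    simp only [Complex.exp_eq_exp_iff_exists_int] at h
    obtain ⟨n, hn⟩ := h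
    have him := congrArg Complex.im hn
    simp [Complex.mul_I_im] at him
    have hn0 : n = 0 := by
      rcases lt_trichotomy n 0 with h0 | h0 | h0
      · exfalso
        have hcast : (n : ℝ) ≤ -1 := by exact_mod_cast Int.le_sub_one_of_lt h0
        nlinarith [Real.pi_gt_three, ht.1, ht.2, hs.1, hs.2]
      · exact h0
      · exfalso
        have hcast : (1 : ℝ) ≤ n := by exact_mod_cast h0
        nlinarith [Real.pi_gt_three, ht.1, ht.2, hs.1, hs.2]
    rw [hn0] at him
    simpa using him
  exact ((Set.Ioo_infinite (by norm_num)).image hinj).mono hmaps.image_subset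

/-- The affine map `y ↦ c₀ + c₁ * y` on `ℂ` as a real affine map. -/
def affC (c₀ c₁ : ℂ) : ℂ →ᵃ[ℝ] ℂ where
  toFun y := c₀ + c₁ * y
  linear := c₁ • (LinearMap.id : ℂ →ₗ[ℝ] ℂ)
  map_vadd' p' v := by simp [vadd_eq_add]; ring

@[simp] lemma affC_apply (c₀ c₁ y : ℂ) : affC c₀ c₁ y = c₀ + c₁ * y := rfl

lemma mem_openSegment_affC_iff {c₀ c₁ : ℂ} (h : c₁ ≠ 0) (y a b : ℂ) :
    affC c₀ c₁ y ∈ openSegment ℝ (affC c₀ c₁ a) (affC c₀ c₁ b) ↔ y ∈ openSegment ℝ a b := by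
  rw [← image_openSegment ℝ (affC c₀ c₁) a b]
  constructor
  · rintro ⟨m, hm, hme⟩
    have hmy : m = y := by
      have := hme
      simp only [affC_apply] at this
      exact mul_left_cancel₀ h (add_left_cancel this)
    rwa [← hmy]
  · intro hy
    exact ⟨y, hy, rfl⟩

lemma mem_openSegment_affC_iff' {c₀ c₁ : ℂ} (h : c₁ ≠ 0) (w a b : ℂ) :
    w ∈ openSegment ℝ (affC c₀ c₁ a) (affC c₀ c₁ b) ↔ (w - c₀) / c₁ ∈ openSegment ℝ a b := by
  have hw : affC c₀ c₁ ((w - c₀) / c₁) = w := by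
    simp only [affC_apply]
    field_simp
    ring
  conv_lhs => rw [← hw]
  exact mem_openSegment_affC_iff h _ _ _

/-- **Core construction**: glueing two unit-distance representations at a vertex. -/
lemma core {V : Type*} [Fintype V] (G : SimpleGraph V) (A B : Set V) (v : V)
    (hAv : v ∈ A) (hBv : v ∈ B) (hsub : ∀ u, u ∉ A → u ∈ B)
    (hABv : ∀ u, u ∈ A → u ∈ B → u = v)
    (g₁ : A → ℂ) (g₂ : B → ℂ) (d₁ d₂ : ℝ) (hd₁ : 0 < d₁) (hd₂ : 0 < d₂)
    (hg₁ : Function.Injective g₁) (hg₂ : Function.Injective g₂)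
    (hl₁ : ∀ u w : A, G.Adj ↑u ↑w → dist (g₁ u) (g₁ w) = d₁)
    (hl₂ : ∀ u w : B, G.Adj ↑u ↑w → dist (g₂ u) (g₂ w) = d₂)
    (hsplit : ∀ u w : V, G.Adj u w → (u ∈ A ∧ w ∈ A) ∨ (u ∈ B ∧ w ∈ B)) :
    ∃ F : V → ℂ, Function.Injective F ∧
      (∀ u w, G.Adj u w → dist (F u) (F w) = d₁) ∧
      ((∀ u w t : A, G.Adj ↑u ↑w → g₁ t ∉ openSegment ℝ (g₁ u) (g₁ w)) →
       (∀ u w t : B, G.Adj ↑u ↑w → g₂ t ∉ openSegment ℝ (g₂ u) (g₂ w)) →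
       ∀ u w t : V, G.Adj u w → F t ∉ openSegment ℝ (F u) (F w)) := by
  classical
  set p : ℂ := g₁ ⟨v, hAv⟩ with hp
  set q : ℂ := g₂ ⟨v, hBv⟩ with hq
  set s : ℝ := d₁ / d₂ with hs
  have hspos : 0 < s := div_pos hd₁ hd₂
  have hs0 : (s : ℂ) ≠ 0 := by
    simpa using hspos.ne'
  set x0 : B → ℂ := fun b => (s : ℂ) * (g₂ b - q) with hx0
  have hx0v : x0 ⟨v, hBv⟩ = 0 := by simp [hx0, hq]
  have hx0inj : Function.Injective x0 := by
    intro b b' h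
    apply hg₂
    have h2 := mul_left_cancel₀ hs0 h
    exact sub_left_injective.eq_iff.mp h2
  have hx0ne : ∀ b : B, (b : V) ∉ A → x0 b ≠ 0 := by
    intro b hb h0
    have hb' : b = ⟨v, hBv⟩ := hx0inj (by rw [h0, hx0v])
    apply hb
    rw [hb']
    exact hAv
  have hx0dist : ∀ b b' : B, dist (x0 b) (x0 b') = s * dist (g₂ b) (g₂ b') := by
    intro b b'
    simp only [hx0, Complex.dist_eq]
    have he : (s : ℂ) * (g₂ b - q) - (s : ℂ) * (g₂ b' - q) = (s : ℂ) * (g₂ b - g₂ b') := by ring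
    rw [he, norm_mul, Complex.norm_real, Real.norm_eq_abs, abs_of_pos hspos]
  -- the bad sets of rotations
  set Bad1 : Set ℂ := ⋃ (ab : A × B),
    {z : ℂ | ((ab.2 : V) ∉ A) ∧ p + z * x0 ab.2 = g₁ ab.1} with hB1
  set Bad2 : Set ℂ := ⋃ (t : A × A × B),
    {z : ℂ | ‖z‖ = 1 ∧ ((t.2.2 : V) ∉ A) ∧
      p + z * x0 t.2.2 ∈ openSegment ℝ (g₁ t.1) (g₁ t.2.1)} with hB2
  set Bad3 : Set ℂ := ⋃ (t : B × B × A),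
    {z : ℂ | ‖z‖ = 1 ∧ ((t.2.2 : V) ≠ v) ∧
      g₁ t.2.2 ∈ openSegment ℝ (p + z * x0 t.1) (p + z * x0 t.2.1)} with hB3
  have hBad1 : Bad1.Finite := by
    apply Set.finite_iUnion
    rintro ⟨a, b⟩
    by_cases h : (b : V) ∈ A
    · convert Set.finite_empty
      ext z; simp [h]
    · exact (pointBadFinite p (x0 b) (g₁ a) (hx0ne b h)).subset fun z hz => hz.2
  have hBad2 : Bad2.Finite := by
    apply Set.finite_iUnion
    rintro ⟨a, a', b⟩
    by_cases h : (b : V) ∈ A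
    · convert Set.finite_empty
      ext z; simp [h]
    · exact (segBadFinite p (x0 b) (g₁ a) (g₁ a') (hx0ne b h)).subset
        fun z hz => ⟨hz.1, hz.2.2⟩
  have hBad3 : Bad3.Finite := by
    apply Set.finite_iUnion
    rintro ⟨b, b', a⟩
    by_cases h : (a : V) = v
    · convert Set.finite_empty
      ext z; simp [h]
    · have ha : g₁ a - p ≠ 0 := by
        rw [sub_ne_zero, hp]
        intro he
        exact h (congrArg Subtype.val (hg₁ he))
      apply Set.Finite.subset
        ((segBadFinite 0 (g₁ a - p) (x0 b) (x0 b') ha).image Inv.inv)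
      rintro z ⟨hz1, _, hz3⟩
      have hzne : z ≠ 0 := by intro h0; rw [h0] at hz1; simp at hz1
      refine ⟨z⁻¹, ⟨by simp [hz1], ?_⟩, inv_inv z⟩
      have hmem : (g₁ a - p) / z ∈ openSegment ℝ (x0 b) (x0 b') :=
        (mem_openSegment_affC_iff' hzne (g₁ a) (x0 b) (x0 b')).mp hz3
      rw [zero_add]
      rw [div_eq_inv_mul] at hmem
      exact hmem
  obtain ⟨z, hz1, hzBad⟩ := (circleInfinite.diff ((hBad1.union hBad2).union hBad3)).nonempty
  simp only [mem_setOf_eq] at hz1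
  simp only [Set.mem_union, not_or] at hzBad
  obtain ⟨⟨hzBad1, hzBad2⟩, hzBad3⟩ := hzBad
  have hzne : z ≠ 0 := by intro h0; rw [h0] at hz1; simp at hz1
  have hzB1 : ∀ (a : A) (b : B), (b : V) ∉ A → p + z * x0 b ≠ g₁ a := by
    intro a b hb he
    exact hzBad1 (Set.mem_iUnion.mpr ⟨(a, b), ⟨hb, he⟩⟩)
  have hzB2 : ∀ (a a' : A) (b : B), (b : V) ∉ A →
      p + z * x0 b ∉ openSegment ℝ (g₁ a) (g₁ a') := by
    intro a a' b hb he
    exact hzBad2 (Set.mem_iUnion.mpr ⟨(a, a', b), ⟨hz1, hb, he⟩⟩)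
  have hzB3 : ∀ (b b' : B) (a : A), (a : V) ≠ v →
      g₁ a ∉ openSegment ℝ (p + z * x0 b) (p + z * x0 b') := by
    intro b b' a ha he
    exact hzBad3 (Set.mem_iUnion.mpr ⟨(b, b', a), ⟨hz1, ha, he⟩⟩)
  set F : V → ℂ := fun u => if h : u ∈ A then g₁ ⟨u, h⟩ else p + z * x0 ⟨u, hsub u h⟩
    with hFdef
  have hFA : ∀ (u : V) (h : u ∈ A), F u = g₁ ⟨u, h⟩ := by
    intro u h
    simp only [hFdef, dif_pos h]
  have hFB : ∀ (u : V) (h : u ∈ B), F u = p + z * x0 ⟨u, h⟩ := by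
    intro u h
    by_cases hA : u ∈ A
    · have huv : u = v := hABv u hA h
      subst huv
      rw [hFA u hA]
      have hx : x0 ⟨u, h⟩ = 0 := hx0v
      rw [hx, mul_zero, add_zero]
    · simp only [hFdef, dif_neg hA]
  refine ⟨F, ?_, ?_, ?_⟩
  · -- injectivity
    intro u u' he
    by_cases hu : u ∈ A <;> by_cases hu' : u' ∈ A
    · rw [hFA u hu, hFA u' hu'] at he
      exact congrArg Subtype.val (hg₁ he)
    · exfalso
      rw [hFA u hu, hFB u' (hsub u' hu')] at he
      exact hzB1 ⟨u, hu⟩ ⟨u', hsub u' hu'⟩ hu' he.symm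
    · exfalso
      rw [hFA u' hu', hFB u (hsub u hu)] at he
      exact hzB1 ⟨u', hu'⟩ ⟨u, hsub u hu⟩ hu he
    · rw [hFB u (hsub u hu), hFB u' (hsub u' hu')] at he
      have h2 := add_left_cancel he
      have h3 := mul_left_cancel₀ hzne h2
      exact congrArg Subtype.val (hx0inj h3)
  · -- edge lengths
    intro u w hadj
    rcases hsplit u w hadj with ⟨hu, hw⟩ | ⟨hu, hw⟩
    · rw [hFA u hu, hFA w hw]
      exact hl₁ ⟨u, hu⟩ ⟨w, hw⟩ hadj
    · rw [hFB u hu, hFB w hw]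
      have he : dist (p + z * x0 ⟨u, hu⟩) (p + z * x0 ⟨w, hw⟩)
          = ‖z‖ * dist (x0 ⟨u, hu⟩) (x0 ⟨w, hw⟩) := by
        simp only [Complex.dist_eq]
        have h2 : (p + z * x0 ⟨u, hu⟩) - (p + z * x0 ⟨w, hw⟩)
            = z * (x0 ⟨u, hu⟩ - x0 ⟨w, hw⟩) := by ring
        rw [h2, norm_mul]
      rw [he, hz1, one_mul, hx0dist, hl₂ ⟨u, hu⟩ ⟨w, hw⟩ hadj, hs]
      field_simp
  · -- drawing property
    intro seg₁ seg₂ u w t hadj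
    rcases hsplit u w hadj with ⟨hu, hw⟩ | ⟨hu, hw⟩
    · by_cases ht : t ∈ A
      · rw [hFA u hu, hFA w hw, hFA t ht]
        exact seg₁ ⟨u, hu⟩ ⟨w, hw⟩ ⟨t, ht⟩ hadj
      · rw [hFA u hu, hFA w hw, hFB t (hsub t ht)]
        exact hzB2 ⟨u, hu⟩ ⟨w, hw⟩ ⟨t, hsub t ht⟩ ht
    · by_cases ht : t ∈ B
      · rw [hFB u hu, hFB w hw, hFB t ht]
        intro hmem
        have h1 : x0 ⟨t, ht⟩ ∈ openSegment ℝ (x0 ⟨u, hu⟩) (x0 ⟨w, hw⟩) :=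
          (mem_openSegment_affC_iff (c₀ := p) (c₁ := z) hzne _ _ _).mp hmem
        have h2 : g₂ ⟨t, ht⟩ ∈ openSegment ℝ (g₂ ⟨u, hu⟩) (g₂ ⟨w, hw⟩) := by
          have hxa : ∀ b : B, x0 b = affC (-((s : ℂ) * q)) (s : ℂ) (g₂ b) := by
            intro b; simp only [affC_apply, hx0]; ring
          rw [hxa, hxa, hxa] at h1
          exact (mem_openSegment_affC_iff hs0 _ _ _).mp h1
        exact seg₂ ⟨u, hu⟩ ⟨w, hw⟩ ⟨t, ht⟩ hadj h2
      · have htA : t ∈ A := by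
          by_contra h
          exact ht (hsub t h)
        have htv : (t : V) ≠ v := fun h => ht (h ▸ hBv)
        rw [hFB u hu, hFB w hw, hFA t htA]
        exact hzB3 ⟨u, hu⟩ ⟨w, hw⟩ ⟨t, htA⟩ htv

/-- A fixed linear isometry between `ℂ` and the plane. -/
def eIso : ℂ ≃ₗᵢ[ℝ] Plane :=
  Complex.isometryOfOrthonormal (EuclideanSpace.basisFun (Fin 2) ℝ)

lemma lie_seg (x a b : ℂ) :
    eIso x ∈ openSegment ℝ (eIso a) (eIso b) ↔ x ∈ openSegment ℝ a b := by
  have him := image_openSegment ℝ (eIso.toLinearEquiv.toLinearMap.toAffineMap) a b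
  simp only [LinearMap.coe_toAffineMap, LinearEquiv.coe_coe,
    LinearIsometryEquiv.coe_toLinearEquiv] at him
  rw [← him]
  constructor
  · rintro ⟨m, hm, hme⟩
    rwa [← eIso.injective hme]
  · intro h
    exact ⟨x, h, rfl⟩

lemma one_mem_of_sInf_eq_one {S : Set ℕ} (h : sInf S = 1) : 1 ∈ S := by
  have hne : S.Nonempty := by
    by_contra hc
    rw [Set.not_nonempty_iff_eq_empty.mp hc, Nat.sInf_empty] at h
    exact one_ne_zero h.symm
  have hm := Nat.sInf_mem hne
  rwa [h] at hm

lemma sInf_eq_one' {S : Set ℕ} (h1 : 1 ∈ S) (h0 : 0 ∉ S) : sInf S = 1 := by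
  have hne : sInf S ≠ 0 := by
    rw [Ne, Nat.sInf_eq_zero]
    rintro (h | h)
    · exact h0 h
    · rw [h] at h1; exact h1
  have hle := Nat.sInf_le h1
  omega

lemma edgeLengths_finite {V : Type*} [Fintype V] (G : SimpleGraph V) (f : V → Plane) :
    (G.edgeLengths f).Finite := by
  apply Set.Finite.subset (Set.finite_range (fun pr : V × V => dist (f pr.1) (f pr.2)))
  rintro d ⟨u, w, _, hd⟩
  exact ⟨(u, w), hd⟩

/-- If `G` is obtained by pasting `G₁` and `G₂` on a vertex `v`
(i.e. `G = G₁ ∪ G₂` where `G₁`, `G₂` are the induced subgraphs of `G` on vertex sets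
`A`, `B` with `A ∪ B = V(G)` and `A ∩ B = {v}`), then:
(a) if `ddn G₁ = ddn G₂ = 1` then `ddn G = 1`, and
(b) if `dn G₁ = dn G₂ = 1` then `dn G = 1`. -/
theorem stmt0 {V : Type*} [Fintype V] (G : SimpleGraph V) (A B : Set V) (v : V)
    (hunion : A ∪ B = Set.univ) (hinter : A ∩ B = {v})
    (hsplit : ∀ u w : V, G.Adj u w → (u ∈ A ∧ w ∈ A) ∨ (u ∈ B ∧ w ∈ B)) :
    ((G.induce A).ddn = 1 → (G.induce B).ddn = 1 → G.ddn = 1) ∧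
    ((G.induce A).dn = 1 → (G.induce B).dn = 1 → G.dn = 1) := by
  classical
  have hvAB : v ∈ A ∩ B := by rw [hinter]; rfl
  have hAv : v ∈ A := hvAB.1
  have hBv : v ∈ B := hvAB.2
  have hsubB : ∀ u, u ∉ A → u ∈ B := by
    intro u hu
    have hu2 : u ∈ A ∪ B := by rw [hunion]; exact Set.mem_univ u
    rcases hu2 with h | h
    · exact absurd h hu
    · exact h
  have hABv : ∀ u, u ∈ A → u ∈ B → u = v := by
    intro u h1 h2
    have : u ∈ A ∩ B := ⟨h1, h2⟩
    rw [hinter] at this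
    exact this
  constructor
  · -- (a) degenerate drawings
    intro h1 h2
    obtain ⟨f₁, hinj₁, hn₁⟩ := one_mem_of_sInf_eq_one h1
    obtain ⟨f₂, hinj₂, hn₂⟩ := one_mem_of_sInf_eq_one h2
    obtain ⟨d₁, hset₁⟩ := Set.ncard_eq_one.mp hn₁
    obtain ⟨d₂, hset₂⟩ := Set.ncard_eq_one.mp hn₂
    have hd₁mem : d₁ ∈ (G.induce A).edgeLengths f₁ := by rw [hset₁]; rfl
    have hd₂mem : d₂ ∈ (G.induce B).edgeLengths f₂ := by rw [hset₂]; rfl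
    obtain ⟨u₀, w₀, hadj₀, hd₀⟩ := hd₁mem
    obtain ⟨u₁, w₁, hadj₁, hd₁'⟩ := hd₂mem
    have hadjG₀ : G.Adj ↑u₀ ↑w₀ := by simpa using hadj₀
    have hd₁pos : 0 < d₁ := by
      rw [← hd₀]
      exact dist_pos.mpr (fun he => hadj₀.ne (hinj₁ he))
    have hd₂pos : 0 < d₂ := by
      rw [← hd₁']
      exact dist_pos.mpr (fun he => hadj₁.ne (hinj₂ he))
    set g₁ : A → ℂ := fun a => eIso.symm (f₁ a) with hg₁def
    set g₂ : B → ℂ := fun b => eIso.symm (f₂ b) with hg₂def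
    have hg₁ : Function.Injective g₁ := eIso.symm.injective.comp hinj₁
    have hg₂ : Function.Injective g₂ := eIso.symm.injective.comp hinj₂
    have hl₁ : ∀ u w : A, G.Adj ↑u ↑w → dist (g₁ u) (g₁ w) = d₁ := by
      intro u w hadj
      have hmem : dist (f₁ u) (f₁ w) ∈ (G.induce A).edgeLengths f₁ :=
        ⟨u, w, by simpa using hadj, rfl⟩
      rw [hset₁] at hmem
      simpa [hg₁def, eIso.symm.dist_map] using hmem
    have hl₂ : ∀ u w : B, G.Adj ↑u ↑w → dist (g₂ u) (g₂ w) = d₂ := by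
      intro u w hadj
      have hmem : dist (f₂ u) (f₂ w) ∈ (G.induce B).edgeLengths f₂ :=
        ⟨u, w, by simpa using hadj, rfl⟩
      rw [hset₂] at hmem
      simpa [hg₂def, eIso.symm.dist_map] using hmem
    obtain ⟨F, hFinj, hFlen, _⟩ := core G A B v hAv hBv hsubB hABv g₁ g₂ d₁ d₂
      hd₁pos hd₂pos hg₁ hg₂ hl₁ hl₂ hsplit
    set f : V → Plane := fun u => eIso (F u) with hfdef
    have hfinj : Function.Injective f := eIso.injective.comp hFinj
    have hflen : G.edgeLengths f = {d₁} := by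
      apply Set.eq_singleton_iff_unique_mem.mpr
      constructor
      · exact ⟨↑u₀, ↑w₀, hadjG₀, by
          simp only [hfdef, eIso.dist_map]; exact hFlen _ _ hadjG₀⟩
      · rintro d ⟨u, w, hadj, rfl⟩
        simp only [hfdef, eIso.dist_map]
        exact hFlen _ _ hadj
    apply sInf_eq_one'
    · exact ⟨f, hfinj, by rw [hflen]; exact Set.ncard_singleton d₁⟩
    · rintro ⟨f', _, hn0⟩
      have hfin : (G.edgeLengths f').Finite := edgeLengths_finite G f'
      have hv : dist (f' ↑u₀) (f' ↑w₀) ∈ G.edgeLengths f' := ⟨_, _, hadjG₀, rfl⟩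
      rw [(Set.ncard_eq_zero hfin).mp hn0] at hv
      exact hv
  · -- (b) drawings
    intro h1 h2
    obtain ⟨f₁, ⟨hinj₁, hseg₁⟩, hn₁⟩ := one_mem_of_sInf_eq_one h1
    obtain ⟨f₂, ⟨hinj₂, hseg₂⟩, hn₂⟩ := one_mem_of_sInf_eq_one h2
    obtain ⟨d₁, hset₁⟩ := Set.ncard_eq_one.mp hn₁
    obtain ⟨d₂, hset₂⟩ := Set.ncard_eq_one.mp hn₂
    have hd₁mem : d₁ ∈ (G.induce A).edgeLengths f₁ := by rw [hset₁]; rfl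
    have hd₂mem : d₂ ∈ (G.induce B).edgeLengths f₂ := by rw [hset₂]; rfl
    obtain ⟨u₀, w₀, hadj₀, hd₀⟩ := hd₁mem
    obtain ⟨u₁, w₁, hadj₁, hd₁'⟩ := hd₂mem
    have hadjG₀ : G.Adj ↑u₀ ↑w₀ := by simpa using hadj₀
    have hd₁pos : 0 < d₁ := by
      rw [← hd₀]
      exact dist_pos.mpr (fun he => hadj₀.ne (hinj₁ he))
    have hd₂pos : 0 < d₂ := by
      rw [← hd₁']
      exact dist_pos.mpr (fun he => hadj₁.ne (hinj₂ he))
    set g₁ : A → ℂ := fun a => eIso.symm (f₁ a) with hg₁def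
    set g₂ : B → ℂ := fun b => eIso.symm (f₂ b) with hg₂def
    have hg₁ : Function.Injective g₁ := eIso.symm.injective.comp hinj₁
    have hg₂ : Function.Injective g₂ := eIso.symm.injective.comp hinj₂
    have hl₁ : ∀ u w : A, G.Adj ↑u ↑w → dist (g₁ u) (g₁ w) = d₁ := by
      intro u w hadj
      have hmem : dist (f₁ u) (f₁ w) ∈ (G.induce A).edgeLengths f₁ :=
        ⟨u, w, by simpa using hadj, rfl⟩
      rw [hset₁] at hmem
      simpa [hg₁def, eIso.symm.dist_map] using hmem
    have hl₂ : ∀ u w : B, G.Adj ↑u ↑w → dist (g₂ u) (g₂ w) = d₂ := by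
      intro u w hadj
      have hmem : dist (f₂ u) (f₂ w) ∈ (G.induce B).edgeLengths f₂ :=
        ⟨u, w, by simpa using hadj, rfl⟩
      rw [hset₂] at hmem
      simpa [hg₂def, eIso.symm.dist_map] using hmem
    obtain ⟨F, hFinj, hFlen, hFseg⟩ := core G A B v hAv hBv hsubB hABv g₁ g₂ d₁ d₂
      hd₁pos hd₂pos hg₁ hg₂ hl₁ hl₂ hsplit
    have hgseg₁ : ∀ u w t : A, G.Adj ↑u ↑w → g₁ t ∉ openSegment ℝ (g₁ u) (g₁ w) := by
      intro u w t hadj hmem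
      have hmem2 : f₁ t ∈ openSegment ℝ (f₁ u) (f₁ w) := by
        have := (lie_seg (g₁ t) (g₁ u) (g₁ w)).mpr hmem
        simpa [hg₁def] using this
      exact hseg₁ u w t (by simpa using hadj) hmem2
    have hgseg₂ : ∀ u w t : B, G.Adj ↑u ↑w → g₂ t ∉ openSegment ℝ (g₂ u) (g₂ w) := by
      intro u w t hadj hmem
      have hmem2 : f₂ t ∈ openSegment ℝ (f₂ u) (f₂ w) := by
        have := (lie_seg (g₂ t) (g₂ u) (g₂ w)).mpr hmem
        simpa [hg₂def] using this
      exact hseg₂ u w t (by simpa using hadj) hmem2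
    have hFseg' := hFseg hgseg₁ hgseg₂
    set f : V → Plane := fun u => eIso (F u) with hfdef
    have hfinj : Function.Injective f := eIso.injective.comp hFinj
    have hfseg : ∀ u w t : V, G.Adj u w → f t ∉ openSegment ℝ (f u) (f w) := by
      intro u w t hadj hmem
      exact hFseg' u w t hadj ((lie_seg (F t) (F u) (F w)).mp hmem)
    have hflen : G.edgeLengths f = {d₁} := by
      apply Set.eq_singleton_iff_unique_mem.mpr
      constructor
      · exact ⟨↑u₀, ↑w₀, hadjG₀, by
          simp only [hfdef, eIso.dist_map]; exact hFlen _ _ hadjG₀⟩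
      · rintro d ⟨u, w, hadj, rfl⟩
        simp only [hfdef, eIso.dist_map]
        exact hFlen _ _ hadj
    apply sInf_eq_one'
    · exact ⟨f, ⟨hfinj, hfseg⟩, by rw [hflen]; exact Set.ncard_singleton d₁⟩
    · rintro ⟨f', _, hn0⟩
      have hfin : (G.edgeLengths f').Finite := edgeLengths_finite G f'
      have hv : dist (f' ↑u₀) (f' ↑w₀) ∈ G.edgeLengths f' := ⟨_, _, hadjG₀, rfl⟩
      rw [(Set.ncard_eq_zero hfin).mp hn0] at hv
      exact hv
end
end

section
/- Let G1 and G2 be graphs, each isomorphic to a unit-distance graph, and let G be the graph obtained by pasting G1 and G2 on a vertex v, i.e., G = G1 ∪ G2 and V(G1) ∩ V(G2) = {v}. Then G is isomorphic to a unit-distance graph. -/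
noncomputable section

/-- `G` is isomorphic to a unit-distance graph: there is an injective map of the vertices
to the plane such that two vertices are adjacent iff their images are at distance 1. -/
def SimpleGraph.IsUnitDistanceGraph {V : Type*} (G : SimpleGraph V) : Prop :=
  ∃ f : V → Plane, Function.Injective f ∧ ∀ u w : V, G.Adj u w ↔ Dist.dist (f u) (f w) = 1

noncomputable section

open Complex in
lemma finite_eq_rot {p q : ℂ} (hq : q ≠ 0) : {c : ℂ | c * q = p}.Finite := by
  apply Set.Finite.subset (Set.finite_singleton (p / q))
  intro c hc
  simp only [Set.mem_setOf_eq] at hc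
  simp [Set.mem_singleton_iff, eq_div_iff hq, hc]

open Complex in
lemma finite_dist_rot {p q : ℂ} (hp : p ≠ 0) (hq : q ≠ 0) :
    {c : ℂ | ‖c‖ = 1 ∧ dist (c * q) p = 1}.Finite := by
  set r : ℝ := (‖q‖ ^ 2 + ‖p‖ ^ 2 - 1) / 2 with hr
  set m : ℝ := ‖q‖ * ‖p‖ with hm
  set s : ℝ := Real.sqrt (m ^ 2 - r ^ 2) with hs
  have hinj : Function.Injective (fun c : ℂ => c * q * (starRingEnd ℂ p)) := by
    intro a b h
    have hp' : (starRingEnd ℂ p) ≠ 0 := by simpa using hp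
    simp only at h
    exact mul_right_cancel₀ hq (mul_right_cancel₀ hp' h)
  have hsub : {c : ℂ | ‖c‖ = 1 ∧ dist (c * q) p = 1} ⊆
      (fun c : ℂ => c * q * (starRingEnd ℂ p)) ⁻¹' {(⟨r, s⟩ : ℂ), (⟨r, -s⟩ : ℂ)} := by
    rintro c ⟨hc1, hc2⟩
    set y : ℂ := c * q * (starRingEnd ℂ p) with hy
    have hnormc : Complex.normSq c = 1 := by
      rw [← Complex.sq_norm, hc1]; norm_num
    have hd : Complex.normSq (c * q - p) = 1 := by
      rw [Complex.dist_eq] at hc2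
      rw [← Complex.sq_norm, hc2]; norm_num
    have hre : y.re = r := by
      rw [Complex.normSq_sub, Complex.normSq_mul, hnormc, one_mul, ← hy] at hd
      have h1 := Complex.sq_norm q
      have h2 := Complex.sq_norm p
      rw [hr]; linarith
    have hysq : y.im ^ 2 = m ^ 2 - r ^ 2 := by
      have habs : Complex.normSq y = m ^ 2 := by
        rw [hy, Complex.normSq_mul, Complex.normSq_mul, Complex.normSq_conj, hnormc, one_mul,
          hm, mul_pow, Complex.sq_norm, Complex.sq_norm]
      have := Complex.normSq_apply y
      nlinarith [hre]
    have hnonneg : 0 ≤ m ^ 2 - r ^ 2 := by nlinarith [sq_nonneg y.im]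
    have hs2 : s ^ 2 = m ^ 2 - r ^ 2 := Real.sq_sqrt hnonneg
    have : y.im = s ∨ y.im = -s := by
      rw [← sq_eq_sq_iff_eq_or_eq_neg]
      rw [hysq, hs2]
    rcases this with h | h
    · left; exact Complex.ext hre h
    · right; exact Complex.ext hre h
  exact Set.Finite.subset (Set.Finite.preimage hinj.injOn (Set.toFinite _)) hsub

lemma infinite_unit_circle : {c : ℂ | ‖c‖ = 1}.Infinite := by
  have hmap : Set.MapsTo (fun t : ℝ => (⟨Real.cos t, Real.sin t⟩ : ℂ))
      (Set.Icc 0 1) {c : ℂ | ‖c‖ = 1} := by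
    intro t _
    simp only [Set.mem_setOf_eq, Complex.norm_def, Complex.normSq_mk]
    rw [show Real.cos t * Real.cos t + Real.sin t * Real.sin t = 1 by
      nlinarith [Real.sin_sq_add_cos_sq t]]
    exact Real.sqrt_one
  have hinj : Set.InjOn (fun t : ℝ => (⟨Real.cos t, Real.sin t⟩ : ℂ)) (Set.Icc 0 1) := by
    intro a ha b hb h
    simp only [Complex.mk.injEq] at h
    have hc : Real.cos a = Real.cos b := h.1
    have hpi : (1 : ℝ) ≤ Real.pi := by nlinarith [Real.pi_gt_three]
    exact Real.injOn_cos ⟨ha.1, ha.2.trans hpi⟩ ⟨hb.1, hb.2.trans hpi⟩ hc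
  have := (Set.Icc_infinite (by norm_num : (0:ℝ) < 1)).image hinj
  exact this.mono (Set.image_subset_iff.mpr hmap)


/-- If `G` is obtained by pasting `G₁` and `G₂` on a vertex `v`
(i.e. `G = G₁ ∪ G₂` where `G₁`, `G₂` are the induced subgraphs of `G` on vertex sets
`A`, `B` with `A ∪ B = V(G)` and `A ∩ B = {v}`), and both `G₁` and `G₂` are isomorphic to
unit-distance graphs, then `G` is isomorphic to a unit-distance graph. -/
theorem stmt1 {V : Type*} [Fintype V] (G : SimpleGraph V) (A B : Set V) (v : V)
    (hunion : A ∪ B = Set.univ) (hinter : A ∩ B = {v})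
    (hsplit : ∀ u w : V, G.Adj u w → (u ∈ A ∧ w ∈ A) ∨ (u ∈ B ∧ w ∈ B))
    (h1 : (G.induce A).IsUnitDistanceGraph) (h2 : (G.induce B).IsUnitDistanceGraph) :
    G.IsUnitDistanceGraph := by
  classical
  obtain ⟨f₁, hinj₁, hadj₁⟩ := h1
  obtain ⟨f₂, hinj₂, hadj₂⟩ := h2
  have hvAB : v ∈ A ∩ B := by rw [hinter]; rfl
  have hvA : v ∈ A := hvAB.1
  have hvB : v ∈ B := hvAB.2
  have hBmem : ∀ u : V, u ∉ A → u ∈ B := by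
    intro u hu
    have hmem : u ∈ A ∪ B := by rw [hunion]; trivial
    exact hmem.resolve_left hu
  set e : ℂ ≃ₗᵢ[ℝ] Plane := Complex.orthonormalBasisOneI.repr with he
  set p : A → ℂ := fun u => e.symm (f₁ u) - e.symm (f₁ ⟨v, hvA⟩) with hpdef
  set q : B → ℂ := fun w => e.symm (f₂ w) - e.symm (f₂ ⟨v, hvB⟩) with hqdef
  have hpdist : ∀ u w : A, dist (p u) (p w) = dist (f₁ u) (f₁ w) := by
    intro u w
    rw [hpdef]
    simp only [dist_sub_right]
    exact e.symm.dist_map _ _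
  have hqdist : ∀ u w : B, dist (q u) (q w) = dist (f₂ u) (f₂ w) := by
    intro u w
    rw [hqdef]
    simp only [dist_sub_right]
    exact e.symm.dist_map _ _
  have hpinj : Function.Injective p := by
    intro u w h
    rw [hpdef] at h
    simp only [sub_left_inj] at h
    exact hinj₁ (e.symm.injective h)
  have hqinj : Function.Injective q := by
    intro u w h
    rw [hqdef] at h
    simp only [sub_left_inj] at h
    exact hinj₂ (e.symm.injective h)
  have hp0 : ∀ u : A, p u = 0 ↔ u = ⟨v, hvA⟩ := by
    intro u
    rw [hpdef]
    simp only [sub_eq_zero]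
    constructor
    · intro h; exact hinj₁ (e.symm.injective h)
    · intro h; rw [h]
  have hq0 : ∀ w : B, q w = 0 ↔ w = ⟨v, hvB⟩ := by
    intro w
    rw [hqdef]
    simp only [sub_eq_zero]
    constructor
    · intro h; exact hinj₂ (e.symm.injective h)
    · intro h; rw [h]
  set Bad : Set ℂ :=
    (⋃ (u : A) (w : B), {c : ℂ | q w ≠ 0 ∧ c * q w = p u}) ∪
    (⋃ (u : A) (w : B),
      {c : ℂ | p u ≠ 0 ∧ q w ≠ 0 ∧ ‖c‖ = 1 ∧ dist (c * q w) (p u) = 1}) with hBadDef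
  have hBadFin : Bad.Finite := by
    rw [hBadDef]
    apply Set.Finite.union
    · apply Set.finite_iUnion
      intro u
      apply Set.finite_iUnion
      intro w
      by_cases h : q w = 0
      · simp [h]
      · exact Set.Finite.subset (finite_eq_rot h) (fun c hc => hc.2)
    · apply Set.finite_iUnion
      intro u
      apply Set.finite_iUnion
      intro w
      by_cases h : p u = 0
      · simp [h]
      by_cases h' : q w = 0
      · simp [h']
      · exact Set.Finite.subset (finite_dist_rot h h') (fun c hc => ⟨hc.2.2.1, hc.2.2.2⟩)
  obtain ⟨c, hcmem⟩ : ({c : ℂ | ‖c‖ = 1} \ Bad).Nonempty :=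
    (infinite_unit_circle.diff hBadFin).nonempty
  have hc1 : ‖c‖ = 1 := hcmem.1
  have hc0 : c ≠ 0 := by
    intro h
    rw [h] at hc1
    simp at hc1
  have hBad1 : ∀ (u : A) (w : B), q w ≠ 0 → c * q w ≠ p u := by
    intro u w hqw hcq
    exact hcmem.2 (Or.inl (Set.mem_iUnion.mpr ⟨u, Set.mem_iUnion.mpr ⟨w, hqw, hcq⟩⟩))
  have hBad2 : ∀ (u : A) (w : B), p u ≠ 0 → q w ≠ 0 → dist (c * q w) (p u) ≠ 1 := by
    intro u w hpu hqw hd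
    exact hcmem.2 (Or.inr (Set.mem_iUnion.mpr ⟨u, Set.mem_iUnion.mpr ⟨w, hpu, hqw, hc1, hd⟩⟩))
  set g : V → ℂ := fun u => if h : u ∈ A then p ⟨u, h⟩ else c * q ⟨u, hBmem u h⟩ with hg
  have gA : ∀ (u : V) (h : u ∈ A), g u = p ⟨u, h⟩ := fun u h => dif_pos h
  have gB : ∀ (u : V) (h : u ∉ A), g u = c * q ⟨u, hBmem u h⟩ := fun u h => dif_neg h
  have hqne : ∀ (w : V) (h : w ∉ A), q ⟨w, hBmem w h⟩ ≠ 0 := by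
    intro w h hq
    rw [hq0] at hq
    have : w = v := congrArg Subtype.val hq
    exact h (this ▸ hvA)
  -- distance between two B-branch points
  have hdistBB : ∀ (x y : B), dist (c * q x) (c * q y) = dist (f₂ x) (f₂ y) := by
    intro x y
    rw [Complex.dist_eq, ← mul_sub, norm_mul, hc1, one_mul, ← Complex.dist_eq, hqdist]
  -- the cross case
  have cross : ∀ u w : V, u ∈ A → w ∉ A → (G.Adj u w ↔ dist (g u) (g w) = 1) := by
    intro u w hu hw
    by_cases huv : u = v
    · subst huv
      have hpv : p ⟨u, hu⟩ = (0 : ℂ) := by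
        rw [hp0]
      have hqv : q ⟨u, hvB⟩ = (0 : ℂ) := by
        rw [hq0]
      have hd : dist (g u) (g w) = dist (f₂ ⟨u, hvB⟩) (f₂ ⟨w, hBmem w hw⟩) := by
        rw [gA u hu, gB w hw, hpv, ← hdistBB ⟨u, hvB⟩ ⟨w, hBmem w hw⟩, hqv, mul_zero]
      rw [hd]
      exact hadj₂ ⟨u, hvB⟩ ⟨w, hBmem w hw⟩
    · have hnadj : ¬ G.Adj u w := by
        intro h
        rcases hsplit u w h with ⟨_, h2⟩ | ⟨h1, _⟩
        · exact hw h2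
        · have : u ∈ A ∩ B := ⟨hu, h1⟩
          rw [hinter] at this
          exact huv this
      have hpu : p ⟨u, hu⟩ ≠ 0 := by
        intro h
        rw [hp0] at h
        exact huv (congrArg Subtype.val h)
      have hd : dist (g u) (g w) ≠ 1 := by
        rw [gA u hu, gB w hw, dist_comm]
        exact hBad2 ⟨u, hu⟩ ⟨w, hBmem w hw⟩ hpu (hqne w hw)
      exact iff_of_false hnadj hd
  refine ⟨fun u => e (g u), ?_, ?_⟩
  · intro u w huw
    have hg' : g u = g w := e.injective huw
    by_cases hu : u ∈ A <;> by_cases hw : w ∈ A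
    · rw [gA u hu, gA w hw] at hg'
      exact congrArg Subtype.val (hpinj hg')
    · rw [gA u hu, gB w hw] at hg'
      exact absurd hg'.symm (hBad1 ⟨u, hu⟩ ⟨w, hBmem w hw⟩ (hqne w hw))
    · rw [gB u hu, gA w hw] at hg'
      exact absurd hg' (hBad1 ⟨w, hw⟩ ⟨u, hBmem u hu⟩ (hqne u hu))
    · rw [gB u hu, gB w hw] at hg'
      have := hqinj (mul_left_cancel₀ hc0 hg')
      exact congrArg Subtype.val this
  · intro u w
    rw [e.dist_map]
    by_cases hu : u ∈ A <;> by_cases hw : w ∈ A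
    · rw [gA u hu, gA w hw, hpdist]
      exact hadj₁ ⟨u, hu⟩ ⟨w, hw⟩
    · exact cross u w hu hw
    · rw [G.adj_comm, dist_comm]
      exact cross w u hw hu
    · rw [gB u hu, gB w hw, hdistBB]
      exact hadj₂ ⟨u, hBmem u hu⟩ ⟨w, hBmem w hw⟩
end
end
end

section
/- Every 2-connected graph with at least 3 vertices that has no K4⁻-minor is a cycle, where K4⁻ is the graph obtained from the complete graph K4 by deleting one edge. -/
noncomputable section

/-- `K₄⁻`: the complete graph on 4 vertices with one edge deleted. -/
def K4minus : SimpleGraph (Fin 4) := (SimpleGraph.completeGraph (Fin 4)).deleteEdges {s(0, 1)}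

/-- `H` is a minor of `G`: `H` can be obtained from a subgraph of `G` by contracting edges.
Equivalently, there are nonempty, pairwise disjoint, connected branch sets in `G`, one for
each vertex of `H`, with an edge of `G` between the branch sets of adjacent vertices of `H`. -/
def SimpleGraph.HasMinor {V W : Type*} (G : SimpleGraph V) (H : SimpleGraph W) : Prop :=
  ∃ B : W → Set V,
    (∀ w, (B w).Nonempty) ∧
    (∀ w, (G.induce (B w)).Connected) ∧
    (Pairwise fun w₁ w₂ => Disjoint (B w₁) (B w₂)) ∧
    (∀ w₁ w₂ : W, H.Adj w₁ w₂ → ∃ a ∈ B w₁, ∃ b ∈ B w₂, G.Adj a b)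

/-- `G` is 2-connected: connected, at least 3 vertices, and still connected after
deleting any single vertex. -/
def SimpleGraph.IsTwoConnected {V : Type*} [Fintype V] (G : SimpleGraph V) : Prop :=
  G.Connected ∧ 3 ≤ Fintype.card V ∧ ∀ v : V, (G.induce ({v}ᶜ : Set V)).Connected

section Aux



open SimpleGraph

variable {V : Type*} {G : SimpleGraph V}

lemma firstAdj {u w : V} (p : G.Walk u w) (hne : u ≠ w) :
    ∃ y ∈ p.support, G.Adj u y ∧ y ≠ u := by
  cases p with
  | nil => exact absurd rfl hne
  | cons h q => exact ⟨_, by simp, h, h.ne'⟩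

lemma firstHit {S : Set V} {c a : V} (W : G.Walk c a) (ha : a ∈ S) :
    ∃ m, m ∈ S ∧ ∃ W' : G.Walk c m,
      (∀ x ∈ W'.support, x ∈ S → x = m) ∧ W'.support.Sublist W.support := by
  classical
  induction W with
  | nil => exact ⟨_, ha, Walk.nil, by simp, by simp⟩
  | cons h q ih =>
    rename_i u y _
    by_cases hu : u ∈ S
    · exact ⟨u, hu, Walk.nil, by simp, by
        rw [Walk.support_cons, Walk.support_nil]
        exact (List.nil_sublist _).cons₂ u⟩
    · obtain ⟨m, hm, W', hW1, hW2⟩ := ih ha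
      refine ⟨m, hm, Walk.cons h W', ?_, ?_⟩
      · intro x hx hxS
        rw [Walk.support_cons, List.mem_cons] at hx
        rcases hx with hx | hx
        · subst hx; exact absurd hxS hu
        · exact hW1 x hx hxS
      · rw [Walk.support_cons, Walk.support_cons]
        exact hW2.cons₂ u

lemma support_diff_end {u w : V} (p : G.Walk u w) (hnd : p.support.Nodup) (hne : u ≠ w) :
    ∃ (y : V) (q : G.Walk y u), G.Adj w y ∧ y ∈ q.support ∧ u ∈ q.support ∧
      {x | x ∈ p.support ∧ x ≠ w} = {x | x ∈ q.support} := by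
  cases hrev : p.reverse with
  | nil => exact absurd rfl hne
  | @cons _ y _ h q =>
    have hs0 := congrArg Walk.support hrev
    rw [Walk.support_reverse] at hs0
    have hsup : p.support = (w :: q.support).reverse := by
      rw [← Walk.support_cons h q, ← hs0, List.reverse_reverse]
    have hmem : ∀ x, x ∈ p.support ↔ x = w ∨ x ∈ q.support := by
      intro x; rw [hsup]; simp [or_comm]
    have hwq : w ∉ q.support := by
      have h2 : p.support.Nodup := hnd
      rw [hsup, List.nodup_reverse, List.nodup_cons] at h2
      exact h2.1
    refine ⟨y, q, h, q.start_mem_support, q.end_mem_support, ?_⟩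
    ext x
    simp only [Set.mem_setOf_eq]
    constructor
    · rintro ⟨hx, hxw⟩
      rcases (hmem x).mp hx with h1 | h1
      · exact absurd h1 hxw
      · exact h1
    · intro hx
      exact ⟨(hmem x).mpr (Or.inr hx), fun he => hwq (he ▸ hx)⟩

variable {V : Type*} {G : SimpleGraph V}

lemma singleton_induce_connected (v : V) : (G.induce {v}).Connected := by
  rw [induce_singleton_eq_top]
  exact connected_top

lemma walk_induce_connected {s : Set V} {u w : ↥s} (p : (G.induce s).Walk u w) :
    (G.induce (Subtype.val '' {x | x ∈ p.support})).Connected := by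
  have hmap := (p.map (SimpleGraph.Embedding.induce s).toHom).connected_induce_support
  have hset : (Subtype.val '' {x | x ∈ p.support})
      = {v | v ∈ (p.map (SimpleGraph.Embedding.induce s).toHom).support} := by
    ext x
    rw [Set.mem_setOf_eq, Walk.support_map]
    constructor
    · rintro ⟨a, ha, rfl⟩
      exact List.mem_map.mpr ⟨a, ha, rfl⟩
    · intro hx
      obtain ⟨a, ha, rfl⟩ := List.mem_map.mp hx
      exact ⟨a, ha, rfl⟩
  rw [hset]
  exact hmap

lemma K4minus_adj {i j : Fin 4} : K4minus.Adj i j ↔ i ≠ j ∧ ¬(s(i,j) = s(0,1)) := by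
  simp [K4minus, deleteEdges_adj, SimpleGraph.completeGraph]

lemma minor_of_sets {v : V} {S0 S1 S3 : Set ↥({v}ᶜ : Set V)}
    (h0 : (G.induce (Subtype.val '' S0)).Connected)
    (h1 : (G.induce (Subtype.val '' S1)).Connected)
    (h3 : (G.induce (Subtype.val '' S3)).Connected)
    (hd01 : Disjoint S0 S1) (hd03 : Disjoint S0 S3) (hd13 : Disjoint S1 S3)
    {x0 x1 x3 : ↥({v}ᶜ : Set V)} (hx0 : x0 ∈ S0) (hx1 : x1 ∈ S1) (hx3 : x3 ∈ S3)
    (hv0 : G.Adj v x0) (hv1 : G.Adj v x1) (hv3 : G.Adj v x3)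
    (e30 : ∃ p ∈ S3, ∃ q ∈ S0, G.Adj ↑p ↑q)
    (e31 : ∃ p ∈ S3, ∃ q ∈ S1, G.Adj ↑p ↑q) :
    G.HasMinor K4minus := by
  classical
  have hv : ∀ (S : Set ↥({v}ᶜ : Set V)), Disjoint ({v} : Set V) (Subtype.val '' S) := by
    intro S
    rw [Set.disjoint_left]
    rintro x rfl ⟨a, _, ha⟩
    exact a.2 (by simp [← ha])
  have him : ∀ (S T : Set ↥({v}ᶜ : Set V)), Disjoint S T →
      Disjoint (Subtype.val '' S) (Subtype.val '' T) :=
    fun S T h => Set.disjoint_image_of_injective Subtype.val_injective h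
  refine ⟨![Subtype.val '' S0, Subtype.val '' S1, {v}, Subtype.val '' S3], ?_, ?_, ?_, ?_⟩
  · intro w
    fin_cases w
    · exact ⟨_, Set.mem_image_of_mem _ hx0⟩
    · exact ⟨_, Set.mem_image_of_mem _ hx1⟩
    · exact ⟨v, rfl⟩
    · exact ⟨_, Set.mem_image_of_mem _ hx3⟩
  · intro w
    fin_cases w
    · exact h0
    · exact h1
    · exact singleton_induce_connected v
    · exact h3
  · intro i j hij
    fin_cases i <;> fin_cases j <;>
      first
        | exact absurd rfl hij
        | exact him _ _ hd01 | exact him _ _ hd03 | exact him _ _ hd13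
        | exact (him _ _ hd01).symm | exact (him _ _ hd03).symm | exact (him _ _ hd13).symm
        | exact hv _ | exact (hv _).symm
  · intro w1 w2 hadj
    rw [K4minus_adj] at hadj
    obtain ⟨p30, hp30, q30, hq30, hpq30⟩ := e30
    obtain ⟨p31, hp31, q31, hq31, hpq31⟩ := e31
    fin_cases w1 <;> fin_cases w2 <;>
      first
        | exact absurd rfl hadj.1
        | exact absurd rfl hadj.2
        | exact absurd (Sym2.eq_swap) hadj.2
        | exact ⟨_, Set.mem_image_of_mem _ hx0, v, rfl, hv0.symm⟩
        | exact ⟨v, rfl, _, Set.mem_image_of_mem _ hx0, hv0⟩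
        | exact ⟨_, Set.mem_image_of_mem _ hx1, v, rfl, hv1.symm⟩
        | exact ⟨v, rfl, _, Set.mem_image_of_mem _ hx1, hv1⟩
        | exact ⟨_, Set.mem_image_of_mem _ hx3, v, rfl, hv3.symm⟩
        | exact ⟨v, rfl, _, Set.mem_image_of_mem _ hx3, hv3⟩
        | exact ⟨_, Set.mem_image_of_mem _ hp30, _, Set.mem_image_of_mem _ hq30, hpq30⟩
        | exact ⟨_, Set.mem_image_of_mem _ hq30, _, Set.mem_image_of_mem _ hp30, hpq30.symm⟩
        | exact ⟨_, Set.mem_image_of_mem _ hp31, _, Set.mem_image_of_mem _ hq31, hpq31⟩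
        | exact ⟨_, Set.mem_image_of_mem _ hq31, _, Set.mem_image_of_mem _ hp31, hpq31.symm⟩
lemma three_nbrs_minor {v a b c : V} (hab : a ≠ b) (hac : a ≠ c) (hbc : b ≠ c)
    (ha : G.Adj v a) (hb : G.Adj v b) (hc : G.Adj v c)
    (hconn : (G.induce ({v}ᶜ : Set V)).Connected) : G.HasMinor K4minus := by
  classical
  have has : a ∈ ({v}ᶜ : Set V) := Set.mem_compl_singleton_iff.mpr ha.ne'
  have hbs : b ∈ ({v}ᶜ : Set V) := Set.mem_compl_singleton_iff.mpr hb.ne'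
  have hcs : c ∈ ({v}ᶜ : Set V) := Set.mem_compl_singleton_iff.mpr hc.ne'
  set a' : ↥({v}ᶜ : Set V) := ⟨a, has⟩
  set b' : ↥({v}ᶜ : Set V) := ⟨b, hbs⟩
  set c' : ↥({v}ᶜ : Set V) := ⟨c, hcs⟩
  have hab' : a' ≠ b' := fun h => hab (congrArg Subtype.val h)
  have hac' : a' ≠ c' := fun h => hac (congrArg Subtype.val h)
  have hbc' : b' ≠ c' := fun h => hbc (congrArg Subtype.val h)
  obtain ⟨P0⟩ := hconn.preconnected a' b'
  have hP : P0.bypass.IsPath := P0.bypass_isPath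
  obtain ⟨W0⟩ := hconn.preconnected c' a'
  have hW0 : W0.bypass.IsPath := W0.bypass_isPath
  obtain ⟨m, hmP, W', hOnly, hSub⟩ :=
    firstHit (S := {x | x ∈ P0.bypass.support}) W0.bypass P0.bypass.start_mem_support
  have hmPs : m ∈ P0.bypass.support := hmP
  have hW'nd : W'.support.Nodup := hSub.nodup hW0.support_nodup
  have hc'W' : c' ∈ W'.support := W'.start_mem_support
  have hmW' : m ∈ W'.support := W'.end_mem_support
  have hOnly' : ∀ x, x ∈ W'.support → x ∈ P0.bypass.support → x = m :=
    fun x h1 h2 => hOnly x h1 h2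
  have htk : (P0.bypass.takeUntil m hmPs).IsPath := hP.takeUntil hmPs
  have hdp : (P0.bypass.dropUntil m hmPs).IsPath := hP.dropUntil hmPs
  have hPsupp : P0.bypass.support
      = (P0.bypass.takeUntil m hmPs).support ++ (P0.bypass.dropUntil m hmPs).support.tail := by
    conv_lhs => rw [← Walk.take_spec P0.bypass hmPs]
    exact Walk.support_append _ _
  have hndP := hP.support_nodup
  rw [hPsupp] at hndP
  have hdisjTD := (List.nodup_append.mp hndP).2.2
  have hdp_mem_tail : ∀ x, x ∈ (P0.bypass.dropUntil m hmPs).support → x ≠ m →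
      x ∈ (P0.bypass.dropUntil m hmPs).support.tail := by
    intro x hx hxm
    rw [Walk.support_eq_cons (P0.bypass.dropUntil m hmPs), List.mem_cons] at hx
    rcases hx with hx | hx
    · exact absurd hx hxm
    · exact hx
  have hdprev_nd : (P0.bypass.dropUntil m hmPs).reverse.support.Nodup := by
    rw [Walk.support_reverse]
    exact List.nodup_reverse.mpr hdp.support_nodup
  by_cases hma : m = a'
  · -- m = a'
    have hbm : b' ≠ m := by rw [hma]; exact hab'.symm
    have hcm : c' ≠ m := by rw [hma]; exact hac'.symm
    obtain ⟨y0, q0, hadj0, hy0q0, hb'q0, hSeq0⟩ :=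
      support_diff_end (P0.bypass.dropUntil m hmPs).reverse hdprev_nd hbm
    have hq0mem : ∀ x, x ∈ q0.support ↔ x ∈ (P0.bypass.dropUntil m hmPs).support ∧ x ≠ m := by
      intro x
      have h := (Set.ext_iff.mp hSeq0 x).symm
      simpa [Walk.support_reverse] using h
    obtain ⟨y1, q1, hadj1, hy1q1, hc'q1, hSeq1⟩ := support_diff_end W' hW'nd hcm
    have hq1mem : ∀ x, x ∈ q1.support ↔ x ∈ W'.support ∧ x ≠ m := by
      intro x
      have h := (Set.ext_iff.mp hSeq1 x).symm
      simpa using h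
    refine minor_of_sets (S0 := {x | x ∈ q0.support}) (S1 := {x | x ∈ q1.support})
      (S3 := {m}) (walk_induce_connected q0) (walk_induce_connected q1)
      (by rw [Set.image_singleton]; exact singleton_induce_connected _)
      ?_ ?_ ?_ (hb'q0 : b' ∈ _) (hc'q1 : c' ∈ _) (rfl : m ∈ ({m} : Set _))
      hb hc (by rw [hma]; exact ha)
      ⟨m, rfl, y0, hy0q0, hadj0⟩ ⟨m, rfl, y1, hy1q1, hadj1⟩
    · rw [Set.disjoint_left]
      intro x hx0 hx1
      have h0 := (hq0mem x).mp hx0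
      have h1 := (hq1mem x).mp hx1
      exact h0.2 (hOnly' x h1.1 (Walk.support_dropUntil_subset P0.bypass hmPs h0.1))
    · rw [Set.disjoint_singleton_right]
      intro hx
      exact ((hq0mem m).mp hx).2 rfl
    · rw [Set.disjoint_singleton_right]
      intro hx
      exact ((hq1mem m).mp hx).2 rfl
  · by_cases hmb : m = b'
    · -- m = b'
      have ham : a' ≠ m := by rw [hmb]; exact hab'
      have hcm : c' ≠ m := by rw [hmb]; exact hbc'.symm
      obtain ⟨y0, q0, hadj0, hy0q0, ha'q0, hSeq0⟩ :=
        support_diff_end (P0.bypass.takeUntil m hmPs) htk.support_nodup ham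
      have hq0mem : ∀ x, x ∈ q0.support ↔ x ∈ (P0.bypass.takeUntil m hmPs).support ∧ x ≠ m := by
        intro x
        have h := (Set.ext_iff.mp hSeq0 x).symm
        simpa using h
      obtain ⟨y1, q1, hadj1, hy1q1, hc'q1, hSeq1⟩ := support_diff_end W' hW'nd hcm
      have hq1mem : ∀ x, x ∈ q1.support ↔ x ∈ W'.support ∧ x ≠ m := by
        intro x
        have h := (Set.ext_iff.mp hSeq1 x).symm
        simpa using h
      refine minor_of_sets (S0 := {x | x ∈ q0.support}) (S1 := {x | x ∈ q1.support})
        (S3 := {m}) (walk_induce_connected q0) (walk_induce_connected q1)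
        (by rw [Set.image_singleton]; exact singleton_induce_connected _)
        ?_ ?_ ?_ (ha'q0 : a' ∈ _) (hc'q1 : c' ∈ _) (rfl : m ∈ ({m} : Set _))
        ha hc (by rw [hmb]; exact hb)
        ⟨m, rfl, y0, hy0q0, hadj0⟩ ⟨m, rfl, y1, hy1q1, hadj1⟩
      · rw [Set.disjoint_left]
        intro x hx0 hx1
        have h0 := (hq0mem x).mp hx0
        have h1 := (hq1mem x).mp hx1
        exact h0.2 (hOnly' x h1.1 (Walk.support_takeUntil_subset P0.bypass hmPs h0.1))
      · rw [Set.disjoint_singleton_right]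
        intro hx
        exact ((hq0mem m).mp hx).2 rfl
      · rw [Set.disjoint_singleton_right]
        intro hx
        exact ((hq1mem m).mp hx).2 rfl
    · -- general case
      have ham : a' ≠ m := fun h => hma h.symm
      have hbm : b' ≠ m := fun h => hmb h.symm
      obtain ⟨y0, q0, hadj0, hy0q0, ha'q0, hSeq0⟩ :=
        support_diff_end (P0.bypass.takeUntil m hmPs) htk.support_nodup ham
      have hq0mem : ∀ x, x ∈ q0.support ↔ x ∈ (P0.bypass.takeUntil m hmPs).support ∧ x ≠ m := by
        intro x
        have h := (Set.ext_iff.mp hSeq0 x).symm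
        simpa using h
      obtain ⟨y1, q1, hadj1, hy1q1, hb'q1, hSeq1⟩ :=
        support_diff_end (P0.bypass.dropUntil m hmPs).reverse hdprev_nd hbm
      have hq1mem : ∀ x, x ∈ q1.support ↔ x ∈ (P0.bypass.dropUntil m hmPs).support ∧ x ≠ m := by
        intro x
        have h := (Set.ext_iff.mp hSeq1 x).symm
        simpa [Walk.support_reverse] using h
      refine minor_of_sets (S0 := {x | x ∈ q0.support}) (S1 := {x | x ∈ q1.support})
        (S3 := {x | x ∈ W'.support}) (walk_induce_connected q0) (walk_induce_connected q1)
        (walk_induce_connected W')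
        ?_ ?_ ?_ (ha'q0 : a' ∈ _) (hb'q1 : b' ∈ _) (hc'W' : c' ∈ _)
        ha hb hc
        ⟨m, hmW', y0, hy0q0, hadj0⟩ ⟨m, hmW', y1, hy1q1, hadj1⟩
      · rw [Set.disjoint_left]
        intro x hx0 hx1
        have h0 := (hq0mem x).mp hx0
        have h1 := (hq1mem x).mp hx1
        exact hdisjTD x h0.1 x (hdp_mem_tail x h1.1 h1.2) rfl
      · rw [Set.disjoint_left]
        intro x hx0 hx3
        have h0 := (hq0mem x).mp hx0
        exact h0.2 (hOnly' x hx3 (Walk.support_takeUntil_subset P0.bypass hmPs h0.1))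
      · rw [Set.disjoint_left]
        intro x hx1 hx3
        have h1 := (hq1mem x).mp hx1
        exact h1.2 (hOnly' x hx3 (Walk.support_dropUntil_subset P0.bypass hmPs h1.1))
lemma exists_two_nbrs [Fintype V] (hconn : G.Connected) (hcard : 3 ≤ Fintype.card V)
    (hdel : ∀ v : V, (G.induce ({v}ᶜ : Set V)).Connected) (hK : ¬ G.HasMinor K4minus) :
    ∀ v : V, ∃ a b : V, a ≠ b ∧ G.Adj v a ∧ G.Adj v b ∧
      ∀ c, G.Adj v c → c = a ∨ c = b := by
  classical
  intro v
  have h1 : ∃ a, G.Adj v a := by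
    obtain ⟨w, hw⟩ : ∃ w : V, w ≠ v := Fintype.exists_ne_of_one_lt_card (by omega) v
    obtain ⟨p⟩ := hconn.preconnected v w
    obtain ⟨y, _, hy, _⟩ := firstAdj p (Ne.symm hw)
    exact ⟨y, hy⟩
  obtain ⟨a, ha⟩ := h1
  have h2 : ∃ b, G.Adj v b ∧ b ≠ a := by
    have hconn' := hdel a
    have hvmem : v ∈ ({a}ᶜ : Set V) := Set.mem_compl_singleton_iff.mpr ha.ne
    obtain ⟨w, hwv, hwa⟩ : ∃ w : V, w ≠ v ∧ w ≠ a := by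
      by_contra hcon
      push_neg at hcon
      have hsub : (Finset.univ : Finset V) ⊆ {v, a} := by
        intro x _
        rcases eq_or_ne x v with h | h
        · simp [h]
        · simp [hcon x h]
      have h1 := Finset.card_le_card hsub
      have h2 : ({v, a} : Finset V).card ≤ 2 :=
        (Finset.card_insert_le _ _).trans (by simp)
      rw [Finset.card_univ] at h1
      omega
    obtain ⟨p⟩ := hconn'.preconnected ⟨v, hvmem⟩ ⟨w, Set.mem_compl_singleton_iff.mpr hwa⟩
    obtain ⟨y, _, hy, hyv⟩ := firstAdj p (fun h => hwv (congrArg Subtype.val h).symm)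
    exact ⟨y, hy, y.2⟩
  obtain ⟨b, hb, hba⟩ := h2
  refine ⟨a, b, hba.symm, ha, hb, ?_⟩
  intro c hc
  by_contra hcon
  push_neg at hcon
  exact hK (three_nbrs_minor hba.symm hcon.1.symm hcon.2.symm ha hb hc (hdel v))

def stepFn [DecidableEq V] (nb1 nb2 : V → V) (prev cur : V) : V :=
  if prev = nb1 cur then nb2 cur else nb1 cur

def seqFn [DecidableEq V] (nb1 nb2 : V → V) (v0 : V) : ℕ → V × V
  | 0 => (v0, nb1 v0)
  | (n+1) => ((seqFn nb1 nb2 v0 n).2,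
      stepFn nb1 nb2 (seqFn nb1 nb2 v0 n).1 (seqFn nb1 nb2 v0 n).2)

lemma cycle_of_two_nbrs [Fintype V] (hconn : G.Connected) (hcard : 3 ≤ Fintype.card V)
    (h2 : ∀ v : V, ∃ a b : V, a ≠ b ∧ G.Adj v a ∧ G.Adj v b ∧
      ∀ c, G.Adj v c → c = a ∨ c = b) :
    ∃ n : ℕ, 3 ≤ n ∧ Nonempty (G ≃g SimpleGraph.cycleGraph n) := by
  classical
  choose nb1 nb2 hne hadj1 hadj2 hall using h2
  have hNe : Nonempty V := Fintype.card_pos_iff.mp (by omega)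
  set v0 := Classical.arbitrary V with hv0
  set x : ℕ → V := fun n => (seqFn nb1 nb2 v0 n).1 with hx
  have hx0 : x 0 = v0 := rfl
  have hx1 : x 1 = nb1 v0 := rfl
  have hstep : ∀ k, x (k+2) = stepFn nb1 nb2 (x k) (x (k+1)) := fun k => rfl
  have hspec : ∀ prev cur, G.Adj cur prev →
      G.Adj cur (stepFn nb1 nb2 prev cur) ∧ stepFn nb1 nb2 prev cur ≠ prev ∧
      ∀ c, G.Adj cur c → c = prev ∨ c = stepFn nb1 nb2 prev cur := by
    intro prev cur h
    unfold stepFn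
    by_cases hp : prev = nb1 cur
    · rw [if_pos hp]
      refine ⟨hadj2 cur, by rw [hp]; exact (hne cur).symm, ?_⟩
      intro c hc
      rcases hall cur c hc with h1 | h1
      · left; rw [hp, h1]
      · right; exact h1
    · rw [if_neg hp]
      refine ⟨hadj1 cur, fun hh => hp hh.symm, ?_⟩
      intro c hc
      rcases hall cur c hc with h1 | h1
      · right; exact h1
      · left
        rcases hall cur prev h with h2 | h2
        · exact absurd h2 hp
        · rw [h1, ← h2]
  have hadjx : ∀ k, G.Adj (x k) (x (k+1)) := by
    intro k
    induction k with
    | zero => rw [hx0, hx1]; exact hadj1 v0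
    | succ k ih =>
      rw [hstep k]
      exact (hspec (x k) (x (k+1)) ih.symm).1
  have hneqx : ∀ k, x (k+2) ≠ x k := by
    intro k
    rw [hstep k]
    exact (hspec (x k) (x (k+1)) (hadjx k).symm).2.1
  have hkey : ∀ k c, G.Adj (x (k+1)) c → c = x k ∨ c = x (k+2) := by
    intro k c hc
    rw [hstep k]
    exact (hspec (x k) (x (k+1)) (hadjx k).symm).2.2 c hc
  clear_value x
  clear hx hx0 hx1
  -- find first repetition
  have hQex : ∃ t, 0 < t ∧ ∃ s, s < t ∧ x s = x t := by
    have hni : ∃ i j : Fin (Fintype.card V + 1), x i.val = x j.val ∧ i ≠ j := by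
      by_contra hcon
      push_neg at hcon
      have hinj : Function.Injective (fun i : Fin (Fintype.card V + 1) => x i.val) :=
        fun i j hij => hcon i j hij
      have hle := Fintype.card_le_of_injective _ hinj
      rw [Fintype.card_fin] at hle
      omega
    obtain ⟨i, j, hxij, hij⟩ := hni
    rcases lt_or_gt_of_ne (fun h : i.val = j.val => hij (Fin.ext h)) with h | h
    · exact ⟨j.val, by omega, i.val, h, hxij⟩
    · exact ⟨i.val, by omega, j.val, h, hxij.symm⟩
  set T := Nat.find hQex with hTdef
  have hfs := Nat.find_spec hQex
  rw [← hTdef] at hfs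
  obtain ⟨hTpos, s, hsT, hsx⟩ := hfs
  have hTmin : ∀ t, t < T → ¬(0 < t ∧ ∃ s, s < t ∧ x s = x t) := by
    intro t ht
    exact Nat.find_min hQex (hTdef ▸ ht)
  clear_value T
  clear hTdef
  have hinj : ∀ i j, i < j → j < T → x i ≠ x j := by
    intro i j hij hjT heq
    exact hTmin j hjT ⟨by omega, i, hij, heq⟩
  have hs0 : s = 0 := by
    by_contra hs
    obtain ⟨s', rfl⟩ : ∃ s', s = s' + 1 := ⟨s - 1, by omega⟩
    have hTne1 : T ≠ s' + 2 := by
      intro h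
      have h2 := hadjx (s' + 1)
      rw [show s' + 1 + 1 = s' + 2 by omega, ← h, ← hsx] at h2
      exact G.loopless.irrefl _ h2
    have hTne2 : T ≠ s' + 3 := by
      intro h
      exact hneqx (s' + 1) (by rw [show s' + 1 + 2 = s' + 3 by omega, ← h, ← hsx])
    have hT4 : s' + 4 ≤ T := by omega
    have hadjT : G.Adj (x (s' + 1)) (x (T - 1)) := by
      have h := hadjx (T - 1)
      rw [show T - 1 + 1 = T by omega, ← hsx] at h
      exact h.symm
    rcases hkey s' _ hadjT with h1 | h1
    · exact hTmin (T - 1) (by omega) ⟨by omega, s', by omega, h1.symm⟩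
    · exact hTmin (T - 1) (by omega) ⟨by omega, s' + 2, by omega, h1.symm⟩
  subst hs0
  have hxT : x T = x 0 := hsx.symm
  have hT3 : 3 ≤ T := by
    have h1 : T ≠ 1 := by
      intro h
      have h2 := hadjx 0
      rw [show (0:ℕ) + 1 = 1 by rfl, ← h, hxT] at h2
      exact G.loopless.irrefl _ h2
    have h2 : T ≠ 2 := by
      intro h
      exact hneqx 0 (by rw [show (0:ℕ) + 2 = 2 by rfl, ← h, hxT])
    omega
  -- neighbors of x 0
  have hadj_b : G.Adj (x 0) (x (T - 1)) := by
    have h := hadjx (T - 1)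
    rw [show T - 1 + 1 = T by omega, hxT] at h
    exact h.symm
  have hnb0 : ∀ c, G.Adj (x 0) c → c = x 1 ∨ c = x (T - 1) := by
    intro c hc
    have hne1 : x 1 ≠ x (T - 1) := hinj 1 (T - 1) (by omega) (by omega)
    rcases hall (x 0) c hc with h | h <;>
      rcases hall (x 0) (x 1) (hadjx 0) with h' | h' <;>
      rcases hall (x 0) (x (T - 1)) hadj_b with h'' | h''
    · left; rw [h, ← h']
    · left; rw [h, ← h']
    · right; rw [h, ← h'']
    · exact absurd (h'.trans h''.symm) hne1
    · exact absurd (h'.trans h''.symm) hne1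
    · right; rw [h, ← h'']
    · left; rw [h, ← h']
    · left; rw [h, ← h']
  -- periodicity
  have hx1T : x (T + 1) = x 1 := by
    have hadj_a : G.Adj (x 0) (x (T + 1)) := by
      have h := hadjx T
      rw [hxT] at h
      exact h
    rcases hnb0 _ hadj_a with h | h
    · exact h
    · exfalso
      have h2 := hneqx (T - 1)
      rw [show T - 1 + 2 = T + 1 by omega] at h2
      exact h2 h
  have hper : ∀ k, x (k + T) = x k := by
    intro k
    induction k using Nat.strong_induction_on with
    | _ k ih =>
      match k with
      | 0 => rw [Nat.zero_add, hxT]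
      | 1 => rw [Nat.add_comm, hx1T]
      | (k+2) =>
        have e1 := ih k (by omega)
        have e2 := ih (k+1) (by omega)
        have h1 : x (k + 2 + T) = stepFn nb1 nb2 (x (k + T)) (x (k + T + 1)) := by
          rw [show k + 2 + T = (k + T) + 2 by omega]
          exact hstep (k + T)
        rw [h1, show k + T + 1 = (k + 1) + T by omega, e1, e2]
        exact (hstep k).symm
  -- surjectivity
  have hclosed : ∀ u w, (∃ i, i < T ∧ x i = u) → G.Adj u w → (∃ i, i < T ∧ x i = w) := by
    rintro u w ⟨i, hiT, rfl⟩ hadj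
    by_cases hi : i = 0
    · subst hi
      rcases hnb0 w hadj with h | h
      · exact ⟨1, by omega, h.symm⟩
      · exact ⟨T - 1, by omega, h.symm⟩
    · obtain ⟨i', rfl⟩ : ∃ i', i = i' + 1 := ⟨i - 1, by omega⟩
      rcases hkey i' w hadj with h | h
      · exact ⟨i', by omega, h.symm⟩
      · by_cases hiT2 : i' + 2 = T
        · exact ⟨0, by omega, by rw [← hxT, ← hiT2, h]⟩
        · exact ⟨i' + 2, by omega, h.symm⟩
  have hsurj : ∀ y : V, ∃ i, i < T ∧ x i = y := by
    intro y
    obtain ⟨p⟩ := hconn.preconnected (x 0) y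
    have hwalk : ∀ {u w : V} (_ : G.Walk u w), (∃ i, i < T ∧ x i = u) →
        (∃ i, i < T ∧ x i = w) := by
      intro u w q
      induction q with
      | nil => exact id
      | cons h q ih => exact fun hu => ih (hclosed _ _ hu h)
    exact hwalk p ⟨0, by omega, rfl⟩
  -- bijection
  have hbij : Function.Bijective (fun i : Fin T => x i.val) := by
    constructor
    · intro i j hij
      by_contra hcon
      rcases lt_or_gt_of_ne (fun h : i.val = j.val => hcon (Fin.ext h)) with h | h
      · exact hinj i.val j.val h j.isLt hij
      · exact hinj j.val i.val h i.isLt hij.symm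
    · intro y
      obtain ⟨i, hiT, hi⟩ := hsurj y
      exact ⟨⟨i, hiT⟩, hi⟩
  -- mod arithmetic helpers
  have hmod : ∀ a : ℕ, a < 2 * T → a % T = if a < T then a else a - T := by
    intro a ha
    split_ifs with h
    · exact Nat.mod_eq_of_lt h
    · rw [Nat.mod_eq_sub_mod (by omega), Nat.mod_eq_of_lt (by omega)]
  have hsubval : ∀ i j : Fin T, (i - j).val = (T - j.val + i.val) % T := by
    intro i j
    rw [Fin.sub_def]
  have hsub_one : ∀ i j : Fin T, (j - i).val = 1 ↔
      (j.val = i.val + 1 ∨ (j.val = 0 ∧ i.val = T - 1)) := by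
    intro i j
    have hi := i.isLt
    have hj := j.isLt
    rw [hsubval, hmod _ (by omega)]
    split_ifs with h <;> omega
  -- adjacency characterization
  have hadj_iff : ∀ i j : Fin T, G.Adj (x i.val) (x j.val) ↔ (SimpleGraph.cycleGraph T).Adj i j := by
    intro i j
    rw [SimpleGraph.cycleGraph_adj']
    constructor
    · intro hadj
      have hi := i.isLt
      have hj := j.isLt
      by_cases hi0 : i.val = 0
      · have hadj0 : G.Adj (x 0) (x j.val) := by rw [← hi0]; exact hadj
        rcases hnb0 (x j.val) hadj0 with h | h
        · rw [hsub_one j i, hsub_one i j]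
          have hj1 : j.val = 1 := by
            by_contra hcon
            rcases Nat.lt_or_ge j.val 1 with hlt | hge
            · exact hinj j.val 1 (by omega) (by omega) h
            · exact hinj 1 j.val (by omega) hj h.symm
          omega
        · rw [hsub_one j i, hsub_one i j]
          have hjT : j.val = T - 1 := by
            by_contra hcon
            rcases Nat.lt_or_ge j.val (T - 1) with hlt | hge
            · exact hinj j.val (T - 1) (by omega) (by omega) h
            · exact hinj (T - 1) j.val (by omega) hj h.symm
          omega
      · obtain ⟨i', hi'⟩ : ∃ i', i.val = i' + 1 := ⟨i.val - 1, by omega⟩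
        rw [hi'] at hadj
        rcases hkey i' _ hadj with h | h
        · rw [hsub_one j i, hsub_one i j]
          have hji : j.val = i' := by
            by_contra hcon
            rcases lt_or_gt_of_ne hcon with hlt | hgt
            · exact hinj j.val i' hlt (by omega) h
            · exact hinj i' j.val hgt hj h.symm
          omega
        · by_cases hiT2 : i' + 2 = T
          · rw [hsub_one j i, hsub_one i j]
            have hj0 : j.val = 0 := by
              by_contra hcon
              have h0 : x j.val = x 0 := by rw [h, hiT2, hxT]
              exact hinj 0 j.val (by omega) hj h0.symm
            omega
          · rw [hsub_one j i, hsub_one i j]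
            have hji : j.val = i' + 2 := by
              by_contra hcon
              rcases lt_or_gt_of_ne hcon with hlt | hgt
              · exact hinj j.val (i' + 2) hlt (by omega) h
              · exact hinj (i' + 2) j.val hgt hj h.symm
            omega
    · intro hadj
      have hi := i.isLt
      have hj := j.isLt
      rcases hadj with h | h
      · rw [hsub_one j i] at h
        rcases h with h1 | ⟨h1, h2⟩
        · rw [h1]
          exact (hadjx j.val).symm
        · rw [h1, h2]
          exact hadj_b
      · rw [hsub_one i j] at h
        rcases h with h1 | ⟨h1, h2⟩
        · rw [h1]
          exact hadjx i.val
        · rw [h1, h2]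
          exact hadj_b.symm
  refine ⟨T, hT3, ⟨?_⟩⟩
  have ψ : SimpleGraph.cycleGraph T ≃g G :=
    ⟨Equiv.ofBijective (fun i : Fin T => x i.val) hbij, by
      intro a b
      exact hadj_iff a b⟩
  exact ψ.symm


end Aux

/-- Every 2-connected graph with at least 3 vertices and no `K₄⁻`-minor
is a cycle. -/
theorem stmt3 {V : Type*} [Fintype V] (G : SimpleGraph V)
    (h2 : G.IsTwoConnected) (hK : ¬ G.HasMinor K4minus) :
    ∃ n : ℕ, 3 ≤ n ∧ Nonempty (G ≃g SimpleGraph.cycleGraph n) := by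
  obtain ⟨hconn, hcard, hdel⟩ := h2
  exact cycle_of_two_nbrs hconn hcard (exists_two_nbrs hconn hcard hdel hK)
end
end

section
/- For every integer n ≥ 1, the complete bipartite graph K_{2,n} satisfies ddn(K_{2,n}) = dn(K_{2,n}) = ⌈√(n/2)⌉. -/
noncomputable section

namespace Stmt5Aux

def pt (x y : ℝ) : Plane := WithLp.toLp 2 ![x, y]
@[simp] lemma pt0 (x y : ℝ) : pt x y 0 = x := rfl
@[simp] lemma pt1 (x y : ℝ) : pt x y 1 = y := rfl

lemma dist_pt (x y x' y' : ℝ) : dist (pt x y) (pt x' y') = Real.sqrt ((x-x')^2 + (y-y')^2) := by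
  rw [EuclideanSpace.dist_eq, Fin.sum_univ_two]
  simp [Real.dist_eq, sq_abs]

lemma dist_sq_plane (p q : Plane) : dist p q ^ 2 = (p 0 - q 0)^2 + (p 1 - q 1)^2 := by
  rw [EuclideanSpace.dist_eq, Fin.sum_univ_two, Real.sq_sqrt (by positivity)]
  simp [Real.dist_eq, sq_abs]

lemma plane_ext {p q : Plane} (h0 : p 0 = q 0) (h1 : p 1 = q 1) : p = q := by
  ext i; fin_cases i <;> assumption

lemma alg_core (a0 a1 b0 b1 p0 p1 q0 q1 r0 r1 : ℝ)
    (hAB : ¬ (a0 = b0 ∧ a1 = b1))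
    (e1 : (p0-a0)^2+(p1-a1)^2 = (q0-a0)^2+(q1-a1)^2)
    (e2 : (p0-a0)^2+(p1-a1)^2 = (r0-a0)^2+(r1-a1)^2)
    (e3 : (p0-b0)^2+(p1-b1)^2 = (q0-b0)^2+(q1-b1)^2)
    (e4 : (p0-b0)^2+(p1-b1)^2 = (r0-b0)^2+(r1-b1)^2)
    (hpq : ¬ (p0 = q0 ∧ p1 = q1)) (hpr : ¬ (p0 = r0 ∧ p1 = r1)) :
    q0 = r0 ∧ q1 = r1 := by
  have hα : (q0 - p0)^2 + (q1 - p1)^2 > 0 := by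
    rcases not_and_or.mp hpq with h | h
    · have := sub_ne_zero.mpr (Ne.symm h); positivity
    · have := sub_ne_zero.mpr (Ne.symm h); positivity
  have hβ : (r0 - p0)^2 + (r1 - p1)^2 > 0 := by
    rcases not_and_or.mp hpr with h | h
    · have := sub_ne_zero.mpr (Ne.symm h); positivity
    · have := sub_ne_zero.mpr (Ne.symm h); positivity
  have huw : (q0-p0)*(a0-b0) + (q1-p1)*(a1-b1) = 0 := by linear_combination (e1 - e3)/2
  have hvw : (r0-p0)*(a0-b0) + (r1-p1)*(a1-b1) = 0 := by linear_combination (e2 - e4)/2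
  have hcross : (q0-p0)*(r1-p1) - (q1-p1)*(r0-p0) = 0 := by
    rcases not_and_or.mp hAB with h | h
    · have hw0 : a0 - b0 ≠ 0 := sub_ne_zero.mpr h
      have h5 : ((q0-p0)*(r1-p1) - (q1-p1)*(r0-p0)) * (a0-b0) = 0 := by
        linear_combination (r1-p1) * huw - (q1-p1) * hvw
      exact (mul_eq_zero.mp h5).resolve_right hw0
    · have hw1 : a1 - b1 ≠ 0 := sub_ne_zero.mpr h
      have h5 : ((q0-p0)*(r1-p1) - (q1-p1)*(r0-p0)) * (a1-b1) = 0 := by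
        linear_combination (p0-r0) * huw + (q0-p0) * hvw
      exact (mul_eq_zero.mp h5).resolve_right hw1
  have hcu : (q0-p0)*(p0+q0-2*a0) + (q1-p1)*(p1+q1-2*a1) = 0 := by linear_combination -e1
  have hcv : (r0-p0)*(p0+r0-2*a0) + (r1-p1)*(p1+r1-2*a1) = 0 := by linear_combination -e2
  have hvs : (r0-p0)*(p0+q0-2*a0) + (r1-p1)*(p1+q1-2*a1) = 0 := by
    have h6 : ((q0-p0)^2 + (q1-p1)^2) * ((r0-p0)*(p0+q0-2*a0) + (r1-p1)*(p1+q1-2*a1)) = 0 := by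
      linear_combination ((q0-p0)*(r0-p0) + (q1-p1)*(r1-p1)) * hcu
        + ((p1+q1-2*a1)*(q0-p0) - (p0+q0-2*a0)*(q1-p1)) * hcross
    exact (mul_eq_zero.mp h6).resolve_left (ne_of_gt hα)
  have hut : (q0-p0)*(p0+r0-2*a0) + (q1-p1)*(p1+r1-2*a1) = 0 := by
    have h6 : ((r0-p0)^2 + (r1-p1)^2) * ((q0-p0)*(p0+r0-2*a0) + (q1-p1)*(p1+r1-2*a1)) = 0 := by
      linear_combination ((q0-p0)*(r0-p0) + (q1-p1)*(r1-p1)) * hcv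
        - ((p1+r1-2*a1)*(r0-p0) - (p0+r0-2*a0)*(r1-p1)) * hcross
    exact (mul_eq_zero.mp h6).resolve_left (ne_of_gt hβ)
  have h1 : (q0-p0)*(r0-q0) + (q1-p1)*(r1-q1) = 0 := by linear_combination hut - hcu
  have h2 : (r0-p0)*(q0-r0) + (r1-p1)*(q1-r1) = 0 := by linear_combination hvs - hcv
  have hfin : (q0-r0)^2 + (q1-r1)^2 = 0 := by linear_combination -h1 - h2
  constructor
  · have h0 : (q0-r0)^2 = 0 := by linarith [sq_nonneg (q1-r1), sq_nonneg (q0-r0)]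
    have := sq_eq_zero_iff.mp h0
    linarith
  · have h0 : (q1-r1)^2 = 0 := by linarith [sq_nonneg (q1-r1), sq_nonneg (q0-r0)]
    have := sq_eq_zero_iff.mp h0
    linarith

lemma two_circles {A B p q r : Plane} (hAB : A ≠ B)
    (h1 : dist p A = dist q A) (h2 : dist p A = dist r A)
    (h3 : dist p B = dist q B) (h4 : dist p B = dist r B)
    (hpq : p ≠ q) (hpr : p ≠ r) : q = r := by
  have E : ∀ {x y z w : Plane}, dist x y = dist z w →
      (x 0 - y 0)^2 + (x 1 - y 1)^2 = (z 0 - w 0)^2 + (z 1 - w 1)^2 := by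
    intro x y z w h
    rw [← dist_sq_plane, ← dist_sq_plane, h]
  have hAB' : ¬ (A 0 = B 0 ∧ A 1 = B 1) := fun ⟨u, v⟩ => hAB (plane_ext u v)
  have hpq' : ¬ (p 0 = q 0 ∧ p 1 = q 1) := fun ⟨u, v⟩ => hpq (plane_ext u v)
  have hpr' : ¬ (p 0 = r 0 ∧ p 1 = r 1) := fun ⟨u, v⟩ => hpr (plane_ext u v)
  obtain ⟨u, v⟩ := alg_core (A 0) (A 1) (B 0) (B 1) (p 0) (p 1) (q 0) (q 1) (r 0) (r 1)
    hAB' (E h1) (E h2) (E h3) (E h4) hpq' hpr'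
  exact plane_ext u v

/-- Lower bound: any injective drawing of `K_{2,n}` needs `n ≤ 2·(#lengths)²`. -/
lemma lower_bound (n : ℕ) (f : Fin 2 ⊕ Fin n → Plane) (hf : Function.Injective f) :
    n ≤ 2 * ((completeBipartiteGraph (Fin 2) (Fin n)).edgeLengths f).ncard ^ 2 := by
  classical
  set S := (completeBipartiteGraph (Fin 2) (Fin n)).edgeLengths f with hS
  have hSfin : S.Finite := by
    apply Set.Finite.subset (Set.finite_range
      (fun uv : (Fin 2 ⊕ Fin n) × (Fin 2 ⊕ Fin n) => dist (f uv.1) (f uv.2)))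
    rintro d ⟨u, v, _, rfl⟩
    exact ⟨(u, v), rfl⟩
  by_contra hcon
  push_neg at hcon
  set sF := hSfin.toFinset with hsF
  have hcard : sF.card = S.ncard := (Set.ncard_eq_toFinset_card S hSfin).symm
  set g : Fin n → ℝ × ℝ := fun v =>
    (dist (f (Sum.inr v)) (f (Sum.inl 0)), dist (f (Sum.inr v)) (f (Sum.inl 1))) with hg
  have hmaps : ∀ v ∈ (Finset.univ : Finset (Fin n)), g v ∈ sF ×ˢ sF := by
    intro v _
    rw [Finset.mem_product]
    constructor <;>
    · rw [Set.Finite.mem_toFinset]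
      exact ⟨Sum.inr v, Sum.inl _, by simp, rfl⟩
  have hlt : (sF ×ˢ sF).card * 2 < (Finset.univ : Finset (Fin n)).card := by
    rw [Finset.card_product, hcard, Finset.card_univ, Fintype.card_fin]
    nlinarith [hcon]
  obtain ⟨y, _, hy⟩ := Finset.exists_lt_card_fiber_of_mul_lt_card_of_maps_to hmaps hlt
  obtain ⟨v1, v2, v3, h1, h2, h3, h12, h13, h23⟩ := Finset.two_lt_card_iff.mp hy
  rw [Finset.mem_filter] at h1 h2 h3
  have g12 : g v1 = g v2 := by rw [h1.2, h2.2]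
  have g13 : g v1 = g v3 := by rw [h1.2, h3.2]
  have hAB : f (Sum.inl (0 : Fin 2)) ≠ f (Sum.inl 1) := fun h => by simpa using hf h
  have hpq : f (Sum.inr v1) ≠ f (Sum.inr v2) := fun h => h12 (by simpa using hf h)
  have hpr : f (Sum.inr v1) ≠ f (Sum.inr v3) := fun h => h13 (by simpa using hf h)
  have := two_circles hAB (congrArg Prod.fst g12) (congrArg Prod.fst g13)
    (congrArg Prod.snd g12) (congrArg Prod.snd g13) hpq hpr
  exact h23 (by simpa using hf this)


section Construction

variable (k : ℕ)

def KK : ℝ := (k : ℝ)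
def eta : ℝ := 1/(100*(KK k)^3)
def cc : ℝ := 8*(KK k)+8

variable (hk : 1 ≤ k)
include hk

lemma hK1 : 1 ≤ KK k := by rw [KK]; exact_mod_cast hk
lemma hK0 : 0 < KK k := lt_of_lt_of_le one_pos (hK1 k hk)
lemma heta0 : 0 < eta k := by
  have := hK0 k hk; rw [eta]; positivity
lemma hcc16 : 16 ≤ cc k := by have := hK1 k hk; rw [cc]; linarith
lemma hKeta : (KK k) * eta k ≤ 1/100 := by
  have h1 := hK1 k hk
  have h0 := hK0 k hk
  rw [eta, mul_one_div, div_le_div_iff₀ (by positivity) (by norm_num)]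
  nlinarith [mul_le_mul_of_nonneg_left (by nlinarith : (1:ℝ) ≤ KK k^2) h0.le]

omit hk

lemma delta_aux (A A' I I' : ℝ)
    (hA : |A| ≤ KK k) (hA' : |A'| ≤ KK k) (hI : 0 ≤ I) (hIK : I ≤ KK k)
    (hI' : 0 ≤ I') (hI'K : I' ≤ KK k) (hd : 1 ≤ A - A') (hk : 1 ≤ k)
    (heq : (4 + A * eta k)^2 * (cc k + I' * eta k)
         = (4 + A' * eta k)^2 * (cc k + I * eta k)) : False := by
  have hK := hK1 k hk
  set K := KK k with hKdef
  have hK0 : (0:ℝ) < K := by linarith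
  have hN0 : (100*K^3) ≠ 0 := by positivity
  rw [abs_le] at hA hA'
  rw [eta, cc, ← hKdef] at heq
  field_simp at heq
  have hpoly : 16*(100*K^3)^2*(I'-I) + 8*(8*K+8)*(100*K^3)^2*(A-A')
      + 8*(100*K^3)*(A*I'-A'*I) + (8*K+8)*(100*K^3)*(A^2-A'^2) + (A^2*I'-A'^2*I) = 0 := by
    linear_combination heq
  have hb0 : 8*(8*K+8)*(100*K^3)^2*1 ≤ 8*(8*K+8)*(100*K^3)^2*(A-A') :=
    mul_le_mul_of_nonneg_left hd (by positivity)
  have hII : I - I' ≤ K := by linarith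
  have hb1 : 16*(100*K^3)^2*(I-I') ≤ 16*(100*K^3)^2*K :=
    mul_le_mul_of_nonneg_left hII (by positivity)
  have h2a : A'*I ≤ K^2 := by nlinarith [hA'.2, hI, hIK, hK0.le]
  have h2b : -(A*I') ≤ K^2 := by nlinarith [hA.1, hI', hI'K, hK0.le]
  have hb2 : 8*(100*K^3)*(A'*I - A*I') ≤ 8*(100*K^3)*(2*K^2) :=
    mul_le_mul_of_nonneg_left (by linarith) (by positivity)
  have h3a : A'^2 ≤ K^2 := by nlinarith [hA'.1, hA'.2]
  have h3b : (0:ℝ) ≤ A^2 := sq_nonneg A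
  have hb3 : (8*K+8)*(100*K^3)*(A'^2 - A^2) ≤ (8*K+8)*(100*K^3)*(K^2) :=
    mul_le_mul_of_nonneg_left (by linarith) (by positivity)
  have h4a : A'^2*I ≤ K^2*K := by nlinarith [h3a, hI, hIK, sq_nonneg A', hK0.le]
  have h4b : (0:ℝ) ≤ A^2*I' := by positivity
  have hp1 : K^5 ≤ K^7 := pow_le_pow_right₀ hK (by norm_num)
  have hp2 : K^6 ≤ K^7 := pow_le_pow_right₀ hK (by norm_num)
  have hp3 : K^3 ≤ K^7 := pow_le_pow_right₀ hK (by norm_num)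
  have hp4 : (1:ℝ) ≤ K^7 := by
    calc (1:ℝ) = K^0 := (pow_zero K).symm
    _ ≤ K^7 := pow_le_pow_right₀ hK (by norm_num)
  have hq6 : (0:ℝ) ≤ K^6 := by positivity
  have hq5 : (0:ℝ) ≤ K^5 := by positivity
  have hq3 : (0:ℝ) ≤ K^3 := by positivity
  linarith [hb0, hb1, hb2, hb3, h4a, h4b, hpoly, hp1, hp2, hp3, hp4, hq6, hq5, hq3]

lemma delta_int (hk : 1 ≤ k) (a a' : ℤ) (i i' : ℕ)
    (ha : a.natAbs ≤ k) (ha' : a'.natAbs ≤ k) (hi : i < k) (hi' : i' < k)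
    (heq : (4 + (a:ℝ) * eta k)^2 * (cc k + (i':ℝ) * eta k)
         = (4 + (a':ℝ) * eta k)^2 * (cc k + (i:ℝ) * eta k)) :
    a = a' ∧ i = i' := by
  have hK := hK1 k hk
  have habs : ∀ b : ℤ, b.natAbs ≤ k → |(b:ℝ)| ≤ KK k := by
    intro b hb
    rw [← Int.cast_abs, KK]
    rw [Int.abs_eq_natAbs]
    exact_mod_cast hb
  have hIb : ∀ m : ℕ, m < k → (0:ℝ) ≤ (m:ℝ) ∧ (m:ℝ) ≤ KK k := by
    intro m hm
    exact ⟨Nat.cast_nonneg m, by rw [KK]; exact_mod_cast hm.le⟩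
  rcases lt_trichotomy a a' with h | h | h
  · exact absurd heq.symm fun heq' => delta_aux k (a':ℝ) (a:ℝ) (i':ℝ) (i:ℝ)
      (habs a' ha') (habs a ha) (hIb i' hi').1 (hIb i' hi').2 (hIb i hi).1 (hIb i hi).2
      (by exact_mod_cast (by omega : (1:ℤ) ≤ a' - a)) hk (by exact_mod_cast heq')
  · refine ⟨h, ?_⟩
    subst h
    have hpos : (0:ℝ) < (4 + (a:ℝ) * eta k)^2 := by
      have h1 := habs a ha
      have h2 := hKeta k hk
      have h3 := heta0 k hk
      have h4 := hK0 k hk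
      have habs2 : |(a:ℝ) * eta k| ≤ 1/100 := by
        rw [abs_mul, abs_of_pos h3]
        calc |(a:ℝ)| * eta k ≤ KK k * eta k := by
              apply mul_le_mul_of_nonneg_right h1 h3.le
        _ ≤ 1/100 := h2
      rw [abs_le] at habs2
      nlinarith
    have hfac : ((i':ℝ) - (i:ℝ)) * ((4 + (a:ℝ) * eta k)^2 * eta k) = 0 := by
      linear_combination heq
    have h3 := heta0 k hk
    have : (i':ℝ) - (i:ℝ) = 0 := by
      rcases mul_eq_zero.mp hfac with h' | h'
      · exact h'
      · exact absurd h' (by positivity)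
    have h9 : (i:ℝ) = (i':ℝ) := by linarith
    exact_mod_cast h9
  · exact absurd heq fun heq' => delta_aux k (a:ℝ) (a':ℝ) (i:ℝ) (i':ℝ)
      (habs a ha) (habs a' ha') (hIb i hi).1 (hIb i hi).2 (hIb i' hi').1 (hIb i' hi').2
      (by exact_mod_cast (by omega : (1:ℤ) ≤ a - a')) hk heq'

def X (i j : ℕ) : ℝ := ((i:ℝ) - (j:ℝ)) * eta k / 4
def Ysq (i j : ℕ) : ℝ := cc k + (i:ℝ)*eta k - (X k i j + 1)^2
def Y (i j : ℕ) : ℝ := Real.sqrt (Ysq k i j)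
def P (i j : ℕ) (s : ℝ) : Plane := pt (X k i j) (s * Y k i j)
def Apt : Plane := pt (-1) 0
def Bpt : Plane := pt 1 0

variable (hk : 1 ≤ k)
include hk

lemma hXabs (i j : ℕ) (hi : i < k) (hj : j < k) : |X k i j| ≤ 1/400 := by
  have h3 := heta0 k hk
  have h2 := hKeta k hk
  have hik : |(i:ℝ) - (j:ℝ)| ≤ KK k := by
    rw [abs_le, KK]
    constructor
    · have : (j:ℝ) ≤ (k:ℝ) := by exact_mod_cast hj.le
      have : (0:ℝ) ≤ (i:ℝ) := Nat.cast_nonneg i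
      linarith
    · have : (i:ℝ) ≤ (k:ℝ) := by exact_mod_cast hi.le
      have : (0:ℝ) ≤ (j:ℝ) := Nat.cast_nonneg j
      linarith
  rw [X, abs_div, abs_mul, abs_of_pos h3]
  rw [abs_of_nonneg (by norm_num : (0:ℝ) ≤ 4)]
  have : |(i:ℝ) - (j:ℝ)| * eta k ≤ KK k * eta k :=
    mul_le_mul_of_nonneg_right hik h3.le
  linarith

lemma hYsq_pos (i j : ℕ) (hi : i < k) (hj : j < k) : 0 < Ysq k i j := by
  have hX := hXabs k hk i j hi hj
  have hc := hcc16 k hk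
  have h3 := heta0 k hk
  have hi0 : (0:ℝ) ≤ (i:ℝ) * eta k := by positivity
  rw [abs_le] at hX
  rw [Ysq]
  nlinarith

lemma hY_pos (i j : ℕ) (hi : i < k) (hj : j < k) : 0 < Y k i j :=
  Real.sqrt_pos.mpr (hYsq_pos k hk i j hi hj)

omit hk in
lemma hYsqA (i j : ℕ) : (X k i j - (-1))^2 + Ysq k i j = cc k + (i:ℝ)*eta k := by
  rw [Ysq]; ring

omit hk in
lemma hYsqB (i j : ℕ) : (X k i j - 1)^2 + Ysq k i j = cc k + (j:ℝ)*eta k := by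
  rw [Ysq, X]; push_cast; ring

lemma distA (i j : ℕ) (hi : i < k) (hj : j < k) (s : ℝ) (hs : s = 1 ∨ s = -1) :
    dist (P k i j s) (Apt) = Real.sqrt (cc k + (i:ℝ)*eta k) := by
  have hsq : s^2 = 1 := by rcases hs with h | h <;> rw [h] <;> norm_num
  rw [P, Apt, dist_pt]
  congr 1
  have hY2 : (Y k i j)^2 = Ysq k i j := Real.sq_sqrt (hYsq_pos k hk i j hi hj).le
  have h7 := hYsqA k i j
  nlinarith [hY2, hsq, h7]

lemma distB (i j : ℕ) (hi : i < k) (hj : j < k) (s : ℝ) (hs : s = 1 ∨ s = -1) :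
    dist (P k i j s) (Bpt) = Real.sqrt (cc k + (j:ℝ)*eta k) := by
  have hsq : s^2 = 1 := by rcases hs with h | h <;> rw [h] <;> norm_num
  rw [P, Bpt, dist_pt]
  congr 1
  have hY2 : (Y k i j)^2 = Ysq k i j := Real.sq_sqrt (hYsq_pos k hk i j hi hj).le
  have h7 := hYsqB k i j
  nlinarith [hY2, hsq, h7]

omit hk in
lemma X_plus (i j : ℕ) : X k i j + 1 = (4 + (((i:ℤ) - (j:ℤ) : ℤ):ℝ) * eta k)/4 := by
  rw [X]; push_cast; ring

omit hk in
lemma X_minus (i j : ℕ) : X k i j - 1 = -((4 + (((j:ℤ) - (i:ℤ) : ℤ):ℝ) * eta k)/4) := by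
  rw [X]; push_cast; ring

lemma no_collinear_A (i j i' j' : ℕ) (hi : i<k) (hj : j<k) (hi' : i'<k) (hj' : j'<k)
    (h : (X k i' j' + 1)^2 * (cc k + (i:ℝ)*eta k) = (X k i j + 1)^2 * (cc k + (i':ℝ)*eta k)) :
    i = i' ∧ j = j' := by
  rw [X_plus, X_plus] at h
  have h16 : (4 + (((i':ℤ) - (j':ℤ) : ℤ):ℝ) * eta k)^2 * (cc k + (i:ℝ)*eta k)
      = (4 + (((i:ℤ) - (j:ℤ) : ℤ):ℝ) * eta k)^2 * (cc k + (i':ℝ)*eta k) := by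
    nlinarith [h]
  obtain ⟨ha, hii⟩ := delta_int k hk ((i':ℤ) - j') ((i:ℤ) - j) i' i
    (by omega) (by omega) hi' hi h16
  omega

lemma no_collinear_B (i j i' j' : ℕ) (hi : i<k) (hj : j<k) (hi' : i'<k) (hj' : j'<k)
    (h : (X k i' j' - 1)^2 * (cc k + (j:ℝ)*eta k) = (X k i j - 1)^2 * (cc k + (j':ℝ)*eta k)) :
    i = i' ∧ j = j' := by
  rw [X_minus, X_minus] at h
  have h16 : (4 + (((j':ℤ) - (i':ℤ) : ℤ):ℝ) * eta k)^2 * (cc k + (j:ℝ)*eta k)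
      = (4 + (((j:ℤ) - (i:ℤ) : ℤ):ℝ) * eta k)^2 * (cc k + (j':ℝ)*eta k) := by
    nlinarith [h]
  obtain ⟨ha, hjj⟩ := delta_int k hk ((j':ℤ) - i') ((j:ℤ) - i) j' j
    (by omega) (by omega) hj' hj h16
  omega

lemma P_inj (i j i' j' : ℕ) (hi : i<k) (hj : j<k) (hi' : i'<k) (hj' : j'<k)
    (s s' : ℝ) (hs : s = 1 ∨ s = -1) (hs' : s' = 1 ∨ s' = -1)
    (h : P k i j s = P k i' j' s') : i = i' ∧ j = j' ∧ s = s' := by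
  have h0 : X k i j = X k i' j' := by
    have := congrArg (· 0) h; simpa [P] using this
  have h1 : s * Y k i j = s' * Y k i' j' := by
    have := congrArg (· 1) h; simpa [P] using this
  have hsq : s^2 = 1 := by rcases hs with h' | h' <;> rw [h'] <;> norm_num
  have hsq' : s'^2 = 1 := by rcases hs' with h' | h' <;> rw [h'] <;> norm_num
  have hY2 : (Y k i j)^2 = Ysq k i j := Real.sq_sqrt (hYsq_pos k hk i j hi hj).le
  have hY2' : (Y k i' j')^2 = Ysq k i' j' := Real.sq_sqrt (hYsq_pos k hk i' j' hi' hj').le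
  have hYsqe : Ysq k i j = Ysq k i' j' := by
    have := congrArg (fun t => t^2) h1
    simp only [mul_pow] at this
    rw [hsq, hsq', hY2, hY2'] at this
    linarith
  have hie : (i:ℝ) * eta k = (i':ℝ) * eta k := by
    have e1 : cc k + (i:ℝ)*eta k - (X k i j + 1)^2 = cc k + (i':ℝ)*eta k - (X k i' j' + 1)^2 := by
      rw [← Ysq, ← Ysq, hYsqe]
    rw [h0] at e1
    linarith
  have hii : i = i' := by
    have h3 := heta0 k hk
    have : (i:ℝ) = (i':ℝ) := by
      have := mul_right_cancel₀ (ne_of_gt h3) hie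
      exact this
    exact_mod_cast this
  have hjj : j = j' := by
    have h3 := heta0 k hk
    rw [X, X] at h0
    have h4 : (i:ℝ) - (j:ℝ) = (i':ℝ) - (j':ℝ) := by
      field_simp at h0
      exact h0
    have : (j:ℝ) = (j':ℝ) := by
      have : (i:ℝ) = (i':ℝ) := by exact_mod_cast hii
      linarith
    exact_mod_cast this
  refine ⟨hii, hjj, ?_⟩
  subst hii; subst hjj
  have hYpos := hY_pos k hk i j hi hj
  exact mul_right_cancel₀ (ne_of_gt hYpos) h1

omit hk

variable (n : ℕ)

def fmap : Fin 2 ⊕ Fin n → Plane :=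
  Sum.elim (fun x => if x = 0 then Apt else Bpt)
    (fun v => P k (v.1/2/k) (v.1/2 % k) (if v.1 % 2 = 0 then 1 else -1))

variable (hk : 1 ≤ k) (hn2 : n ≤ 2*(k*k))
include hk hn2

omit hk hn2 in
lemma sgn_cases (m : ℕ) : (if m % 2 = 0 then (1:ℝ) else -1) = 1 ∨ (if m % 2 = 0 then (1:ℝ) else -1) = -1 := by
  split <;> simp

omit hk in
lemma hdec (v : Fin n) : v.1/2/k < k ∧ v.1/2 % k < k := by
  have hk0 : 0 < k := by
    by_contra h
    push_neg at h
    interval_cases k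
    have := v.2; omega
  have h1 : v.1 < 2*(k*k) := lt_of_lt_of_le v.2 hn2
  have h2 : v.1/2 < k*k := Nat.div_lt_of_lt_mul h1
  exact ⟨Nat.div_lt_of_lt_mul h2, Nat.mod_lt _ hk0⟩

omit hk hn2 in
lemma fmap_inl (x : Fin 2) : fmap k n (Sum.inl x) = pt (if x = 0 then -1 else 1) 0 := by
  by_cases hx : x = 0 <;> simp [fmap, Apt, Bpt, hx]

lemma fmap_inj : Function.Injective (fmap k n) := by
  have hYne : ∀ (i j : ℕ), i < k → j < k → ∀ s : ℝ, (s = 1 ∨ s = -1) → s * Y k i j ≠ 0 := by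
    intro i j hi hj s hs
    have := hY_pos k hk i j hi hj
    rcases hs with h | h <;> rw [h] <;> intro hcon <;> nlinarith
  intro u v h
  rcases u with x | t <;> rcases v with x' | t'
  · rw [fmap_inl, fmap_inl] at h
    have h0 := congrArg (· 0) h
    by_cases h1 : x = 0 <;> by_cases h2 : x' = 0
    · rw [h1, h2]
    · rw [h1] at h0; simp [h2] at h0; norm_num at h0
    · rw [h2] at h0; simp [h1] at h0; norm_num at h0
    · have e1 : x = 1 := by fin_cases x <;> simp_all
      have e2 : x' = 1 := by fin_cases x' <;> simp_all
      rw [e1, e2]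
  · rw [fmap_inl] at h
    exfalso
    have h1 := congrArg (· 1) h
    obtain ⟨hi, hj⟩ := hdec k n hn2 t'
    simp only [fmap, Sum.elim_inr, P, pt1, Sum.elim_inl] at h1
    exact hYne _ _ hi hj _ (sgn_cases t'.1) h1.symm
  · rw [fmap_inl] at h
    exfalso
    have h1 := congrArg (· 1) h
    obtain ⟨hi, hj⟩ := hdec k n hn2 t
    simp only [fmap, Sum.elim_inr, P, pt1, Sum.elim_inl] at h1
    exact hYne _ _ hi hj _ (sgn_cases t.1) h1
  · obtain ⟨hi, hj⟩ := hdec k n hn2 t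
    obtain ⟨hi', hj'⟩ := hdec k n hn2 t'
    simp only [fmap, Sum.elim_inr] at h
    obtain ⟨e1, e2, e3⟩ := P_inj k hk _ _ _ _ hi hj hi' hj' _ _ (sgn_cases t.1) (sgn_cases t'.1) h
    congr 1
    have hmod : t.1 % 2 = t'.1 % 2 := by
      by_cases p1 : t.1 % 2 = 0 <;> by_cases p2 : t'.1 % 2 = 0 <;>
        simp [p1, p2] at e3 <;> first | omega | norm_num at e3
    have hdiv2 : t.1 / 2 = t'.1 / 2 := by
      have d1 := Nat.div_add_mod (t.1/2) k
      have d2 := Nat.div_add_mod (t'.1/2) k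
      rw [e1, e2] at d1
      omega
    have : t.1 = t'.1 := by omega
    exact Fin.ext this

lemma fmap_core (x : Fin 2) (t : Fin n) (w : Fin 2 ⊕ Fin n) :
    fmap k n w ∉ openSegment ℝ (fmap k n (Sum.inl x)) (fmap k n (Sum.inr t)) := by
  obtain ⟨hi, hj⟩ := hdec k n hn2 t
  set i := t.1/2/k with hidef
  set j := t.1/2 % k with hjdef
  set s : ℝ := if t.1 % 2 = 0 then (1:ℝ) else -1 with hsdef
  have hs : s = 1 ∨ s = -1 := sgn_cases t.1
  have hYpos := hY_pos k hk i j hi hj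
  set ε : ℝ := if x = 0 then -1 else 1 with hεdef
  have hfx : fmap k n (Sum.inl x) = pt ε 0 := fmap_inl k n x
  have hft : fmap k n (Sum.inr t) = P k i j s := rfl
  intro hmem
  rw [hfx, hft] at hmem
  obtain ⟨a, b, ha, hb, hab, heqz⟩ := hmem
  have e0 := congrArg (· 0) heqz
  have e1 := congrArg (· 1) heqz
  simp only [PiLp.add_apply, PiLp.smul_apply, smul_eq_mul, P, pt0, pt1] at e0 e1
  rcases w with x' | t'
  · rw [fmap_inl] at e0 e1
    simp only [pt1] at e1
    have : b * (s * Y k i j) = 0 := by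
      rw [mul_zero] at e1
      linarith [e1]
    rcases hs with h | h <;> rw [h] at this <;> nlinarith
  · obtain ⟨hi', hj'⟩ := hdec k n hn2 t'
    set i' := t'.1/2/k
    set j' := t'.1/2 % k
    set s' : ℝ := if t'.1 % 2 = 0 then (1:ℝ) else -1 with hs'def
    have hs' : s' = 1 ∨ s' = -1 := sgn_cases t'.1
    have hY'pos := hY_pos k hk i' j' hi' hj'
    have hft' : fmap k n (Sum.inr t') = P k i' j' s' := rfl
    rw [hft'] at e0 e1
    simp only [P, pt0, pt1] at e0 e1
    clear_value i j s i' j' s' ε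
    -- e0 : a * ε + b * X = X', e1 : a * 0 + b * (s * Y) = s' * Y'
    have c1 : b * (s * Y k i j) = s' * Y k i' j' := by linarith [e1]
    have c0' : X k i' j' - ε = b * (X k i j - ε) := by linear_combination -e0 + ε * hab
    have collin : (X k i' j' - ε) * (s * Y k i j) = (X k i j - ε) * (s' * Y k i' j') := by
      rw [c0', ← c1]; ring
    have hsq : s^2 = 1 := by rcases hs with h | h <;> rw [h] <;> norm_num
    have hsq' : s'^2 = 1 := by rcases hs' with h | h <;> rw [h] <;> norm_num
    have hY2 : (Y k i j)^2 = Ysq k i j := Real.sq_sqrt (hYsq_pos k hk i j hi hj).le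
    have hY2' : (Y k i' j')^2 = Ysq k i' j' := Real.sq_sqrt (hYsq_pos k hk i' j' hi' hj').le
    have sqeq : (X k i' j' - ε)^2 * Ysq k i j = (X k i j - ε)^2 * Ysq k i' j' := by
      have h8 := congrArg (fun r => r^2) collin
      simp only [mul_pow, hsq, hsq', hY2, hY2'] at h8
      linear_combination h8
    have hij : i = i' ∧ j = j' := by
      by_cases hx : x = 0
      · have hεv : ε = -1 := by rw [hεdef, if_pos hx]
        rw [hεv] at sqeq
        have eA : Ysq k i j = cc k + (i:ℝ)*eta k - (X k i j + 1)^2 := by rw [Ysq]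
        have eA' : Ysq k i' j' = cc k + (i':ℝ)*eta k - (X k i' j' + 1)^2 := by rw [Ysq]
        rw [eA, eA'] at sqeq
        apply no_collinear_A k hk i j i' j' hi hj hi' hj'
        linear_combination sqeq
      · have hεv : ε = 1 := by rw [hεdef, if_neg hx]
        rw [hεv] at sqeq
        have eB : Ysq k i j = cc k + (j:ℝ)*eta k - (X k i j - 1)^2 := by
          have := hYsqB k i j; linarith
        have eB' : Ysq k i' j' = cc k + (j':ℝ)*eta k - (X k i' j' - 1)^2 := by
          have := hYsqB k i' j'; linarith
        rw [eB, eB'] at sqeq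
        apply no_collinear_B k hk i j i' j' hi hj hi' hj'
        linear_combination sqeq
    obtain ⟨e2, e3⟩ := hij
    rw [← e2, ← e3] at c1
    -- c1 : b * (s * Y) = s' * Y, with 0 < b < 1
    have hblt : b < 1 := by linarith
    have hkey : (b - 1) * Y k i j = 0 ∨ (b + 1) * Y k i j = 0 := by
      rcases hs with h | h <;> rcases hs' with h' | h' <;> rw [h, h'] at c1
      · left; linear_combination c1
      · right; linear_combination c1
      · right; linear_combination -c1
      · left; linear_combination -c1
    rcases hkey with h9 | h9 <;> rcases mul_eq_zero.mp h9 with h9 | h9 <;>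
      linarith only [h9, hblt, hb, hYpos]

lemma fmap_drawing :
    (completeBipartiteGraph (Fin 2) (Fin n)).IsDrawing (fmap k n) := by
  refine ⟨fmap_inj k hk n hn2, ?_⟩
  intro u v w hadj
  rcases u with x | t <;> rcases v with x' | t'
  · simp at hadj
  · exact fmap_core k hk n hn2 x t' w
  · rw [openSegment_symm]
    exact fmap_core k hk n hn2 x' t w
  · simp at hadj

lemma fmap_lengths :
    (completeBipartiteGraph (Fin 2) (Fin n)).edgeLengths (fmap k n) ⊆
      Set.range (fun i : Fin k => Real.sqrt (cc k + (i:ℝ)*eta k)) := by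
  rintro d ⟨u, v, hadj, rfl⟩
  have key : ∀ (x : Fin 2) (t : Fin n), ∃ i : Fin k,
      dist (fmap k n (Sum.inl x)) (fmap k n (Sum.inr t)) = Real.sqrt (cc k + (i:ℝ)*eta k) := by
    intro x t
    obtain ⟨hi, hj⟩ := hdec k n hn2 t
    have hft : fmap k n (Sum.inr t) = P k (t.1/2/k) (t.1/2 % k) _ := rfl
    by_cases hx : x = 0
    · refine ⟨⟨t.1/2/k, hi⟩, ?_⟩
      rw [dist_comm, hx]
      have : fmap k n (Sum.inl 0) = Apt := by simp [fmap, Apt]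
      rw [this, hft, distA k hk _ _ hi hj _ (sgn_cases t.1)]
    · refine ⟨⟨t.1/2 % k, hj⟩, ?_⟩
      rw [dist_comm]
      have hx1 : fmap k n (Sum.inl x) = Bpt := by simp [fmap, Bpt, hx]
      rw [hx1, hft, distB k hk _ _ hi hj _ (sgn_cases t.1)]
  rcases u with x | t <;> rcases v with x' | t'
  · simp at hadj
  · obtain ⟨i, hi⟩ := key x t'
    exact ⟨i, hi.symm⟩
  · obtain ⟨i, hi⟩ := key x' t
    rw [dist_comm]
    exact ⟨i, hi.symm⟩
  · simp at hadj

end Construction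
end Stmt5Aux

open Stmt5Aux

/-- For `n ≥ 1`, `ddn (K_{2,n}) = dn (K_{2,n}) = ⌈√(n/2)⌉`. -/
theorem stmt5 (n : ℕ) (hn : 1 ≤ n) :
    (completeBipartiteGraph (Fin 2) (Fin n)).ddn = ⌈Real.sqrt ((n : ℝ) / 2)⌉₊ ∧
    (completeBipartiteGraph (Fin 2) (Fin n)).dn = ⌈Real.sqrt ((n : ℝ) / 2)⌉₊ := by
  classical
  set k := ⌈Real.sqrt ((n : ℝ) / 2)⌉₊ with hkdef
  have hnR : (0:ℝ) < (n:ℝ)/2 := by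
    have : (1:ℝ) ≤ (n:ℝ) := by exact_mod_cast hn
    linarith
  have hk : 1 ≤ k := by
    rw [hkdef]
    exact Nat.one_le_iff_ne_zero.mpr (by
      intro h
      have := Nat.ceil_eq_zero.mp h
      have h2 := Real.sqrt_pos.mpr hnR
      linarith)
  have hn2 : n ≤ 2*(k*k) := by
    have h1 : Real.sqrt ((n:ℝ)/2) ≤ (k:ℝ) := Nat.le_ceil _
    have h3 := Real.sq_sqrt hnR.le
    have h4 : (n:ℝ) ≤ 2*((k:ℝ)*(k:ℝ)) := by nlinarith [Real.sqrt_nonneg ((n:ℝ)/2)]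
    exact_mod_cast h4
  have hdraw := fmap_drawing k hk n hn2
  have hlen := fmap_lengths k hk n hn2
  have hcard_le : ((completeBipartiteGraph (Fin 2) (Fin n)).edgeLengths (fmap k n)).ncard ≤ k := by
    refine le_trans (Set.ncard_le_ncard hlen (Set.finite_range _)) ?_
    have h5 : (Set.range (fun i : Fin k => Real.sqrt (cc k + (i:ℝ)*eta k))).ncard
        ≤ (Set.univ : Set (Fin k)).ncard := by
      rw [← Set.image_univ]
      exact Set.ncard_image_le Set.finite_univ
    simpa [Set.ncard_univ] using h5
  have hlb : ∀ g : Fin 2 ⊕ Fin n → Plane, Function.Injective g →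
      k ≤ ((completeBipartiteGraph (Fin 2) (Fin n)).edgeLengths g).ncard := by
    intro g hg
    have h1 := lower_bound n g hg
    set m := ((completeBipartiteGraph (Fin 2) (Fin n)).edgeLengths g).ncard with hm
    rw [hkdef, Nat.ceil_le]
    have h2 : (n:ℝ) ≤ 2*(m:ℝ)^2 := by exact_mod_cast h1
    calc Real.sqrt ((n:ℝ)/2) ≤ Real.sqrt ((m:ℝ)^2) := Real.sqrt_le_sqrt (by linarith)
      _ = (m:ℝ) := Real.sqrt_sq (Nat.cast_nonneg m)
  have hcard_eq : ((completeBipartiteGraph (Fin 2) (Fin n)).edgeLengths (fmap k n)).ncard = k :=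
    le_antisymm hcard_le (hlb _ hdraw.1)
  constructor
  · apply le_antisymm
    · exact Nat.sInf_le ⟨fmap k n, hdraw.1, hcard_eq⟩
    · refine le_csInf ⟨k, fmap k n, hdraw.1, hcard_eq⟩ ?_
      rintro b ⟨g, hg, rfl⟩
      exact hlb g hg
  · apply le_antisymm
    · exact Nat.sInf_le ⟨fmap k n, hdraw, hcard_eq⟩
    · refine le_csInf ⟨k, fmap k n, hdraw, hcard_eq⟩ ?_
      rintro b ⟨g, hg, rfl⟩
      exact hlb g hg.1
end
end

section
/- For every integer n ≥ 1, the degenerate distance-number of the complete bipartite graph K_{3,n} satisfies ⌈√(n/2)⌉ ≤ ddn(K_{3,n}) ≤ 3⌈√(n/2)⌉ − 1. -/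
noncomputable section

lemma plane_dist_sq (p q : Plane) : dist p q ^ 2 = (p 0 - q 0)^2 + (p 1 - q 1)^2 := by
  rw [EuclideanSpace.dist_eq]
  rw [Real.sq_sqrt (by positivity)]
  simp [Fin.sum_univ_two, Real.dist_eq, sq_abs]

lemma plane_ext {p q : Plane} (h0 : p 0 = q 0) (h1 : p 1 = q 1) : p = q := by
  ext i
  fin_cases i <;> assumption

lemma plane_ne {p q : Plane} (h : p ≠ q) : p 0 ≠ q 0 ∨ p 1 ≠ q 1 := by
  by_contra hc
  push_neg at hc
  exact h (plane_ext hc.1 hc.2)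

lemma algAux {x1 y1 x2 y2 x3 y3 a0 a1 b0 b1 : ℝ}
    (hv : b0 - a0 ≠ 0 ∨ b1 - a1 ≠ 0)
    (e2a : (x2-a0)^2+(y2-a1)^2 = (x1-a0)^2+(y1-a1)^2)
    (e2b : (x2-b0)^2+(y2-b1)^2 = (x1-b0)^2+(y1-b1)^2)
    (e3a : (x3-a0)^2+(y3-a1)^2 = (x1-a0)^2+(y1-a1)^2)
    (e3b : (x3-b0)^2+(y3-b1)^2 = (x1-b0)^2+(y1-b1)^2)
    (hu : x1 - x2 ≠ 0 ∨ y1 - y2 ≠ 0) (h13 : ¬(x1 = x3 ∧ y1 = y3)) :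
    x2 = x3 ∧ y2 = y3 := by
  have L1 : (x1-x2)*(b0-a0) + (y1-y2)*(b1-a1) = 0 := by linear_combination (e2b - e2a)/2
  have L2 : (x1-x3)*(b0-a0) + (y1-y3)*(b1-a1) = 0 := by linear_combination (e3b - e3a)/2
  have cross : (x1-x2)*(y1-y3) - (y1-y2)*(x1-x3) = 0 := by
    rcases hv with h | h
    · have h0 : (b0-a0) * ((x1-x2)*(y1-y3) - (y1-y2)*(x1-x3)) = 0 := by
        linear_combination (y1-y3) * L1 - (y1-y2) * L2
      exact (mul_eq_zero.mp h0).resolve_left h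
    · have h0 : (b1-a1) * ((x1-x2)*(y1-y3) - (y1-y2)*(x1-x3)) = 0 := by
        linear_combination (x1-x2) * L2 - (x1-x3) * L1
      exact (mul_eq_zero.mp h0).resolve_left h
  obtain ⟨t, hw0, hw1⟩ : ∃ t : ℝ, x1 - x3 = t * (x1 - x2) ∧ y1 - y3 = t * (y1 - y2) := by
    rcases hu with h | h
    · refine ⟨(x1-x3)/(x1-x2), by field_simp, ?_⟩
      rw [div_mul_eq_mul_div, eq_div_iff h]
      linear_combination cross
    · refine ⟨(y1-y3)/(y1-y2), ?_, by field_simp⟩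
      rw [div_mul_eq_mul_div, eq_div_iff h]
      linear_combination -cross
  have hx3 : x3 = x1 - t * (x1 - x2) := by linarith
  have hy3 : y3 = y1 - t * (y1 - y2) := by linarith
  subst hx3 hy3
  have C1 : 2*((x1-x2)*(x1-a0) + (y1-y2)*(y1-a1)) = (x1-x2)^2 + (y1-y2)^2 := by
    linear_combination -e2a
  have husq : (x1-x2)^2 + (y1-y2)^2 ≠ 0 := by
    rcases hu with h | h <;> positivity
  have ht : t * (t - 1) = 0 := by
    have h0 : (t * (t - 1)) * ((x1-x2)^2 + (y1-y2)^2) = 0 := by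
      linear_combination e3a + t * C1
    exact (mul_eq_zero.mp h0).resolve_right husq
  rcases mul_eq_zero.mp ht with h | h
  · exact absurd ⟨by rw [h]; ring, by rw [h]; ring⟩ h13
  · have ht1 : t = 1 := by linarith
    subst ht1
    constructor <;> ring

/-- Two circles with distinct centres meet in at most two points. -/
lemma atMostTwo {a b p₁ p₂ p₃ : Plane} (hab : a ≠ b)
    (h2a : dist p₂ a = dist p₁ a) (h2b : dist p₂ b = dist p₁ b)
    (h3a : dist p₃ a = dist p₁ a) (h3b : dist p₃ b = dist p₁ b) :
    p₁ = p₂ ∨ p₁ = p₃ ∨ p₂ = p₃ := by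
  by_cases h12 : p₁ = p₂
  · exact Or.inl h12
  by_cases h13 : p₁ = p₃
  · exact Or.inr (Or.inl h13)
  right; right
  have sq : ∀ u v : Plane, dist u v = dist p₁ v →
      (u 0 - v 0)^2 + (u 1 - v 1)^2 = (p₁ 0 - v 0)^2 + (p₁ 1 - v 1)^2 := by
    intro u v h
    rw [← plane_dist_sq, ← plane_dist_sq, h]
  have hv : b 0 - a 0 ≠ 0 ∨ b 1 - a 1 ≠ 0 := by
    rcases plane_ne hab with h | h
    · exact Or.inl (sub_ne_zero.mpr (Ne.symm h))
    · exact Or.inr (sub_ne_zero.mpr (Ne.symm h))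
  have hu : p₁ 0 - p₂ 0 ≠ 0 ∨ p₁ 1 - p₂ 1 ≠ 0 := by
    rcases plane_ne h12 with h | h
    · exact Or.inl (sub_ne_zero.mpr h)
    · exact Or.inr (sub_ne_zero.mpr h)
  have h13' : ¬(p₁ 0 = p₃ 0 ∧ p₁ 1 = p₃ 1) := fun ⟨u, v⟩ => h13 (plane_ext u v)
  obtain ⟨hx, hy⟩ := algAux hv (sq _ _ h2a) (sq _ _ h2b) (sq _ _ h3a) (sq _ _ h3b) hu h13'
  exact plane_ext hx hy

lemma plane_dist (p q : Plane) : dist p q = Real.sqrt ((p 0 - q 0)^2 + (p 1 - q 1)^2) := by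
  rw [EuclideanSpace.dist_eq]
  congr 1
  simp [Fin.sum_univ_two, Real.dist_eq, sq_abs]

lemma lowerCount (n : ℕ) (f : Fin 3 ⊕ Fin n → Plane) (hf : Function.Injective f) :
    n ≤ 2 * ((completeBipartiteGraph (Fin 3) (Fin n)).edgeLengths f).ncard ^ 2 := by
  classical
  set L := (completeBipartiteGraph (Fin 3) (Fin n)).edgeLengths f with hL
  have hLfin : L.Finite := by
    apply Set.Finite.subset (Set.finite_range
      (fun p : (Fin 3 ⊕ Fin n) × (Fin 3 ⊕ Fin n) => dist (f p.1) (f p.2)))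
    rintro d ⟨u, v, _, hd⟩
    exact ⟨(u, v), hd⟩
  set Lf := hLfin.toFinset with hLf
  have hcard : L.ncard = Lf.card := by
    rw [hLf, Set.ncard_eq_toFinset_card _ hLfin]
  set g : Fin n → ℝ × ℝ := fun m =>
    (dist (f (Sum.inr m)) (f (Sum.inl 0)), dist (f (Sum.inr m)) (f (Sum.inl 1))) with hg
  have hmaps : ∀ m ∈ (Finset.univ : Finset (Fin n)), g m ∈ Lf ×ˢ Lf := by
    intro m _
    rw [Finset.mem_product]
    constructor <;>
    · rw [hLf, Set.Finite.mem_toFinset]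
      exact ⟨_, _, by simp, rfl⟩
  have hfib : ∀ b ∈ Lf ×ˢ Lf, ({m ∈ Finset.univ | g m = b} : Finset (Fin n)).card ≤ 2 := by
    intro b _
    by_contra hc
    push_neg at hc
    obtain ⟨m₁, hm₁, m₂, hm₂, m₃, hm₃, h12, h13, h23⟩ := Finset.two_lt_card.mp hc
    simp only [Finset.mem_filter, Finset.mem_univ, true_and] at hm₁ hm₂ hm₃
    have hab : f (Sum.inl 0) ≠ f (Sum.inl 1) := fun h => by
      have := hf h; simp at this
    have e2 : g m₂ = g m₁ := hm₂.trans hm₁.symm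
    have e3 : g m₃ = g m₁ := hm₃.trans hm₁.symm
    rcases atMostTwo hab (congrArg Prod.fst e2) (congrArg Prod.snd e2)
        (congrArg Prod.fst e3) (congrArg Prod.snd e3) with h | h | h
    · exact h12 (by simpa using hf h)
    · exact h13 (by simpa using hf h)
    · exact h23 (by simpa using hf h)
  have := Finset.card_le_mul_card_image_of_maps_to hmaps 2 hfib
  simp only [Finset.card_univ, Fintype.card_fin, Finset.card_product] at this
  calc n ≤ 2 * (Lf.card * Lf.card) := this
    _ = 2 * L.ncard ^ 2 := by rw [hcard]; ring

/-- The `y²` value of the intersection points. -/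
def ptY (k i j : ℕ) : ℝ := 1 + i/(k:ℝ) - (((i:ℝ)-j)/(2*k) + 1/2)^2

/-- The intersection points. -/
def ptP (k i j : ℕ) (σ : Bool) : Plane :=
  !₂[((i:ℝ)-j)/(2*(k:ℝ)), if σ then Real.sqrt (ptY k i j) else -Real.sqrt (ptY k i j)]

lemma ptY_pos {k i j : ℕ} (hk : 1 ≤ k) (hi : i < k) (hj : j < k) : 0 < ptY k i j := by
  have hK : (1:ℝ) ≤ k := by exact_mod_cast hk
  have hi' : (i:ℝ) ≤ (k:ℝ) - 1 := by
    have : (i:ℝ) + 1 ≤ k := by exact_mod_cast hi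
    linarith
  have hj' : (j:ℝ) ≤ (k:ℝ) - 1 := by
    have : (j:ℝ) + 1 ≤ k := by exact_mod_cast hj
    linarith
  have hi0 : (0:ℝ) ≤ i := Nat.cast_nonneg i
  have hj0 : (0:ℝ) ≤ j := Nat.cast_nonneg j
  have hc : (((i:ℝ)-j)/(2*k) + 1/2) = ((i:ℝ) - j + k)/(2*k) := by
    field_simp
  rw [ptY, hc]
  have h1 : (1:ℝ) ≤ (i:ℝ) - j + k := by linarith
  have h2 : (i:ℝ) - j + k ≤ 2*k - 1 := by linarith
  have hpos : (0:ℝ) < 2*k := by linarith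
  have hlt : ((i:ℝ) - j + k)/(2*k) < 1 := by
    rw [div_lt_one hpos]; linarith
  have hge : (0:ℝ) < ((i:ℝ) - j + k)/(2*k) := by positivity
  have hsq : (((i:ℝ) - j + k)/(2*k))^2 < 1 := by nlinarith
  have : (0:ℝ) ≤ i/(k:ℝ) := by positivity
  linarith

lemma ptP_snd_sq {k i j : ℕ} (σ : Bool) (hY : 0 ≤ ptY k i j) :
    (ptP k i j σ 1)^2 = ptY k i j := by
  rcases σ with _ | _ <;> simp [ptP, Real.sq_sqrt hY]

lemma dist_ptP_a1 {k i j : ℕ} (hk : 1 ≤ k) (hi : i < k) (hj : j < k) (σ : Bool) :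
    dist (ptP k i j σ) (!₂[-(1/2), 0] : Plane) = Real.sqrt (1 + i/(k:ℝ)) := by
  rw [plane_dist]
  congr 1
  have h1 : ptP k i j σ 0 = ((i:ℝ)-j)/(2*(k:ℝ)) := by simp [ptP]
  have h2 := ptP_snd_sq σ (ptY_pos hk hi hj).le
  rw [h1]
  have : (ptP k i j σ 1 - (!₂[-(1/2), 0] : Plane) 1)^2 = ptY k i j := by
    simpa using h2
  rw [show (!₂[-(1/2), 0] : Plane) 0 = -(1/2) by simp]
  rw [sub_neg_eq_add]
  rw [show ptP k i j σ 1 - (!₂[-(1/2), 0] : Plane) 1 = ptP k i j σ 1 by simp] at *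
  rw [h2, ptY]
  ring

lemma dist_ptP_a3 {k i j : ℕ} (hk : 1 ≤ k) (hi : i < k) (hj : j < k) (σ : Bool) :
    dist (ptP k i j σ) (!₂[(1/2 : ℝ), 0] : Plane) = Real.sqrt (1 + j/(k:ℝ)) := by
  have hK : (0:ℝ) < k := by exact_mod_cast Nat.lt_of_lt_of_le Nat.zero_lt_one hk
  rw [plane_dist]
  congr 1
  have h1 : ptP k i j σ 0 = ((i:ℝ)-j)/(2*(k:ℝ)) := by simp [ptP]
  have h2 := ptP_snd_sq σ (ptY_pos hk hi hj).le
  rw [h1]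
  rw [show (!₂[(1/2:ℝ), 0] : Plane) 0 = (1/2:ℝ) by simp]
  rw [show ptP k i j σ 1 - (!₂[(1/2:ℝ), 0] : Plane) 1 = ptP k i j σ 1 by simp]
  rw [h2, ptY]
  field_simp
  ring

lemma dist_ptP_a2 {k i j : ℕ} (hk : 1 ≤ k) (hi : i < k) (hj : j < k) (σ : Bool) :
    dist (ptP k i j σ) (!₂[(0 : ℝ), 0] : Plane)
      = Real.sqrt (3/4 + ((i:ℝ)+j)/(2*(k:ℝ))) := by
  have hK : (0:ℝ) < k := by exact_mod_cast Nat.lt_of_lt_of_le Nat.zero_lt_one hk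
  rw [plane_dist]
  congr 1
  have h1 : ptP k i j σ 0 = ((i:ℝ)-j)/(2*(k:ℝ)) := by simp [ptP]
  have h2 := ptP_snd_sq σ (ptY_pos hk hi hj).le
  rw [h1]
  rw [show (!₂[(0:ℝ), 0] : Plane) 0 = (0:ℝ) by simp]
  rw [show ptP k i j σ 1 - (!₂[(0:ℝ), 0] : Plane) 1 = ptP k i j σ 1 by simp]
  rw [h2, ptY]
  field_simp
  ring

lemma ptP_snd_ne {k i j : ℕ} (hk : 1 ≤ k) (hi : i < k) (hj : j < k) (σ : Bool) :
    ptP k i j σ 1 ≠ 0 := by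
  have h := ptY_pos hk hi hj
  have hs : 0 < Real.sqrt (ptY k i j) := Real.sqrt_pos.mpr h
  rcases σ with _ | _ <;> simp [ptP] <;> intro hc <;> nlinarith [hs, hc]

lemma ptP_inj {k i j i' j' : ℕ} (hk : 1 ≤ k) (hi : i < k) (hj : j < k)
    (hi' : i' < k) (hj' : j' < k) {σ σ' : Bool}
    (h : ptP k i j σ = ptP k i' j' σ') : i = i' ∧ j = j' ∧ σ = σ' := by
  have hK : (0:ℝ) < k := by exact_mod_cast Nat.lt_of_lt_of_le Nat.zero_lt_one hk
  have h0 : ((i:ℝ)-j)/(2*(k:ℝ)) = ((i':ℝ)-j')/(2*(k:ℝ)) := by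
    have := congrArg (fun p : Plane => p 0) h
    simpa [ptP] using this
  have hx : (i:ℝ) - j = (i':ℝ) - j' := by
    field_simp at h0
    linarith
  have h1 := congrArg (fun p : Plane => p 1) h
  have hY := ptY_pos hk hi hj
  have hY' := ptY_pos hk hi' hj'
  have hs : 0 < Real.sqrt (ptY k i j) := Real.sqrt_pos.mpr hY
  have hs' : 0 < Real.sqrt (ptY k i' j') := Real.sqrt_pos.mpr hY'
  have hσ : σ = σ' := by
    rcases σ with _ | _ <;> rcases σ' with _ | _ <;> simp [ptP] at h1 ⊢ <;> nlinarith
  subst hσ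
  have hYY : ptY k i j = ptY k i' j' := by
    have : (ptP k i j σ 1)^2 = (ptP k i' j' σ 1)^2 := by rw [h1]
    rwa [ptP_snd_sq σ hY.le, ptP_snd_sq σ hY'.le] at this
  have hii : (i:ℝ) = i' := by
    rw [ptY, ptY, h0] at hYY
    have : (i:ℝ)/k = (i':ℝ)/k := by linarith
    field_simp at this
    exact_mod_cast this
  have hi2 : i = i' := by exact_mod_cast hii
  have hj2 : j = j' := by
    have : (j:ℝ) = j' := by rw [hii] at hx; linarith
    exact_mod_cast this
  exact ⟨hi2, hj2, rfl⟩

lemma upperExists (n k : ℕ) (hk : 1 ≤ k) (hn : n ≤ 2 * k^2) :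
    ∃ f : Fin 3 ⊕ Fin n → Plane, Function.Injective f ∧
      ((completeBipartiteGraph (Fin 3) (Fin n)).edgeLengths f).ncard ≤ 3 * k - 1 := by
  classical
  have hle : n ≤ k * (k * 2) := by
    have : 2 * k^2 = k * (k * 2) := by ring
    omega
  let e : (Fin k × Fin k × Bool) ≃ Fin (k * (k * 2)) :=
    (Equiv.prodCongr (Equiv.refl (Fin k))
      ((Equiv.prodCongr (Equiv.refl (Fin k)) finTwoEquiv.symm).trans finProdFinEquiv)).trans
      finProdFinEquiv
  let enc : Fin n → Fin k × Fin k × Bool := fun m => e.symm (Fin.castLE hle m)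
  have henc : Function.Injective enc := by
    intro m m' h
    have := e.symm.injective h
    exact Fin.castLE_injective hle this
  let A : Fin 3 → Plane := ![!₂[-(1/2), 0], !₂[0, 0], !₂[(1/2), 0]]
  have hA1 : ∀ t : Fin 3, A t 1 = 0 := by
    intro t; fin_cases t <;> simp [A]
  let f : Fin 3 ⊕ Fin n → Plane :=
    Sum.elim A (fun m => ptP k (enc m).1 (enc m).2.1 (enc m).2.2)
  have hlt1 : ∀ m : Fin n, ((enc m).1 : ℕ) < k := fun m => (enc m).1.isLt
  have hlt2 : ∀ m : Fin n, ((enc m).2.1 : ℕ) < k := fun m => (enc m).2.1.isLt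
  refine ⟨f, ?_, ?_⟩
  · intro u v huv
    rcases u with t | m <;> rcases v with t' | m'
    · simp only [f, Sum.elim_inl] at huv
      congr 1
      fin_cases t <;> fin_cases t' <;> (try rfl) <;>
        (exfalso; have := congrArg (fun p : Plane => p 0) huv; simp [A] at this) <;> norm_num at this
    · exfalso
      have h1 := congrArg (fun p : Plane => p 1) huv
      simp only [f, Sum.elim_inl, Sum.elim_inr] at h1
      rw [hA1 t] at h1
      exact ptP_snd_ne hk (hlt1 m') (hlt2 m') _ h1.symm
    · exfalso
      have h1 := congrArg (fun p : Plane => p 1) huv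
      simp only [f, Sum.elim_inl, Sum.elim_inr] at h1
      rw [hA1 t'] at h1
      exact ptP_snd_ne hk (hlt1 m) (hlt2 m) _ h1
    · simp only [f, Sum.elim_inr] at huv
      obtain ⟨h1, h2, h3⟩ := ptP_inj hk (hlt1 m) (hlt2 m) (hlt1 m') (hlt2 m') huv
      congr 1
      apply henc
      exact Prod.ext (Fin.ext h1) (Prod.ext (Fin.ext h2) h3)
  · set T : Finset ℝ :=
      ((Finset.range k).image (fun i : ℕ => Real.sqrt (1 + i/(k:ℝ)))) ∪
      ((Finset.range (2*k-1)).image (fun m : ℕ => Real.sqrt (3/4 + (m:ℝ)/(2*(k:ℝ))))) with hT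
    have key : ∀ (t : Fin 3) (m : Fin n), dist (f (Sum.inl t)) (f (Sum.inr m)) ∈ (T : Set ℝ) := by
      intro t m
      set i := ((enc m).1 : ℕ)
      set j := ((enc m).2.1 : ℕ)
      have hi := hlt1 m
      have hj := hlt2 m
      have hdc : ∀ t : Fin 3, dist (f (Sum.inl t)) (f (Sum.inr m))
          = dist (ptP k i j (enc m).2.2) (A t) := by
        intro t; simp [f, dist_comm]; try rfl
      fin_cases t
      · show dist (f (Sum.inl 0)) (f (Sum.inr m)) ∈ (T : Set ℝ)
        rw [hdc 0, show A 0 = (!₂[-(1/2), 0] : Plane) from by simp [A], dist_ptP_a1 hk hi hj]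
        apply Finset.mem_coe.mpr
        apply Finset.mem_union_left
        exact Finset.mem_image.mpr ⟨i, Finset.mem_range.mpr hi, rfl⟩
      · show dist (f (Sum.inl 1)) (f (Sum.inr m)) ∈ (T : Set ℝ)
        rw [hdc 1, show A 1 = (!₂[(0:ℝ), 0] : Plane) from by simp [A], dist_ptP_a2 hk hi hj]
        apply Finset.mem_coe.mpr
        apply Finset.mem_union_right
        refine Finset.mem_image.mpr ⟨i + j, Finset.mem_range.mpr (by omega), ?_⟩
        simp only [i, j]
        push_cast
        ring_nf
      · show dist (f (Sum.inl 2)) (f (Sum.inr m)) ∈ (T : Set ℝ)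
        rw [hdc 2, show A 2 = (!₂[(1/2:ℝ), 0] : Plane) from by simp [A], dist_ptP_a3 hk hi hj]
        apply Finset.mem_coe.mpr
        apply Finset.mem_union_left
        exact Finset.mem_image.mpr ⟨j, Finset.mem_range.mpr hj, rfl⟩
    have hsub : (completeBipartiteGraph (Fin 3) (Fin n)).edgeLengths f ⊆ (T : Set ℝ) := by
      rintro d ⟨u, v, hadj, rfl⟩
      rcases u with t | m <;> rcases v with t' | m' <;> simp at hadj
      · exact key t m'
      · rw [dist_comm]; exact key t' m
    calc ((completeBipartiteGraph (Fin 3) (Fin n)).edgeLengths f).ncard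
        ≤ (T : Set ℝ).ncard := Set.ncard_le_ncard hsub T.finite_toSet
      _ = T.card := Set.ncard_coe_finset T
      _ ≤ k + (2*k-1) := by
          refine le_trans (Finset.card_union_le _ _) ?_
          gcongr <;> exact le_trans (Finset.card_image_le) (by simp)
      _ ≤ 3 * k - 1 := by omega

/-- For `n ≥ 1`, `⌈√(n/2)⌉ ≤ ddn (K_{3,n}) ≤ 3⌈√(n/2)⌉ − 1`. -/
theorem stmt6 (n : ℕ) (hn : 1 ≤ n) :
    ⌈Real.sqrt ((n : ℝ) / 2)⌉₊ ≤ (completeBipartiteGraph (Fin 3) (Fin n)).ddn ∧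
    (completeBipartiteGraph (Fin 3) (Fin n)).ddn ≤ 3 * ⌈Real.sqrt ((n : ℝ) / 2)⌉₊ - 1 := by
  set k := ⌈Real.sqrt ((n : ℝ) / 2)⌉₊ with hkdef
  have hnpos : (0:ℝ) < (n:ℝ) / 2 := by
    have : (1:ℝ) ≤ n := by exact_mod_cast hn
    linarith
  have hk : 1 ≤ k := by
    rw [hkdef]
    exact Nat.one_le_ceil_iff.mpr (Real.sqrt_pos.mpr hnpos)
  have hn2 : n ≤ 2 * k ^ 2 := by
    have h1 : Real.sqrt ((n:ℝ)/2) ≤ (k:ℝ) := Nat.le_ceil _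
    have h2 : (n:ℝ)/2 ≤ (k:ℝ)^2 := by
      nlinarith [Real.sq_sqrt hnpos.le, Real.sqrt_nonneg ((n:ℝ)/2)]
    have h3 : (n:ℝ) ≤ 2 * (k:ℝ)^2 := by linarith
    exact_mod_cast h3
  obtain ⟨f, hfinj, hfcard⟩ := upperExists n k hk hn2
  set S := {m : ℕ | ∃ g : (Fin 3 ⊕ Fin n) → Plane,
      (completeBipartiteGraph (Fin 3) (Fin n)).IsDegenDrawing g ∧
      ((completeBipartiteGraph (Fin 3) (Fin n)).edgeLengths g).ncard = m} with hS
  have hddn : (completeBipartiteGraph (Fin 3) (Fin n)).ddn = sInf S := rfl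
  have hmem : ((completeBipartiteGraph (Fin 3) (Fin n)).edgeLengths f).ncard ∈ S :=
    ⟨f, hfinj, rfl⟩
  constructor
  · obtain ⟨g, hginj, hgcard⟩ := Nat.sInf_mem (⟨_, hmem⟩ : S.Nonempty)
    have hlow := lowerCount n g hginj
    rw [hgcard] at hlow
    rw [hddn]
    set d := sInf S
    have hd2 : (n:ℝ) / 2 ≤ (d:ℝ)^2 := by
      have : (n:ℝ) ≤ 2 * (d:ℝ)^2 := by exact_mod_cast hlow
      linarith
    rw [hkdef]
    refine Nat.ceil_le.mpr ?_
    calc Real.sqrt ((n:ℝ)/2) ≤ Real.sqrt ((d:ℝ)^2) := Real.sqrt_le_sqrt hd2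
      _ = (d:ℝ) := Real.sqrt_sq (Nat.cast_nonneg d)
  · rw [hddn]
    exact le_trans (Nat.sInf_le hmem) hfcard
end
end

section
/- For all integers n ≥ m ≥ 1, the distance-number of the complete bipartite graph K_{m,n} satisfies dn(K_{m,n}) ≤ ⌈n/2⌉. In particular, dn(K_{n,n}) ≤ ⌈n/2⌉. -/
noncomputable section

namespace Stmt7Aux

open Real

/-- The chord length function: `2|sin(tπ/(2n))|`. -/
def sv (n : ℕ) (t : ℤ) : ℝ := 2 * |Real.sin (t * π / (2*n))|

lemma sv_add (n : ℕ) (hn : 1 ≤ n) (t q : ℤ) : sv n (t + q*(2*n)) = sv n t := by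
  have hn' : (n:ℝ) ≠ 0 := by positivity
  have h : ((t + q*(2*n) : ℤ):ℝ) * π / (2*n) = t*π/(2*n) + q*π := by
    push_cast
    field_simp
  unfold sv
  rw [h, Real.sin_add_int_mul_pi, abs_mul]
  have hq : |((-1:ℝ)) ^ q| = 1 := by
    rcases q.even_or_odd with hq | hq
    · rw [hq.neg_one_zpow]; simp
    · rw [hq.neg_one_zpow]; simp
  rw [hq, one_mul]

lemma sv_neg (n : ℕ) (t : ℤ) : sv n (-t) = sv n t := by
  unfold sv
  push_cast
  rw [neg_mul, neg_div, Real.sin_neg, abs_neg]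

lemma chord (a b : ℝ) :
    ‖(Complex.exp (a*Complex.I) - Complex.exp (b*Complex.I))‖
      = 2 * |Real.sin ((a-b)/2)| := by
  have h : Complex.exp (a*Complex.I) - Complex.exp (b*Complex.I)
      = Complex.ofReal (Real.cos a - Real.cos b)
        + Complex.ofReal (Real.sin a - Real.sin b) * Complex.I := by
    rw [Complex.exp_mul_I, Complex.exp_mul_I]
    push_cast
    ring
  rw [h, Complex.norm_def, Complex.normSq_add_mul_I]
  rw [show ((2:ℝ) * |Real.sin ((a-b)/2)|) = Real.sqrt ((2 * |Real.sin ((a-b)/2)|)^2) by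
    rw [Real.sqrt_sq (by positivity)]]
  congr 1
  have h2 : Real.cos (a - b) = 1 - 2 * Real.sin ((a-b)/2)^2 := by
    rw [show a - b = 2 * ((a-b)/2) by ring, Real.cos_two_mul']
    have h3 : 2 * ((a-b)/2) / 2 = (a-b)/2 := by ring
    rw [h3]
    nlinarith [Real.sin_sq_add_cos_sq ((a-b)/2)]
  rw [mul_pow, sq_abs]
  nlinarith [Real.sin_sq_add_cos_sq a, Real.sin_sq_add_cos_sq b, Real.cos_sub a b, h2]

lemma key (n : ℕ) (hn : 1 ≤ n) (t : ℤ) (ht : Odd t) :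
    ∃ k : ℕ, 2*k+1 ≤ n ∧ sv n t = sv n (2*(k:ℤ)+1) := by
  set T : ℤ := 2*n with hT
  have hT0 : 0 < T := by positivity
  set t₀ : ℤ := t % T with ht₀
  have h1 : sv n t = sv n t₀ := by
    conv_lhs => rw [← Int.emod_add_mul_ediv t T]
    rw [show t % T + T * (t / T) = t₀ + (t/T) * (2*(n:ℤ)) by rw [hT]; ring]
    exact sv_add n hn t₀ (t/T)
  have h0le : 0 ≤ t₀ := Int.emod_nonneg t (by omega)
  have hlt : t₀ < T := Int.emod_lt_of_pos t hT0
  have hodd : Odd t₀ := by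
    rcases ht with ⟨c, hc⟩
    have := Int.emod_emod_of_dvd t (by omega : (2:ℤ) ∣ T)
    refine Int.odd_iff.mpr ?_
    rw [ht₀, this, hc]
    omega
  have hodd' := Int.odd_iff.mp hodd
  rcases le_or_gt t₀ n with hle | hgt
  · obtain ⟨k, hk⟩ : ∃ k : ℕ, t₀ = 2*(k:ℤ)+1 := ⟨t₀.toNat / 2, by omega⟩
    exact ⟨k, by omega, by rw [h1, hk]⟩
  · set s : ℤ := T - t₀ with hs
    have h2 : sv n t₀ = sv n s := by
      rw [show s = -t₀ + 1*(2*(n:ℤ)) by rw [hs, hT]; ring, sv_add n hn, sv_neg]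
    obtain ⟨k, hk⟩ : ∃ k : ℕ, s = 2*(k:ℤ)+1 := ⟨s.toNat / 2, by omega⟩
    exact ⟨k, by omega, by rw [h1, h2, hk]⟩

/-- The main construction: all vertices on the unit circle. -/
lemma dn_le (m n : ℕ) (hn : 1 ≤ n) (hmn : m ≤ n) :
    (completeBipartiteGraph (Fin m) (Fin n)).dn ≤ ⌈(n : ℝ) / 2⌉₊ := by
  classical
  set G := completeBipartiteGraph (Fin m) (Fin n) with hG
  set c := ⌈(n : ℝ) / 2⌉₊ with hc
  have hnR : (0:ℝ) < n := by positivity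
  have hπ : (0:ℝ) < π := Real.pi_pos
  -- angle data
  set σ : Fin m ⊕ Fin n → ℕ := Sum.elim (fun i => 2*(i:ℕ)) (fun j => 2*(j:ℕ)+1) with hσ
  set θ : Fin m ⊕ Fin n → ℝ := fun v => σ v * π / n with hθ
  set g : Fin m ⊕ Fin n → ℂ := fun v => Complex.exp ((θ v : ℂ) * Complex.I) with hg
  set e := Complex.orthonormalBasisOneI.repr with he
  set f : Fin m ⊕ Fin n → Plane := fun v => e (g v) with hf
  have hσlt : ∀ v, σ v < 2*n := by
    rintro (i | j) <;> simp only [hσ, Sum.elim_inl, Sum.elim_inr]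
    · have := i.isLt; omega
    · have := j.isLt; omega
  have hσinj : Function.Injective σ := by
    rintro (i | i') (j | j') h <;>
      simp only [hσ, Sum.elim_inl, Sum.elim_inr] at h
    · exact congrArg Sum.inl (Fin.ext (by omega))
    · omega
    · omega
    · exact congrArg Sum.inr (Fin.ext (by omega))
  have hθ0 : ∀ v, 0 ≤ θ v := fun v => by positivity
  have hθlt : ∀ v, θ v < 2*π := by
    intro v
    have : (σ v : ℝ) < 2*n := by exact_mod_cast hσlt v
    rw [hθ, div_lt_iff₀ hnR]
    calc (σ v : ℝ) * π < (2*n) * π := by nlinarith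
    _ = 2*π*n := by ring
  have hθinj : Function.Injective θ := by
    intro u v h
    apply hσinj
    have h' : (σ u : ℝ) * π / n = (σ v : ℝ) * π / n := h
    have hne : (n:ℝ) ≠ 0 := hnR.ne'
    have : (σ u : ℝ) = σ v := by
      field_simp at h'
      exact h'
    exact_mod_cast this
  have hginj : Function.Injective g := by
    intro u v h
    apply hθinj
    rw [hg] at h
    rw [Complex.exp_eq_exp_iff_exists_int] at h
    obtain ⟨k, hk⟩ := h
    have him : θ u = θ v + k * (2*π) := by
      have := congrArg Complex.im hk
      simpa using this
    have h1 := hθ0 u; have h2 := hθ0 v; have h3 := hθlt u; have h4 := hθlt v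
    have hk0 : k = 0 := by
      rcases lt_trichotomy k 0 with hk' | hk' | hk'
      · have hk1 : k ≤ -1 := by omega
        have : (k:ℝ) ≤ -1 := by exact_mod_cast hk1
        nlinarith
      · exact hk'
      · have : (1:ℝ) ≤ k := by exact_mod_cast hk'
        nlinarith
    rw [hk0] at him
    simpa using him
  have hfinj : Function.Injective f := fun u v h =>
    hginj (e.injective h)
  have hnorm : ∀ v, ‖f v‖ = 1 := by
    intro v
    rw [hf, e.norm_map, hg]
    exact Complex.norm_exp_ofReal_mul_I (θ v)
  -- f is a drawing
  have hdraw : G.IsDrawing f := by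
    refine ⟨hfinj, fun u v w hadj hmem => ?_⟩
    have hne : f u ≠ f v := fun h => G.irrefl (hfinj h ▸ hadj)
    have hu : f u ∈ Metric.closedBall (0:Plane) 1 := by
      rw [Metric.mem_closedBall, dist_zero_right, hnorm]
    have hv : f v ∈ Metric.closedBall (0:Plane) 1 := by
      rw [Metric.mem_closedBall, dist_zero_right, hnorm]
    have := openSegment_subset_ball_of_ne hu hv hne hmem
    rw [Metric.mem_ball, dist_zero_right, hnorm] at this
    exact lt_irrefl _ this
  -- distances
  have hdist : ∀ u v, Dist.dist (f u) (f v) = 2 * |Real.sin ((θ u - θ v)/2)| := by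
    intro u v
    rw [hf, e.dist_map, hg, Complex.dist_eq, chord]
  -- edge lengths are among c values
  set F : Finset ℝ := (Finset.range c).image (fun k : ℕ => sv n (2*(k:ℤ)+1)) with hF
  have hsub : G.edgeLengths f ⊆ ↑F := by
    rintro d ⟨u, v, hadj, rfl⟩
    -- reduce to the case u = inl i, v = inr j
    have main : ∀ (i : Fin m) (j : Fin n),
        Dist.dist (f (Sum.inl i)) (f (Sum.inr j)) ∈ (F : Set ℝ) := by
      intro i j
      set t : ℤ := 2*(i:ℤ) - 2*(j:ℤ) - 1 with hti
      have hval : Dist.dist (f (Sum.inl i)) (f (Sum.inr j)) = sv n t := by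
        rw [hdist]
        unfold sv
        congr 2
        have hne : (n:ℝ) ≠ 0 := hnR.ne'
        simp only [hθ, hσ, Sum.elim_inl, Sum.elim_inr, hti]
        push_cast
        field_simp
        ring_nf
      obtain ⟨k, hk1, hk2⟩ := key n hn t ⟨(i:ℤ) - (j:ℤ) - 1, by omega⟩
      have hkc : k < c := by
        rw [hc, Nat.lt_ceil]
        rw [lt_div_iff₀ (by norm_num : (0:ℝ) < 2)]
        exact_mod_cast by omega
      rw [hval, hk2]
      exact Finset.mem_coe.mpr (Finset.mem_image.mpr ⟨k, Finset.mem_range.mpr hkc, rfl⟩)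
    rcases hadj with ⟨h1, h2⟩ | ⟨h1, h2⟩
    · obtain ⟨i, rfl⟩ : ∃ i, u = Sum.inl i := by cases u <;> simp_all
      obtain ⟨j, rfl⟩ : ∃ j, v = Sum.inr j := by cases v <;> simp_all
      exact main i j
    · obtain ⟨j, rfl⟩ : ∃ j, u = Sum.inr j := by cases u <;> simp_all
      obtain ⟨i, rfl⟩ : ∃ i, v = Sum.inl i := by
        cases v with
        | inl i => exact ⟨i, rfl⟩
        | inr _ => simp at h2
      rw [dist_comm]
      exact main i j
  -- conclude
  have h1 : (G.edgeLengths f).ncard ≤ c := by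
    calc (G.edgeLengths f).ncard ≤ (↑F : Set ℝ).ncard :=
          Set.ncard_le_ncard hsub F.finite_toSet
    _ = F.card := Set.ncard_coe_finset F
    _ ≤ c := le_trans Finset.card_image_le (by rw [Finset.card_range])
  have h2 : G.dn ≤ (G.edgeLengths f).ncard :=
    Nat.sInf_le ⟨f, hdraw, rfl⟩
  exact le_trans h2 h1

end Stmt7Aux

/-- For `n ≥ m ≥ 1`, `dn (K_{m,n}) ≤ ⌈n/2⌉`; in particular
`dn (K_{n,n}) ≤ ⌈n/2⌉`. -/
theorem stmt7 (m n : ℕ) (hm : 1 ≤ m) (hmn : m ≤ n) :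
    (completeBipartiteGraph (Fin m) (Fin n)).dn ≤ ⌈(n : ℝ) / 2⌉₊ ∧
    (completeBipartiteGraph (Fin n) (Fin n)).dn ≤ ⌈(n : ℝ) / 2⌉₊ := by
  have hn : 1 ≤ n := le_trans hm hmn
  exact ⟨Stmt7Aux.dn_le m n hn hmn, Stmt7Aux.dn_le n n hn le_rfl⟩
end
end

section
/- Let n ≥ 3, m ≥ 0 and d ≥ 1 be integers. The number of labelled graphs on the vertex set {1, 2, …, n} with exactly m edges and degenerate distance-number at most d is at most (e·n·d/2)^{2n+d} · C(ex(n,d), m), where e is the base of the natural logarithm, C(a,b) denotes the binomial coefficient, and ex(n,d) is the maximum number of edges in an n-vertex graph whose degenerate distance-number is at most d. -/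
noncomputable section

/-- `ex n d`: the maximum number of edges in an `n`-vertex graph whose degenerate
distance-number is at most `d`. -/
def distEx (n d : ℕ) : ℕ :=
  sSup {m : ℕ | ∃ G : SimpleGraph (Fin n), G.ddn ≤ d ∧ G.edgeSet.ncard = m}

open Finset in
lemma stars_bars {ι : Type*} [Fintype ι] (E : ℕ) (T : Finset (ι →₀ ℕ))
    (hT : ∀ s ∈ T, (s.sum fun _ e => e) ≤ E) :
    T.card ≤ (E + Fintype.card ι).choose (Fintype.card ι) := by
  classical
  set k := Fintype.card ι with hk
  let e : Fin k ≃ ι := (Fintype.equivFin ι).symm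
  -- inclusive partial sums
  let a : (ι →₀ ℕ) → Fin k → ℕ := fun s j =>
    (j : ℕ) + ∑ i ∈ Finset.univ.filter (fun i : Fin k => i ≤ j), s (e i)
  have ha_mono : ∀ s, StrictMono (a s) := by
    intro s j j' hjj
    have hsub : Finset.univ.filter (fun i : Fin k => i ≤ j)
        ⊆ Finset.univ.filter (fun i : Fin k => i ≤ j') := by
      intro i hi
      simp only [Finset.mem_filter, Finset.mem_univ, true_and] at hi ⊢
      exact hi.trans hjj.le
    have hs : ∑ i ∈ Finset.univ.filter (fun i : Fin k => i ≤ j), s (e i)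
        ≤ ∑ i ∈ Finset.univ.filter (fun i : Fin k => i ≤ j'), s (e i) :=
      Finset.sum_le_sum_of_subset hsub
    have : (j : ℕ) < (j' : ℕ) := hjj
    simp only [a]
    omega
  have hsumtot : ∀ s ∈ T, ∀ j : Fin k,
      ∑ i ∈ Finset.univ.filter (fun i : Fin k => i ≤ j), s (e i) ≤ E := by
    intro s hs j
    have h1 : ∑ i ∈ Finset.univ.filter (fun i : Fin k => i ≤ j), s (e i)
        ≤ ∑ i : Fin k, s (e i) :=
      Finset.sum_le_sum_of_subset (Finset.filter_subset _ _)
    have h2 : ∑ i : Fin k, s (e i) = ∑ x : ι, s x := Equiv.sum_comp e fun x => s x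
    have h3 : (s.sum fun _ n => n) = ∑ x : ι, s x := Finsupp.sum_fintype _ _ fun _ => rfl
    have := hT s hs
    omega
  have ha_lt : ∀ s ∈ T, ∀ j : Fin k, a s j < E + k := by
    intro s hs j
    have := hsumtot s hs j
    have hj : (j : ℕ) < k := j.isLt
    simp only [a]
    omega
  -- injectivity from function equality
  have ha_inj : ∀ s ∈ T, ∀ s' ∈ T, a s = a s' → s = s' := by
    intro s _ s' _ hEq
    have key : ∀ N : ℕ, ∀ j : Fin k, (j : ℕ) ≤ N → s (e j) = s' (e j) := by
      intro N
      induction N with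
      | zero =>
        intro j hj0
        have hj := congrFun hEq j
        simp only [a] at hj
        have hfe : Finset.univ.filter (fun i : Fin k => i ≤ j) = {j} := by
          ext i
          simp only [Finset.mem_filter, Finset.mem_univ, true_and, Finset.mem_singleton]
          constructor
          · intro h
            have : (i : ℕ) ≤ (j : ℕ) := h
            exact Fin.ext (by omega)
          · rintro rfl; exact le_refl _
        rw [hfe, Finset.sum_singleton, Finset.sum_singleton] at hj
        omega
      | succ N ihN =>
        intro j hjN
        rcases Nat.lt_or_ge (j : ℕ) (N+1) with hlt | hge
        · exact ihN j (by omega)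
        have ih : ∀ i : Fin k, i < j → s (e i) = s' (e i) := by
          intro i hi
          exact ihN i (by have : (i:ℕ) < (j:ℕ) := hi; omega)
        have hj := congrFun hEq j
        simp only [a] at hj
        have hsplit : ∀ (u : ι →₀ ℕ),
            ∑ i ∈ Finset.univ.filter (fun i : Fin k => i ≤ j), u (e i)
              = u (e j) + ∑ i ∈ Finset.univ.filter (fun i : Fin k => i < j), u (e i) := by
          intro u
          have : Finset.univ.filter (fun i : Fin k => i ≤ j)
              = insert j (Finset.univ.filter (fun i : Fin k => i < j)) := by
            ext i
            simp only [Finset.mem_filter, Finset.mem_univ, true_and, Finset.mem_insert]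
            constructor
            · intro h
              rcases eq_or_lt_of_le h with h' | h'
              · exact Or.inl h'
              · exact Or.inr h'
            · rintro (rfl | h)
              · exact le_refl _
              · exact h.le
          rw [this, Finset.sum_insert (by simp)]
        have hlt : ∑ i ∈ Finset.univ.filter (fun i : Fin k => i < j), s (e i)
            = ∑ i ∈ Finset.univ.filter (fun i : Fin k => i < j), s' (e i) := by
          apply Finset.sum_congr rfl
          intro i hi
          simp only [Finset.mem_filter, Finset.mem_univ, true_and] at hi
          exact ih i hi
        rw [hsplit s, hsplit s'] at hj
        omega
    ext x
    have := key k (e.symm x) (e.symm x).isLt.le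
    simpa using this
  -- the injection into powersetCard
  have hmaps : ∀ s ∈ T, Finset.image (a s) Finset.univ
      ∈ (Finset.range (E + k)).powersetCard k := by
    intro s hs
    rw [Finset.mem_powersetCard]
    constructor
    · intro x hx
      simp only [Finset.mem_image, Finset.mem_univ, true_and] at hx
      obtain ⟨j, rfl⟩ := hx
      exact Finset.mem_range.mpr (ha_lt s hs j)
    · rw [Finset.card_image_of_injective _ (ha_mono s).injective, Finset.card_univ,
        Fintype.card_fin]
  have hinj : ∀ s ∈ T, ∀ s' ∈ T,
      Finset.image (a s) Finset.univ = Finset.image (a s') Finset.univ → s = s' := by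
    intro s hs s' hs' him
    apply ha_inj s hs s' hs'
    have hcard : (Finset.image (a s) Finset.univ).card = k := by
      rw [Finset.card_image_of_injective _ (ha_mono s).injective, Finset.card_univ,
        Fintype.card_fin]
    let f : Fin k ↪o ℕ := OrderEmbedding.ofStrictMono _ (ha_mono s)
    let f' : Fin k ↪o ℕ := OrderEmbedding.ofStrictMono _ (ha_mono s')
    have h1 : f = (Finset.image (a s) Finset.univ).orderEmbOfFin hcard :=
      Finset.orderEmbOfFin_unique' hcard fun x =>
        Finset.mem_image_of_mem _ (Finset.mem_univ x)
    have h2 : f' = (Finset.image (a s) Finset.univ).orderEmbOfFin hcard := by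
      apply Finset.orderEmbOfFin_unique' hcard
      intro x
      rw [him]
      exact Finset.mem_image_of_mem _ (Finset.mem_univ x)
    have : f = f' := h1.trans h2.symm
    funext j
    exact congrArg (fun g : Fin k ↪o ℕ => g j) this
  calc T.card ≤ ((Finset.range (E + k)).powersetCard k).card :=
        Finset.card_le_card_of_injOn _ hmaps (fun s hs s' hs' h => hinj s hs s' hs' h)
    _ = (E + k).choose k := by rw [Finset.card_powersetCard, Finset.card_range]

open MvPolynomial in
lemma zero_patterns {ι α : Type*} [Fintype ι] [Fintype α] (F : α → MvPolynomial ι ℝ)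
    (D : ℕ) (hF : ∀ a, (F a).totalDegree ≤ D) :
    (Set.range fun x : ι → ℝ => {a | MvPolynomial.eval x (F a) = 0}).ncard
      ≤ (Fintype.card α * D + Fintype.card ι).choose (Fintype.card ι) := by
  classical
  set pat : (ι → ℝ) → Set α := fun x => {a | MvPolynomial.eval x (F a) = 0} with hpat
  set R : Set (Set α) := Set.range pat with hR
  haveI : Finite (Set α) := inferInstance
  haveI fR : Fintype R := Fintype.ofFinite R
  have hwit : ∀ P : R, ∃ x, pat x = (P : Set α) := fun P => P.2
  choose xw hxw using hwit
  let g : R → MvPolynomial ι ℝ := fun P =>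
    ∏ a ∈ Finset.univ.filter (fun a => a ∉ (P : Set α)), F a
  -- evaluation criterion
  have hgx : ∀ P Q : R, MvPolynomial.eval (xw Q) (g P) ≠ 0 ↔ (Q : Set α) ⊆ (P : Set α) := by
    intro P Q
    have hmap : MvPolynomial.eval (xw Q) (g P)
        = ∏ a ∈ Finset.univ.filter (fun a => a ∉ (P : Set α)),
            MvPolynomial.eval (xw Q) (F a) := by
      simp [g, map_prod]
    rw [hmap, Finset.prod_ne_zero_iff]
    constructor
    · intro h x hxQ
      by_contra hxP
      have := h x (by simp [hxP])
      have hx2 : x ∈ pat (xw Q) := by rw [hxw Q]; exact hxQ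
      exact this hx2
    · intro hQP a ha
      simp only [Finset.mem_filter, Finset.mem_univ, true_and] at ha
      intro h0
      have : a ∈ pat (xw Q) := h0
      rw [hxw Q] at this
      exact ha (hQP this)
  have hgself : ∀ P : R, MvPolynomial.eval (xw P) (g P) ≠ 0 :=
    fun P => (hgx P P).mpr (subset_refl _)
  -- linear independence
  have hli : LinearIndependent ℝ g := by
    rw [linearIndependent_iff']
    intro s c hsum i hi
    by_contra hci
    set Ts : Finset R := s.filter (fun j => c j ≠ 0) with hTs
    have hTsne : Ts.Nonempty := ⟨i, Finset.mem_filter.mpr ⟨hi, hci⟩⟩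
    obtain ⟨P₀, hP₀mem, hP₀max⟩ := Ts.exists_max_image (fun P => ((P : Set α)).ncard) hTsne
    have hP₀s : P₀ ∈ s := (Finset.mem_filter.mp hP₀mem).1
    have hcP₀ : c P₀ ≠ 0 := (Finset.mem_filter.mp hP₀mem).2
    have h0 : ∑ j ∈ s, c j * MvPolynomial.eval (xw P₀) (g j) = 0 := by
      have := congrArg (MvPolynomial.eval (xw P₀)) hsum
      simpa [map_sum, MvPolynomial.smul_eq_C_mul, map_mul] using this
    rw [Finset.sum_eq_single P₀ ?h1 ?h2] at h0
    · exact hcP₀ ((mul_eq_zero.mp h0).resolve_right (hgself P₀))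
    case h1 =>
      intro j hj hjne
      rcases eq_or_ne (c j) 0 with h | h
      · simp [h]
      have hjTs : j ∈ Ts := Finset.mem_filter.mpr ⟨hj, h⟩
      rcases eq_or_ne (MvPolynomial.eval (xw P₀) (g j)) 0 with h' | h'
      · simp [h']
      exfalso
      have hsub : (P₀ : Set α) ⊆ (j : Set α) := (hgx j P₀).mp h'
      have hcard : ((j : Set α)).ncard ≤ ((P₀ : Set α)).ncard := hP₀max j hjTs
      have : (P₀ : Set α) = (j : Set α) :=
        Set.eq_of_subset_of_ncard_le hsub hcard (Set.toFinite _)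
      exact hjne (Subtype.ext this).symm
    case h2 => intro h; exact absurd hP₀s h
  -- support union
  set T : Finset (ι →₀ ℕ) := Finset.univ.biUnion (fun P : R => (g P).support) with hTdef
  have hT : ∀ s ∈ T, (s.sum fun _ e => e) ≤ Fintype.card α * D := by
    intro s hs
    rw [Finset.mem_biUnion] at hs
    obtain ⟨P, _, hsP⟩ := hs
    have h1 : (s.sum fun _ e => e) ≤ (g P).totalDegree := MvPolynomial.le_totalDegree hsP
    have h2 : (g P).totalDegree ≤ Fintype.card α * D := by
      refine le_trans (MvPolynomial.totalDegree_finset_prod _ _) ?_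
      calc ∑ a ∈ Finset.univ.filter (fun a => a ∉ (P : Set α)), (F a).totalDegree
          ≤ ∑ a ∈ (Finset.univ : Finset α), D := by
            refine le_trans (Finset.sum_le_sum fun a _ => hF a) ?_
            exact Finset.sum_le_sum_of_subset (Finset.filter_subset _ _)
        _ = Fintype.card α * D := by simp [mul_comm]
    exact h1.trans h2
  -- span argument
  set Tm : Finset (MvPolynomial ι ℝ) := T.image (fun s => MvPolynomial.monomial s (1:ℝ))
    with hTm
  set W : Submodule ℝ (MvPolynomial ι ℝ) := Submodule.span ℝ (Tm : Set (MvPolynomial ι ℝ))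
    with hW
  have hgW : ∀ P : R, g P ∈ W := by
    intro P
    have := MvPolynomial.as_sum (g P)
    rw [this]
    refine Submodule.sum_mem _ fun v hv => ?_
    have hvT : v ∈ T := Finset.mem_biUnion.mpr ⟨P, Finset.mem_univ P, hv⟩
    have : MvPolynomial.monomial v (MvPolynomial.coeff v (g P))
        = (MvPolynomial.coeff v (g P)) • MvPolynomial.monomial v (1:ℝ) := by
      rw [MvPolynomial.smul_monomial, smul_eq_mul, mul_one]
    rw [this]
    exact Submodule.smul_mem _ _ (Submodule.subset_span (Finset.mem_image_of_mem _ hvT))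
  haveI : FiniteDimensional ℝ W := FiniteDimensional.span_of_finite ℝ (Tm.finite_toSet)
  have hliW : LinearIndependent ℝ (fun P : R => (⟨g P, hgW P⟩ : W)) := by
    apply LinearIndependent.of_comp W.subtype
    convert hli
    rfl
  have hcard1 : Fintype.card R ≤ Module.finrank ℝ W :=
    LinearIndependent.fintype_card_le_finrank hliW
  have hcard2 : Module.finrank ℝ W ≤ Tm.card := finrank_span_finset_le_card Tm
  have hcard3 : Tm.card ≤ T.card := Finset.card_image_le
  have hcard4 : T.card ≤ (Fintype.card α * D + Fintype.card ι).choose (Fintype.card ι) :=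
    stars_bars _ T hT
  have : R.ncard = Fintype.card R := by
    rw [← Nat.card_coe_set_eq, Nat.card_eq_fintype_card]
  omega

open Real in
lemma sqrt_pi_le_stirlingSeq {k : ℕ} (hk : 1 ≤ k) : Real.sqrt π ≤ Stirling.stirlingSeq k := by
  have htend : Filter.Tendsto (Stirling.stirlingSeq ∘ Nat.succ) Filter.atTop
      (nhds (Real.sqrt π)) := by
    have := (Filter.tendsto_add_atTop_iff_nat 1).mpr Stirling.tendsto_stirlingSeq_sqrt_pi
    simpa [Function.comp_def, Nat.succ_eq_add_one] using this
  have := Stirling.stirlingSeq'_antitone.le_of_tendsto htend (k - 1)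
  simpa [Nat.succ_eq_add_one, Nat.sub_add_cancel hk] using this

open Real in
lemma factorial_stirling (k : ℕ) (hk : 1 ≤ k) :
    Real.sqrt π * (Real.sqrt (2 * k) * ((k : ℝ) / Real.exp 1) ^ k) ≤ (k.factorial : ℝ) := by
  have h := sqrt_pi_le_stirlingSeq hk
  rw [Stirling.stirlingSeq] at h
  have hpos : 0 < Real.sqrt (2 * k) * ((k : ℝ) / Real.exp 1) ^ k := by
    have hk0 : (0:ℝ) < k := by exact_mod_cast hk
    positivity
  calc Real.sqrt π * (Real.sqrt (2 * k) * ((k : ℝ) / Real.exp 1) ^ k)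
      ≤ ((k.factorial : ℝ) / (Real.sqrt (2 * k) * ((k : ℝ) / Real.exp 1) ^ k))
        * (Real.sqrt (2 * k) * ((k : ℝ) / Real.exp 1) ^ k) :=
        mul_le_mul_of_nonneg_right h hpos.le
    _ = (k.factorial : ℝ) := div_mul_cancel₀ _ hpos.ne'

open Real in
set_option maxHeartbeats 1000000 in
lemma numeric_choose (n d : ℕ) (hn : 3 ≤ n) (hd : 1 ≤ d) :
    ((n * (n - 1) * d + (2 * n + d)).choose (2 * n + d) : ℝ)
      ≤ (Real.exp 1 * n * d / 2) ^ (2 * n + d) := by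
  have hepos := Real.exp_pos 1
  set k := 2 * n + d with hkdef
  set M := n * (n - 1) * d + k with hMdef
  have hk7 : 7 ≤ k := by omega
  have hk1 : 1 ≤ k := by omega
  have hkR : (7:ℝ) ≤ (k:ℝ) := by exact_mod_cast hk7
  have hkR0 : (0:ℝ) < (k:ℝ) := by linarith
  have hnR : (3:ℝ) ≤ (n:ℝ) := by exact_mod_cast hn
  have hdR : (1:ℝ) ≤ (d:ℝ) := by exact_mod_cast hd
  have hMr : (M:ℝ) = (n:ℝ) * ((n:ℝ) - 1) * d + (2*(n:ℝ) + d) := by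
    have h1 : ((n - 1 : ℕ) : ℝ) = (n:ℝ) - 1 := by
      rw [Nat.cast_sub (by omega)]; norm_num
    push_cast [hMdef, hkdef, h1]
    ring
  have hchoose : (M.choose k : ℝ) ≤ (M:ℝ)^k / (k.factorial : ℝ) :=
    Nat.choose_le_pow_div k M
  have hfac := factorial_stirling k hk1
  set c : ℝ := Real.sqrt π * (Real.sqrt (2*k) * ((k:ℝ)/Real.exp 1)^k) with hcdef
  have hcpos : 0 < c := by
    have : (0:ℝ) < π := Real.pi_pos
    positivity
  have hprod : ((k:ℝ)/Real.exp 1)^k * (Real.exp 1 * n * d/2)^k = ((k:ℝ)*n*d/2)^k := by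
    rw [← mul_pow]
    congr 1
    field_simp
  have hsqrtpi1 : (1:ℝ) ≤ Real.sqrt π := by
    rw [show (1:ℝ) = Real.sqrt 1 by simp]
    exact Real.sqrt_le_sqrt (by linarith [Real.pi_gt_three])
  have hsqrt2k1 : (1:ℝ) ≤ Real.sqrt (2*k) := by
    rw [show (1:ℝ) = Real.sqrt 1 by simp]
    exact Real.sqrt_le_sqrt (by linarith)
  -- main bound
  have hMain : (M:ℝ)^k ≤ Real.sqrt π * Real.sqrt (2*k) * (((k:ℝ)*(n:ℝ)*(d:ℝ)/2))^k := by
    rcases Nat.lt_or_ge d 2 with hd2 | hd2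
    · -- d = 1
      have hd1 : (d:ℝ) = 1 := by
        have : d = 1 := by omega
        rw [this]; norm_num
      have hexp : 1 + 5/(3*(k:ℝ)) ≤ Real.exp (5/(3*(k:ℝ))) := by
        have := Real.add_one_le_exp (5/(3*(k:ℝ)))
        linarith
      set B : ℝ := (k:ℝ)*(n:ℝ)*(d:ℝ)/2 with hBdef
      have hBpos : 0 < B := by rw [hBdef]; positivity
      have hkR' : (k:ℝ) = 2*(n:ℝ)+1 := by rw [hkdef]; push_cast [hd1]; linarith
      have hid : B * (1 + 5/(3*(k:ℝ))) = B + 5*(n:ℝ)/6 := by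
        rw [hBdef, hd1]
        field_simp
        ring
      have hMB : (M:ℝ) ≤ B * (1 + 5/(3*(k:ℝ))) := by
        rw [hMr, hid, hBdef, hkR', hd1]
        nlinarith [hnR]
      have hM1 : (M:ℝ) ≤ B * Real.exp (5/(3*(k:ℝ))) :=
        hMB.trans (mul_le_mul_of_nonneg_left hexp hBpos.le)
      have hMk : (M:ℝ)^k ≤ B^k * Real.exp (5/3 : ℝ) := by
        have h1 : (M:ℝ)^k ≤ (B * Real.exp (5/(3*(k:ℝ))))^k :=
          pow_le_pow_left₀ (by positivity) hM1 k
        have h2 : (B * Real.exp (5/(3*(k:ℝ))))^k = B^k * Real.exp (5/3 : ℝ) := by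
          rw [mul_pow, ← Real.exp_nat_mul]
          congr 2
          field_simp
        rw [h2] at h1
        exact h1
      have hexp53 : Real.exp (5/3 : ℝ) ≤ Real.sqrt π * Real.sqrt (2*(k:ℝ)) := by
        rw [← Real.sqrt_mul Real.pi_pos.le]
        have hsq : Real.exp (5/3 : ℝ)^2 ≤ π * (2*(k:ℝ)) := by
          have he2 : Real.exp (5/3 : ℝ)^2 = Real.exp (10/3 : ℝ) := by
            rw [← Real.exp_nat_mul]; norm_num
          have he103 : Real.exp (10/3 : ℝ) ≤ 42 := by
            have h3 : Real.exp (10/3 : ℝ)^3 = Real.exp 10 := by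
              rw [← Real.exp_nat_mul]; norm_num
            have h10 : Real.exp (10:ℝ) = Real.exp 1 ^ 10 := by
              rw [← Real.exp_nat_mul]; norm_num
            have hb : Real.exp 1 ^ 10 ≤ (2.7182818286:ℝ) ^ 10 :=
              pow_le_pow_left₀ (Real.exp_pos 1).le Real.exp_one_lt_d9.le 10
            have hnum : (2.7182818286:ℝ) ^ 10 ≤ 74088 := by norm_num
            have hcube : Real.exp (10/3 : ℝ)^3 ≤ 42^3 := by
              rw [h3, h10]
              nlinarith [hb, hnum]
            exact le_of_pow_le_pow_left₀ (by norm_num) (by norm_num) hcube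
          have hpik : (42:ℝ) ≤ π * (2*(k:ℝ)) := by
            nlinarith [Real.pi_gt_three]
          rw [he2]
          linarith
        exact (Real.le_sqrt (Real.exp_pos _).le (by positivity)).mpr hsq
      calc (M:ℝ)^k ≤ B^k * Real.exp (5/3 : ℝ) := hMk
        _ ≤ B^k * (Real.sqrt π * Real.sqrt (2*(k:ℝ))) :=
            mul_le_mul_of_nonneg_left hexp53 (by positivity)
        _ = Real.sqrt π * Real.sqrt (2*(k:ℝ)) * B^k := by ring
    · -- d ≥ 2
      have hdR2 : (2:ℝ) ≤ (d:ℝ) := by exact_mod_cast hd2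
      have hM2 : (M:ℝ) ≤ (k:ℝ)*n*d/2 := by
        rw [hMr]
        have hkR' : (k:ℝ) = 2*(n:ℝ)+d := by rw [hkdef]; push_cast; ring
        rw [hkR']
        nlinarith [mul_nonneg (sub_nonneg.2 hdR2) (sub_nonneg.2 hnR),
          mul_nonneg (sub_nonneg.2 hdR) (sub_nonneg.2 hnR)]
      calc (M:ℝ)^k ≤ ((k:ℝ)*n*d/2)^k := pow_le_pow_left₀ (by positivity) hM2 k
        _ = 1 * ((k:ℝ)*n*d/2)^k := by ring
        _ ≤ Real.sqrt π * Real.sqrt (2*k) * ((k:ℝ)*n*d/2)^k := by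
            apply mul_le_mul_of_nonneg_right _ (by positivity)
            nlinarith [hsqrtpi1, hsqrt2k1]
  -- put it together
  have hfinal : (M:ℝ)^k ≤ c * (Real.exp 1 * n * d / 2)^k := by
    have hre : c * (Real.exp 1 * n * d / 2)^k
        = Real.sqrt π * Real.sqrt (2*k) * (((k:ℝ)/Real.exp 1)^k * (Real.exp 1 * n * d/2)^k) := by
      rw [hcdef]; ring
    rw [hre, hprod]
    exact hMain
  have hdiv : (M:ℝ)^k / (k.factorial : ℝ) ≤ (M:ℝ)^k / c :=
    div_le_div_of_nonneg_left (by positivity) hcpos hfac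
  have hlast : (M:ℝ)^k / c ≤ (Real.exp 1 * n * d / 2)^k := by
    rw [div_le_iff₀ hcpos]
    calc (M:ℝ)^k ≤ c * (Real.exp 1 * n * d / 2)^k := hfinal
      _ = (Real.exp 1 * n * d / 2)^k * c := by ring
  exact hchoose.trans (hdiv.trans hlast)

namespace Stmt9

variable (n d : ℕ)

abbrev Idx : Type := (Fin n × Fin 2) ⊕ Fin d

abbrev EIdx : Type := {e : Sym2 (Fin n) // ¬ e.IsDiag} × Fin d

open MvPolynomial in
/-- The quadratic polynomial attached to an edge-distance pair. -/
def FF (a : EIdx n d) : MvPolynomial (Idx n d) ℝ :=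
  Sym2.lift ⟨fun u v =>
    (X (Sum.inl (u,0)) - X (Sum.inl (v,0)))^2 + (X (Sum.inl (u,1)) - X (Sum.inl (v,1)))^2
      - X (Sum.inr a.2)^2, fun u v => by ring⟩ a.1.1

def enc (f : Fin n → Plane) (t : Fin d → ℝ) : Idx n d → ℝ :=
  Sum.elim (fun p => f p.1 p.2) t

def patt (x : Idx n d → ℝ) : Set (EIdx n d) :=
  {a | MvPolynomial.eval x (FF n d a) = 0}

def Pgraph (P : Set (EIdx n d)) : SimpleGraph (Fin n) where
  Adj u v := u ≠ v ∧ ∃ e ∈ P, (e.1 : Sym2 (Fin n)) = s(u,v)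
  symm := by
    constructor
    rintro u v ⟨h, e, he, hs⟩
    exact ⟨h.symm, e, he, hs.trans (Sym2.eq_swap)⟩
  loopless := by constructor; rintro u ⟨h, -⟩; exact h rfl

open MvPolynomial in
lemma eval_FF (f : Fin n → Plane) (t : Fin d → ℝ) (u v : Fin n) (i : Fin d)
    (e1 : {e : Sym2 (Fin n) // ¬ e.IsDiag}) (he : (e1 : Sym2 (Fin n)) = s(u,v)) :
    (MvPolynomial.eval (enc n d f t) (FF n d (e1, i)) = 0)
      ↔ dist (f u) (f v) = |t i| := by
  have hFF : FF n d (e1, i) =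
      (X (Sum.inl (u,0)) - X (Sum.inl (v,0)))^2 + (X (Sum.inl (u,1)) - X (Sum.inl (v,1)))^2
        - (X (Sum.inr i) : MvPolynomial (Idx n d) ℝ)^2 := by
    show Sym2.lift _ (e1 : Sym2 (Fin n)) = _
    rw [he, Sym2.lift_mk]
  have heval : MvPolynomial.eval (enc n d f t) (FF n d (e1, i))
      = (f u 0 - f v 0)^2 + (f u 1 - f v 1)^2 - (t i)^2 := by
    rw [hFF]
    simp [enc, map_sub, map_add, map_pow]
  have hdist : dist (f u) (f v)^2 = (f u 0 - f v 0)^2 + (f u 1 - f v 1)^2 := by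
    rw [EuclideanSpace.dist_eq]
    rw [Real.sq_sqrt (by positivity)]
    rw [Fin.sum_univ_two]
    simp [Real.dist_eq, sq_abs]
  rw [heval]
  constructor
  · intro h
    have h2 : dist (f u) (f v)^2 = (t i)^2 := by rw [hdist]; linarith
    calc dist (f u) (f v) = Real.sqrt (dist (f u) (f v)^2) :=
          (Real.sqrt_sq dist_nonneg).symm
      _ = Real.sqrt ((t i)^2) := by rw [h2]
      _ = |t i| := Real.sqrt_sq_eq_abs _
  · intro h
    have h2 : dist (f u) (f v)^2 = (t i)^2 := by rw [h, sq_abs]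
    rw [hdist] at h2
    linarith

lemma adj_Pgraph_patt (f : Fin n → Plane) (t : Fin d → ℝ) (u v : Fin n) :
    (Pgraph n d (patt n d (enc n d f t))).Adj u v
      ↔ (u ≠ v ∧ ∃ i : Fin d, dist (f u) (f v) = |t i|) := by
  constructor
  · rintro ⟨hne, e, heP, hes⟩
    refine ⟨hne, e.2, ?_⟩
    have := (eval_FF n d f t u v e.2 e.1 hes).mp heP
    exact this
  · rintro ⟨hne, i, hi⟩
    refine ⟨hne, ⟨(⟨s(u,v), by rw [Sym2.mk_isDiag_iff]; exact hne⟩, i), ?_, rfl⟩⟩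
    exact (eval_FF n d f t u v i _ rfl).mpr hi

lemma ddn_Pgraph (f : Fin n → Plane) (hf : Function.Injective f) (t : Fin d → ℝ) :
    (Pgraph n d (patt n d (enc n d f t))).ddn ≤ d := by
  set G := Pgraph n d (patt n d (enc n d f t)) with hG
  have hsub : G.edgeLengths f ⊆ Set.range (fun i : Fin d => |t i|) := by
    rintro ℓ ⟨u, v, hadj, rfl⟩
    obtain ⟨-, i, hi⟩ := (adj_Pgraph_patt n d f t u v).mp hadj
    exact ⟨i, hi.symm⟩
  have hcard : (G.edgeLengths f).ncard ≤ d := by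
    calc (G.edgeLengths f).ncard ≤ (Set.range (fun i : Fin d => |t i|)).ncard :=
          Set.ncard_le_ncard hsub (Set.toFinite _)
      _ ≤ (Set.univ : Set (Fin d)).ncard := by
          rw [← Set.image_univ]
          exact Set.ncard_image_le (Set.toFinite _)
      _ = d := by rw [Set.ncard_univ]; simp
  have hmem : (G.edgeLengths f).ncard ∈
      {k : ℕ | ∃ g : Fin n → Plane, G.IsDegenDrawing g ∧ (G.edgeLengths g).ncard = k} :=
    ⟨f, hf, rfl⟩
  exact le_trans (Nat.sInf_le hmem) hcard

lemma edgecard_le_distEx (f : Fin n → Plane) (hf : Function.Injective f) (t : Fin d → ℝ) :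
    (Pgraph n d (patt n d (enc n d f t))).edgeSet.ncard ≤ distEx n d := by
  apply le_csSup
  · refine ⟨Nat.card (Sym2 (Fin n)), ?_⟩
    rintro m ⟨G, -, rfl⟩
    calc G.edgeSet.ncard ≤ (Set.univ : Set (Sym2 (Fin n))).ncard :=
          Set.ncard_le_ncard (Set.subset_univ _) (Set.toFinite _)
      _ = Nat.card (Sym2 (Fin n)) := Set.ncard_univ _
  · exact ⟨_, ddn_Pgraph n d f hf t, rfl⟩

/-- covering function existence -/
lemma exists_cover_fun {S : Set ℝ} (hfin : S.Finite) (hcard : S.ncard ≤ d) (hd : 1 ≤ d) :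
    ∃ t : Fin d → ℝ, S ⊆ Set.range t := by
  classical
  set l := hfin.toFinset.toList with hl
  have hlen : l.length ≤ d := by
    rw [hl, Finset.length_toList]
    rwa [← Set.ncard_eq_toFinset_card _ hfin]
  refine ⟨fun j => l.getD j 0, ?_⟩
  intro x hx
  have hxl : x ∈ l := by
    rw [hl, Finset.mem_toList, Set.Finite.mem_toFinset]
    exact hx
  obtain ⟨j, hj, hget⟩ := List.mem_iff_getElem.mp hxl
  refine ⟨⟨j, lt_of_lt_of_le hj hlen⟩, ?_⟩
  simp only []
  rw [List.getD_eq_getElem l 0 (by simpa using hj)]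
  exact hget

lemma cover (G : SimpleGraph (Fin n)) (hG : G.ddn ≤ d) (hd : 1 ≤ d) :
    ∃ (f : Fin n → Plane) (t : Fin d → ℝ), Function.Injective f ∧
      G ≤ Pgraph n d (patt n d (enc n d f t)) := by
  classical
  -- a drawing exists
  have hne : {k : ℕ | ∃ f : Fin n → Plane, G.IsDegenDrawing f ∧
      (G.edgeLengths f).ncard = k}.Nonempty := by
    refine ⟨_, fun i => (WithLp.equiv 2 (Fin 2 → ℝ)).symm (fun _ => (i : ℕ)), ?_, rfl⟩
    intro i j hij
    have := congrFun (congrArg (WithLp.equiv 2 (Fin 2 → ℝ)) hij) 0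
    simp only [Equiv.apply_symm_apply] at this
    exact Fin.ext (by exact_mod_cast this)
  have hmem := Nat.sInf_mem hne
  obtain ⟨f, hfinj, hfcard⟩ := hmem
  have hELfin : (G.edgeLengths f).Finite := by
    apply Set.Finite.subset (Set.finite_range
      (fun p : Fin n × Fin n => dist (f p.1) (f p.2)))
    rintro ℓ ⟨u, v, -, rfl⟩
    exact ⟨(u, v), rfl⟩
  have hELcard : (G.edgeLengths f).ncard ≤ d := by
    rw [hfcard]; exact hG
  obtain ⟨t, ht⟩ := exists_cover_fun d hELfin hELcard hd
  refine ⟨f, t, hfinj, ?_⟩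
  intro u v huv
  rw [adj_Pgraph_patt]
  refine ⟨G.ne_of_adj huv, ?_⟩
  have hmemEL : dist (f u) (f v) ∈ G.edgeLengths f := ⟨u, v, huv, rfl⟩
  obtain ⟨i, hi⟩ := ht hmemEL
  have hnn : 0 ≤ t i := by rw [hi]; exact dist_nonneg
  exact ⟨i, by rw [abs_of_nonneg hnn]; exact hi.symm⟩

open MvPolynomial in
lemma FF_totalDegree : ∀ a : EIdx n d, (FF n d a).totalDegree ≤ 2 := by
  rintro ⟨⟨e, he⟩, i⟩
  induction e using Sym2.ind with
  | _ u v =>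
    have hFF : FF n d (⟨s(u,v), he⟩, i) =
        (X (Sum.inl (u,0)) - X (Sum.inl (v,0)))^2
          + (X (Sum.inl (u,1)) - X (Sum.inl (v,1)))^2
          - (X (Sum.inr i) : MvPolynomial (Idx n d) ℝ)^2 := by
      show Sym2.lift _ (s(u,v)) = _
      rw [Sym2.lift_mk]
    rw [hFF]
    have hXX : ∀ a b : Idx n d,
        ((X a - X b : MvPolynomial (Idx n d) ℝ)^2).totalDegree ≤ 2 := by
      intro a b
      refine le_trans (totalDegree_pow _ _) ?_
      have : (X a - X b : MvPolynomial (Idx n d) ℝ).totalDegree ≤ 1 := by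
        refine le_trans (totalDegree_sub _ _) ?_
        simp [totalDegree_X]
      omega
    refine le_trans (totalDegree_sub _ _) (max_le (le_trans (totalDegree_add _ _)
      (max_le (hXX _ _) (hXX _ _))) ?_)
    rw [totalDegree_X_pow]

lemma choose_two_mul : n.choose 2 * 2 = n * (n - 1) := by
  have h2 : 2 ∣ n * (n - 1) := by
    rcases Nat.even_or_odd n with h | h
    · exact Dvd.dvd.mul_right h.two_dvd _
    · rcases n with _ | m
      · simp
      · have : Even (m + 1 - 1) := by
          simpa using Nat.Odd.sub_odd h odd_one
        exact Dvd.dvd.mul_left this.two_dvd _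
  rw [Nat.choose_two_right, Nat.div_mul_cancel h2]

lemma range_patt_ncard :
    (Set.range (patt n d)).ncard ≤ (n*(n-1)*d + (2*n+d)).choose (2*n+d) := by
  have h := zero_patterns (FF n d) 2 (FF_totalDegree n d)
  have hι : Fintype.card (Idx n d) = 2*n+d := by
    simp [Fintype.card_sum, Fintype.card_prod]
    ring
  have hα : Fintype.card (EIdx n d) = n.choose 2 * d := by
    rw [Fintype.card_prod, Sym2.card_subtype_not_diag, Fintype.card_fin, Fintype.card_fin]
  rw [hι, hα] at h
  have heq : n.choose 2 * d * 2 = n * (n-1) * d := by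
    have := choose_two_mul n
    calc n.choose 2 * d * 2 = n.choose 2 * 2 * d := by ring
      _ = n * (n-1) * d := by rw [this]
  rw [heq] at h
  exact h

end Stmt9

open Stmt9

/-- For `n ≥ 3`, `m ≥ 0`, `d ≥ 1`, the number of labelled `n`-vertex
`m`-edge graphs with degenerate distance-number at most `d` is at most
`(e·n·d/2)^(2n+d) · C(ex(n,d), m)`. -/
theorem stmt9 (n m d : ℕ) (hn : 3 ≤ n) (hd : 1 ≤ d) :
    (({G : SimpleGraph (Fin n) | G.edgeSet.ncard = m ∧ G.ddn ≤ d}).ncard : ℝ) ≤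
      (Real.exp 1 * n * d / 2) ^ (2 * n + d) * (distEx n d).choose m := by
  classical
  haveI : Finite (SimpleGraph (Fin n)) :=
    Finite.of_injective _ SimpleGraph.adj_injective
  set S : Set (SimpleGraph (Fin n)) := {G | G.edgeSet.ncard = m ∧ G.ddn ≤ d} with hS
  have hcov : ∀ G : SimpleGraph (Fin n), G ∈ S → ∃ x : Idx n d → ℝ,
      G ≤ Pgraph n d (patt n d x) ∧ (Pgraph n d (patt n d x)).edgeSet.ncard ≤ distEx n d := by
    intro G hGS
    obtain ⟨f, t, hfinj, hle⟩ := cover n d G hGS.2 hd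
    exact ⟨enc n d f t, hle, edgecard_le_distEx n d f hfinj t⟩
  choose! Φ hΦ1 hΦ2 using hcov
  set ψ : SimpleGraph (Fin n) → Set (EIdx n d) := fun G => patt n d (Φ G) with hψ
  set sFin := S.toFinite.toFinset with hsFin
  have key : sFin.card ≤ (distEx n d).choose m * (sFin.image ψ).card := by
    apply Finset.card_le_mul_card_image
    intro P hP
    obtain ⟨G₀, hG₀, hG₀P⟩ := Finset.mem_image.mp hP
    have hG₀S : G₀ ∈ S := (Set.Finite.mem_toFinset _).mp hG₀
    have hedge : (Pgraph n d P).edgeSet.ncard ≤ distEx n d := by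
      have := hΦ2 G₀ hG₀S
      rw [hψ] at hG₀P
      rw [← hG₀P]
      exact this
    set Dfin := (Pgraph n d P).edgeSet.toFinite.toFinset with hDfin
    have hstep : (sFin.filter (fun G => ψ G = P)).card ≤ (Dfin.powersetCard m).card := by
      apply Finset.card_le_card_of_injOn (fun G => G.edgeSet.toFinite.toFinset)
      · intro G hG
        rw [Finset.mem_coe, Finset.mem_filter] at hG
        obtain ⟨hGs, hGP⟩ := hG
        have hGS : G ∈ S := (Set.Finite.mem_toFinset _).mp hGs
        have hGle : G ≤ Pgraph n d P := by
          have := hΦ1 G hGS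
          rw [hψ] at hGP
          rw [← hGP]
          exact this
        rw [Finset.mem_coe, Finset.mem_powersetCard]
        constructor
        · intro e he
          rw [Set.Finite.mem_toFinset] at he ⊢
          exact SimpleGraph.edgeSet_mono hGle he
        · rw [← Set.ncard_eq_toFinset_card _ _]
          exact hGS.1
      · intro G hG G' hG' hEq
        simp only [Set.Finite.toFinset_inj] at hEq
        exact SimpleGraph.edgeSet_inj.mp hEq
    have hpc : (Dfin.powersetCard m).card = Dfin.card.choose m :=
      Finset.card_powersetCard m Dfin
    have hDcard : Dfin.card ≤ distEx n d := by
      rw [hDfin, ← Set.ncard_eq_toFinset_card _ _]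
      exact hedge
    calc (sFin.filter (fun G => ψ G = P)).card ≤ (Dfin.powersetCard m).card := hstep
      _ = Dfin.card.choose m := hpc
      _ ≤ (distEx n d).choose m := Nat.choose_le_choose m hDcard
  have himg : (sFin.image ψ).card ≤ (Set.range (patt n d)).ncard := by
    have hsub : (sFin.image ψ : Finset _) ⊆ (Set.range (patt n d)).toFinite.toFinset := by
      intro P hP
      obtain ⟨G, _, rfl⟩ := Finset.mem_image.mp hP
      exact (Set.Finite.mem_toFinset _).mpr ⟨Φ G, rfl⟩
    calc (sFin.image ψ).card ≤ ((Set.range (patt n d)).toFinite.toFinset).card :=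
          Finset.card_le_card hsub
      _ = (Set.range (patt n d)).ncard := (Set.ncard_eq_toFinset_card _ _).symm
  have hSnat : S.ncard ≤ (distEx n d).choose m * (n*(n-1)*d + (2*n+d)).choose (2*n+d) := by
    calc S.ncard = sFin.card := Set.ncard_eq_toFinset_card _ _
      _ ≤ (distEx n d).choose m * (sFin.image ψ).card := key
      _ ≤ (distEx n d).choose m * (Set.range (patt n d)).ncard :=
          Nat.mul_le_mul_left _ himg
      _ ≤ (distEx n d).choose m * (n*(n-1)*d + (2*n+d)).choose (2*n+d) :=
          Nat.mul_le_mul_left _ (range_patt_ncard n d)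
  have hnum := numeric_choose n d hn hd
  calc (S.ncard : ℝ)
      ≤ ((distEx n d).choose m : ℝ) * ((n*(n-1)*d + (2*n+d)).choose (2*n+d) : ℝ) := by
        exact_mod_cast Nat.cast_le.mpr hSnat
    _ ≤ ((distEx n d).choose m : ℝ) * (Real.exp 1 * n * d / 2) ^ (2*n+d) := by
        apply mul_le_mul_of_nonneg_left hnum (by positivity)
    _ = (Real.exp 1 * n * d / 2) ^ (2 * n + d) * (distEx n d).choose m := by ring
end
end
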